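/- arXiv:0711.0906 — 9 statements merged into one kernel-verified Lean document; each statement's English description precedes it below -/
import Mathlib

section
/- Let B : ℕ → ℕ → ℕ satisfy: B(1,0)=1; for all n>1 and 0≤k<n, B(n,k)=∑_{i=0}^{k} B(n−1,i); and B(n,k)=0 whenever k≥n. Then for every positive integer n, ∑_{k=0}^{n−1} B(n,k) = C(n), where C(n) = (1/(n+1))·binom(2n,n) is the n-th Catalan number; equivalently (n+1)·∑_{k=0}^{n−1} B(n,k) = binom(2n,n). -/
/-- Key combinatorial identity used in the induction step. -/
lemma catalan_aux (n : ℕ) : ∀ k, k ≤ n + 1 →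
    (n + 2) * ∑ i ∈ Finset.range (k + 1), (n + 1 - i) * Nat.choose (n + i) i
      = (n + 1) * (n + 2 - k) * Nat.choose (n + 1 + k) k := by
  intro k
  induction k with
  | zero => simp; ring
  | succ k ih =>
    intro hk
    have hk' : k ≤ n := by omega
    have ih' := ih (by omega)
    rw [Finset.sum_range_succ, Nat.mul_add, ih']
    have hidx : n + (k + 1) = n + 1 + k := by omega
    rw [hidx]
    have hpascal : Nat.choose (n + 1 + (k + 1)) (k + 1)
        = Nat.choose (n + 1 + k) k + Nat.choose (n + 1 + k) (k + 1) := by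
      rw [show n + 1 + (k + 1) = (n + 1 + k) + 1 from rfl]
      exact Nat.choose_succ_succ _ _
    have hrel : Nat.choose (n + 1 + k) (k + 1) * (k + 1)
        = Nat.choose (n + 1 + k) k * (n + 1) := by
      have h := Nat.choose_succ_right_eq (n + 1 + k) k
      have h2 : n + 1 + k - k = n + 1 := by omega
      rw [h2] at h
      exact h
    rw [hpascal]
    zify [hk', Nat.sub_le, show k ≤ n + 2 from by omega, show k + 1 ≤ n + 1 from by omega,
      show k + 1 ≤ n + 2 from by omega]
    have hrel' : ((Nat.choose (n + 1 + k) (k + 1) : ℤ)) * (k + 1)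
        = (Nat.choose (n + 1 + k) k : ℤ) * (n + 1) := by exact_mod_cast hrel
    linear_combination -hrel'

/-- The row sums of the ballot-number array `B` are the Catalan numbers:
`(n+1) * ∑_{k=0}^{n-1} B n k = binom(2n, n)` for every positive `n`. -/
theorem catalan_triangle_row_sum
    (B : ℕ → ℕ → ℕ)
    (hB1 : B 1 0 = 1)
    (hrec : ∀ n k, 1 < n → k < n → B n k = ∑ i ∈ Finset.range (k + 1), B (n - 1) i)
    (hzero : ∀ n k, n ≤ k → B n k = 0) :
    ∀ n : ℕ, 0 < n →
      (n + 1) * (∑ k ∈ Finset.range n, B n k) = Nat.choose (2 * n) n := by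
  -- Ballot formula
  have main : ∀ n : ℕ, ∀ k ≤ n, (n + 1) * B (n + 1) k = (n + 1 - k) * Nat.choose (n + k) k := by
    intro n
    induction n with
    | zero =>
      intro k hk
      interval_cases k
      simpa using hB1
    | succ n ih =>
      intro k hk
      have ih' : ∀ i ≤ n + 1, (n + 1) * B (n + 1) i = (n + 1 - i) * Nat.choose (n + i) i := by
        intro i hi
        rcases Nat.lt_or_ge i (n + 1) with h | h
        · exact ih i (by omega)
        · have hi' : i = n + 1 := by omega
          subst hi'
          rw [hzero (n + 1) (n + 1) le_rfl]
          simp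
      have hB : B (n + 2) k = ∑ i ∈ Finset.range (k + 1), B (n + 1) i := by
        have := hrec (n + 2) k (by omega) (by omega)
        simpa using this
      have key : (n + 1) * ((n + 2) * B (n + 2) k)
          = (n + 1) * ((n + 2 - k) * Nat.choose (n + 1 + k) k) := by
        calc (n + 1) * ((n + 2) * B (n + 2) k)
            = (n + 2) * ((n + 1) * ∑ i ∈ Finset.range (k + 1), B (n + 1) i) := by
              rw [hB]; ring
          _ = (n + 2) * ∑ i ∈ Finset.range (k + 1), (n + 1 - i) * Nat.choose (n + i) i := by
              rw [Finset.mul_sum]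
              congr 1
              apply Finset.sum_congr rfl
              intro i hi
              exact ih' i (by simp at hi; omega)
          _ = (n + 1) * (n + 2 - k) * Nat.choose (n + 1 + k) k := catalan_aux n k hk
          _ = (n + 1) * ((n + 2 - k) * Nat.choose (n + 1 + k) k) := by ring
      exact Nat.eq_of_mul_eq_mul_left (by omega) key
  intro n hn
  obtain ⟨m, rfl⟩ : ∃ m, n = m + 1 := ⟨n - 1, by omega⟩
  have hsum : ∑ k ∈ Finset.range (m + 2), B (m + 1) k
      = ∑ k ∈ Finset.range (m + 1), B (m + 1) k := by
    rw [Finset.sum_range_succ, hzero (m + 1) (m + 1) le_rfl, add_zero]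
  have hB : B (m + 2) (m + 1) = ∑ k ∈ Finset.range (m + 2), B (m + 1) k := by
    have := hrec (m + 2) (m + 1) (by omega) (by omega)
    simpa using this
  have := main (m + 1) (m + 1) le_rfl
  rw [hB, hsum] at this
  have h2 : m + 1 + 1 - (m + 1) = 1 := by omega
  rw [h2, one_mul] at this
  calc (m + 1 + 1) * ∑ k ∈ Finset.range (m + 1), B (m + 1) k
      = Nat.choose (m + 1 + (m + 1)) (m + 1) := this
    _ = Nat.choose (2 * (m + 1)) (m + 1) := by ring_nf
end

section
/- Let B : ℕ → ℕ → ℕ satisfy: B(1,0)=1; for all n>1 and 0≤k<n, B(n,k)=∑_{i=0}^{k} B(n−1,i); and B(n,k)=0 whenever k≥n. Then for all integers 0≤k<n one has the closed formula B(n,k) = ((n−k)/(n+k))·binom(n+k,n); equivalently (n+k)·B(n,k) = (n−k)·binom(n+k,n). -/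
/-- Closed formula for ballot numbers:
for `0 ≤ k < n`, `(n + k) * B n k = (n - k) * binom(n + k, n)`. -/
theorem ballot_number_closed_formula
    (B : ℕ → ℕ → ℕ)
    (hB1 : B 1 0 = 1)
    (hrec : ∀ n k, 1 < n → k < n → B n k = ∑ i ∈ Finset.range (k + 1), B (n - 1) i)
    (hzero : ∀ n k, n ≤ k → B n k = 0) :
    ∀ n k : ℕ, k < n →
      (n + k) * B n k = (n - k) * Nat.choose (n + k) n := by
  suffices H : ∀ n, ∀ k ≤ n, (n + k) * B n k = (n - k) * Nat.choose (n + k) n by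
    intro n k hk; exact H n k hk.le
  intro n
  induction n with
  | zero =>
    intro k hk
    interval_cases k
    simp [hzero 0 0 le_rfl]
  | succ n ih =>
    intro k hk
    induction k with
    | zero =>
      have hB : B (n + 1) 0 = 1 := by
        rcases Nat.eq_zero_or_pos n with hn | hn
        · subst hn; exact hB1
        · have h1 : B (n + 1) 0 = B n 0 := by
            rw [hrec (n + 1) 0 (by omega) (by omega)]
            simp
          have h2 := ih 0 (Nat.zero_le n)
          simp at h2
          rw [h1]
          exact Nat.eq_of_mul_eq_mul_left hn (by omega)
      simp [hB]
    | succ k ihk =>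
      rcases Nat.eq_or_lt_of_le hk with heq | hlt
      · -- k + 1 = n + 1 : both sides vanish
        rw [hzero (n + 1) (k + 1) (by omega), Nat.sub_eq_zero_of_le (by omega)]
        simp
      · -- k + 1 ≤ n, i.e. k < n
        have hkn : k < n := by omega
        -- recurrence split
        have hsplit : B (n + 1) (k + 1) = B (n + 1) k + B n (k + 1) := by
          rw [hrec (n + 1) (k + 1) (by omega) (by omega),
              hrec (n + 1) k (by omega) (by omega)]
          simp [Finset.sum_range_succ]
        have h1 := ihk (by omega)
        have h2 := ih (k + 1) (by omega)
        -- binomial identities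
        have key : Nat.choose (n + k + 1) (n + 1) * (n + 1)
            = Nat.choose (n + k + 1) n * (k + 1) := by
          have := Nat.choose_succ_right_eq (n + k + 1) n
          simpa [show n + k + 1 - n = k + 1 by omega] using this
        have pascal : Nat.choose (n + k + 2) (n + 1)
            = Nat.choose (n + k + 1) n + Nat.choose (n + k + 1) (n + 1) := by
          have := Nat.choose_succ_succ (n + k + 1) n
          simpa [show n + k + 1 + 1 = n + k + 2 by omega] using this
        -- normalize index arithmetic
        simp only [show n + 1 + (k + 1) = n + k + 2 by omega] at *
        simp only [show n + 1 + k = n + k + 1 by omega] at h1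
        simp only [show n + (k + 1) = n + k + 1 by omega] at h2
        rw [hsplit, pascal]
        zify [show k + 1 ≤ n + 1 by omega]
        zify [show k ≤ n + 1 by omega] at h1
        zify [show k + 1 ≤ n by omega] at h2
        zify at key
        have hne : ((n : ℤ) + k + 1) ≠ 0 := by positivity
        apply mul_left_cancel₀ hne
        ring_nf
        ring_nf at h1 h2 key
        linear_combination ((n : ℤ) + k + 2) * h1 + ((n : ℤ) + k + 2) * h2 + 2 * key
end

section
/- Let B : ℕ → ℕ → ℕ satisfy: B(1,0)=1; for all n>1 and 0≤k<n, B(n,k)=∑_{i=0}^{k} B(n−1,i); and B(n,k)=0 whenever k≥n. For 0≤k<n, B(n,k) equals the number of Dyck paths of length 2n whose maximal final run of consecutive down steps has length exactly n−k. -/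
namespace BallotAux

def run (w : List ℤ) : ℕ := (w.reverse.takeWhile (fun x => decide (x = -1))).length

def S (n m : ℕ) : Set (List ℤ) :=
  {w | w.length = 2 * n ∧ (∀ x ∈ w, x = 1 ∨ x = -1) ∧
    (∀ j : ℕ, 0 ≤ (w.take j).sum) ∧ w.sum = 0 ∧ run w = m}

def T (n j : ℕ) : Set (List ℤ) :=
  {w | w.length = 2 * n ∧ (∀ x ∈ w, x = 1 ∨ x = -1) ∧
    (∀ j : ℕ, 0 ≤ (w.take j).sum) ∧ w.sum = 0 ∧ j ≤ run w}

lemma takeWhile_replicate_append (j : ℕ) (l : List ℤ) :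
    (List.replicate j (-1 : ℤ) ++ l).takeWhile (fun x => decide (x = -1))
      = List.replicate j (-1 : ℤ) ++ l.takeWhile (fun x => decide (x = -1)) := by
  induction j with
  | zero => simp
  | succ j ih => simp [List.replicate_succ, List.takeWhile, ih]

lemma run_append_replicate (Q : List ℤ) (j : ℕ) :
    run (Q ++ List.replicate j (-1)) = run Q + j := by
  unfold run
  rw [List.reverse_append, List.reverse_replicate, takeWhile_replicate_append]
  simp [Nat.add_comm]

lemma run_canonical (Q : List ℤ) (j : ℕ) :
    run (Q ++ 1 :: List.replicate j (-1)) = j := by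
  have : Q ++ 1 :: List.replicate j (-1) = (Q ++ [1]) ++ List.replicate j (-1) := by simp
  rw [this, run_append_replicate]
  have : run (Q ++ [1]) = 0 := by
    unfold run
    rw [List.reverse_append]
    simp [List.takeWhile]
  omega

lemma decomp (w : List ℤ) (hpm : ∀ x ∈ w, x = 1 ∨ x = -1) :
    w = List.replicate (run w) (-1) ∨
      ∃ Q, w = Q ++ 1 :: List.replicate (run w) (-1) := by
  set p : ℤ → Bool := fun x => decide (x = -1) with hp
  have hsplit : w.reverse.takeWhile p ++ w.reverse.dropWhile p = w.reverse :=
    List.takeWhile_append_dropWhile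
  have hrep : w.reverse.takeWhile p = List.replicate (run w) (-1) := by
    rw [List.eq_replicate_iff]
    refine ⟨rfl, fun b hb => ?_⟩
    have := List.mem_takeWhile_imp hb
    simpa [hp] using this
  have hw : w = (w.reverse.dropWhile p).reverse ++ List.replicate (run w) (-1) := by
    conv_lhs => rw [← w.reverse_reverse, ← hsplit]
    rw [List.reverse_append, hrep]
    simp
  rcases hd : w.reverse.dropWhile p with _ | ⟨a, d⟩
  · left
    rw [hd] at hw
    simpa using hw
  · right
    have ha : p a = false := by
      have := List.head?_dropWhile_not p w.reverse
      rw [hd] at this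
      simpa using this
    have ha' : a ≠ -1 := by simpa [hp] using ha
    have hamem : a ∈ w := by
      have : a ∈ w.reverse.dropWhile p := by rw [hd]; simp
      have := (List.dropWhile_sublist p).mem this
      simpa using this
    have ha1 : a = 1 := by rcases hpm a hamem with h | h; exact h; exact absurd h ha'
    rw [hd, ha1] at hw
    exact ⟨d.reverse, by simpa using hw⟩

lemma sum_le_length (l : List ℤ) (h : ∀ x ∈ l, x = 1 ∨ x = -1) : l.sum ≤ l.length := by
  induction l with
  | nil => simp
  | cons a t ih =>
    have ha := h a (by simp)
    have ht := ih (fun x hx => h x (by simp [hx]))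
    simp only [List.sum_cons, List.length_cons]
    push_cast
    rcases ha with h1 | h1 <;> simp [h1] <;> omega

lemma pm_finite (L : ℕ) : {w : List ℤ | w.length = L ∧ ∀ x ∈ w, x = 1 ∨ x = -1}.Finite := by
  classical
  have hA : Finite {x : ℤ // x = 1 ∨ x = -1} := ((Set.finite_singleton (-1 : ℤ)).insert 1).to_subtype
  have hsub : {w : List ℤ | w.length = L ∧ ∀ x ∈ w, x = 1 ∨ x = -1} ⊆
      (List.map (Subtype.val : {x : ℤ // x = 1 ∨ x = -1} → ℤ)) ''
        {l : List {x : ℤ // x = 1 ∨ x = -1} | l.length = L} := by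
    rintro w ⟨hl, hw⟩
    refine ⟨w.attach.map (fun x => ⟨x.1, hw x.1 x.2⟩), by simp [hl], ?_⟩
    simp [List.map_map]
  exact ((List.finite_length_eq _ L).image _).subset hsub

lemma S_finite (n m : ℕ) : (S n m).Finite :=
  (pm_finite (2 * n)).subset (fun w hw => ⟨hw.1, hw.2.1⟩)

lemma T_finite (n j : ℕ) : (T n j).Finite :=
  (pm_finite (2 * n)).subset (fun w hw => ⟨hw.1, hw.2.1⟩)

lemma run_le_n {n j : ℕ} {w : List ℤ} (hw : w ∈ T n j) : run w ≤ n := by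
  obtain ⟨hlen, hpm, hpre, hsum, -⟩ := hw
  obtain ⟨m, hm⟩ : ∃ m, run w = m := ⟨_, rfl⟩
  rw [hm]
  rcases decomp w hpm with h | ⟨Q, h⟩
  · rw [hm] at h
    rw [h] at hsum hlen
    simp at hsum hlen
    omega
  · rw [hm] at h
    have hQpm : ∀ x ∈ Q, x = 1 ∨ x = -1 := fun x hx => hpm x (by rw [h]; simp [hx])
    have hQs : Q.sum ≤ Q.length := sum_le_length Q hQpm
    rw [h] at hsum hlen
    simp at hsum hlen
    omega

lemma S_zero (n : ℕ) (hn : 1 ≤ n) : (S n 0).ncard = 0 := by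
  have : S n 0 = ∅ := by
    ext w
    simp only [Set.mem_empty_iff_false, iff_false]
    rintro ⟨hlen, hpm, hpre, hsum, hrun⟩
    rcases decomp w hpm with h | ⟨Q, h⟩
    · rw [hrun] at h
      simp only [List.replicate_zero] at h
      rw [h] at hlen
      simp at hlen
      omega
    · rw [hrun] at h
      simp at h
      have h1 : Q.sum + 1 = 0 := by rw [h] at hsum; simpa using hsum
      have h2 := hpre Q.length
      rw [h, List.take_left] at h2
      omega
  simp [this]

lemma S_one : (S 1 1).ncard = 1 := by
  have : S 1 1 = {[1, -1]} := by
    ext w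
    constructor
    · rintro ⟨hlen, hpm, hpre, hsum, hrun⟩
      rw [show 2*1 = 2 from rfl, List.length_eq_two] at hlen
      obtain ⟨a, b, rfl⟩ := hlen
      have h1 := hpre 1
      simp at h1 hsum
      have ha := hpm a (by simp)
      have : a = 1 := by rcases ha with h | h; exact h; omega
      subst this
      have : b = -1 := by omega
      subst this
      rfl
    · rintro rfl
      refine ⟨rfl, by decide, ?_, by simp, by decide⟩
      intro j
      match j with
      | 0 => simp
      | 1 => simp
      | (j+2) => rw [List.take_of_length_le (by simp)]; decide
  rw [this, Set.ncard_singleton]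

lemma take_append_all (Q X : List ℤ) {t : ℕ} (h : Q.length = t) : (Q ++ X).take t = Q := by
  subst h; exact List.take_left

lemma take_sum_append (A B : List ℤ) (hA : ∀ j, 0 ≤ (A.take j).sum)
    (hB : ∀ j, 0 ≤ A.sum + (B.take j).sum) : ∀ j, 0 ≤ ((A ++ B).take j).sum := by
  intro j
  rw [List.take_append, List.sum_append]
  by_cases hj : j ≤ A.length
  · rw [Nat.sub_eq_zero_of_le hj]
    simpa using hA j
  · rw [List.take_of_length_le (by omega)]
    exact hB _

/-- structure of elements of `S (n+1) m`, `m ≥ 1` -/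
lemma S_struct {n m : ℕ} (hm1 : 1 ≤ m) {w : List ℤ} (hw : w ∈ S (n + 1) m) :
    ∃ Q : List ℤ, w = Q ++ 1 :: List.replicate m (-1) ∧ Q.length = 2 * n + 1 - m ∧
      Q.sum = (m : ℤ) - 1 ∧ (∀ x ∈ Q, x = 1 ∨ x = -1) ∧ (∀ j, 0 ≤ (Q.take j).sum) := by
  obtain ⟨hlen, hpm, hpre, hsum, hrun⟩ := hw
  rcases decomp w hpm with h | ⟨Q, h⟩
  · rw [hrun] at h
    rw [h] at hsum
    simp at hsum
    omega
  · rw [hrun] at h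
    have hlen' : Q.length + 1 + m = 2 * (n + 1) := by rw [h] at hlen; simp at hlen; omega
    have hsum' : Q.sum = (m : ℤ) - 1 := by
      rw [h] at hsum; simp at hsum; omega
    refine ⟨Q, h, by omega, hsum', fun x hx => hpm x (by rw [h]; simp [hx]), fun j => ?_⟩
    have := hpre j
    rw [h, List.take_append] at this
    by_cases hj : j ≤ Q.length
    · rw [Nat.sub_eq_zero_of_le hj] at this
      simpa using this
    · rw [List.take_of_length_le (by omega)]
      omega

/-- structure of elements of `T n j`, `n ≥ 1` -/
lemma T_struct {n j : ℕ} (hn : 1 ≤ n) {v : List ℤ} (hv : v ∈ T n j) :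
    ∃ (Q : List ℤ) (r : ℕ), v = Q ++ 1 :: List.replicate r (-1) ∧ j ≤ r ∧ r = run v ∧
      Q.length + 1 + r = 2 * n ∧ Q.sum = (r : ℤ) - 1 := by
  obtain ⟨hlen, hpm, hpre, hsum, hrun⟩ := hv
  rcases decomp v hpm with h | ⟨Q, h⟩
  · rw [h] at hsum hlen
    simp at hsum hlen
    omega
  · refine ⟨Q, run v, h, hrun, rfl, ?_, ?_⟩
    · rw [h] at hlen; simp at hlen; omega
    · rw [h] at hsum; simp at hsum; omega

lemma card_step (n m : ℕ) (hn : 1 ≤ n) (hm1 : 1 ≤ m) (hm2 : m ≤ n + 1) :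
    (S (n + 1) m).ncard = (T n (m - 1)).ncard := by
  classical
  set t := 2 * n + 1 - m with ht
  set φ : List ℤ → List ℤ := fun w => w.take t ++ List.replicate (m - 1) (-1) with hφ
  set ψ : List ℤ → List ℤ := fun v => v.take t ++ 1 :: List.replicate m (-1) with hψ
  have hmapsφ : Set.MapsTo φ (S (n + 1) m) (T n (m - 1)) := by
    intro w hw
    obtain ⟨Q, hwQ, hQlen, hQsum, hQpm, hQpre⟩ := S_struct hm1 hw
    have htake : w.take t = Q := by
      rw [hwQ]; exact take_append_all _ _ (by omega)
    have hφw : φ w = Q ++ List.replicate (m - 1) (-1) := by rw [hφ]; simp [htake]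
    rw [hφw]
    refine ⟨?_, ?_, ?_, ?_, ?_⟩
    · simp; omega
    · intro x hx
      rcases List.mem_append.mp hx with h | h
      · exact hQpm x h
      · right; exact List.eq_of_mem_replicate h
    · refine take_sum_append _ _ hQpre fun i => ?_
      rw [List.take_replicate, List.sum_replicate, hQsum]
      have : (i ⊓ (m - 1)) ≤ m - 1 := Nat.min_le_right _ _
      simp only [smul_neg, nsmul_eq_mul, mul_one]
      omega
    · rw [List.sum_append, List.sum_replicate, hQsum]
      simp only [smul_neg, nsmul_eq_mul, mul_one]
      omega
    · rw [run_append_replicate]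
      omega
  have hmapsψ : Set.MapsTo ψ (T n (m - 1)) (S (n + 1) m) := by
    intro v hv
    obtain ⟨Q, r, hvQ, hjr, hrrun, hQlen, hQsum⟩ := T_struct hn hv
    have hrn : r ≤ n := by rw [hrrun]; exact run_le_n hv
    obtain ⟨hlen, hpm, hpre, hsum, -⟩ := hv
    have hts : t - Q.length = (r - (m - 1)) + 1 := by omega
    have htake : v.take t = Q ++ 1 :: List.replicate (r - (m - 1)) (-1) := by
      rw [hvQ, List.take_append, List.take_of_length_le (by omega : Q.length ≤ t),
        hts, List.take_succ_cons, List.take_replicate,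
        Nat.min_eq_left (by omega : r - (m - 1) ≤ r)]
    have hψv : ψ v = (Q ++ 1 :: List.replicate (r - (m - 1)) (-1)) ++ 1 :: List.replicate m (-1) := by
      rw [hψ]; simp [htake]
    rw [hψv]
    have hXsum : (Q ++ 1 :: List.replicate (r - (m - 1)) (-1)).sum = (m : ℤ) - 1 := by
      rw [List.sum_append, List.sum_cons, List.sum_replicate, hQsum]
      simp only [smul_neg, nsmul_eq_mul, mul_one]
      have : r - (m - 1) ≤ r := Nat.sub_le _ _
      omega
    refine ⟨?_, ?_, ?_, ?_, ?_⟩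
    · simp; omega
    · intro x hx
      simp only [List.mem_append, List.mem_cons, List.mem_replicate] at hx
      rcases hx with (h | h) | h | h
      · exact hpm x (by rw [hvQ]; simp [h])
      · rcases h with h | h
        · left; exact h
        · right; exact h.2
      · left; exact h
      · right; exact h.2
    · refine take_sum_append _ _ (fun i => ?_) fun i => ?_
      · rw [← htake, List.take_take]
        exact hpre _
      · rw [hXsum]
        match i with
        | 0 => simp; omega
        | (i+1) =>
          rw [List.take_succ_cons, List.sum_cons, List.take_replicate, List.sum_replicate]
          have : (i ⊓ m) ≤ m := Nat.min_le_right _ _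
          simp only [smul_neg, nsmul_eq_mul, mul_one]
          omega
    · rw [List.sum_append, List.sum_cons, List.sum_replicate, hXsum]
      simp only [smul_neg, nsmul_eq_mul, mul_one]
      omega
    · rw [run_canonical]
  have hinv : Set.InvOn ψ φ (S (n + 1) m) (T n (m - 1)) := by
    constructor
    · intro w hw
      obtain ⟨Q, hwQ, hQlen, hQsum, hQpm, hQpre⟩ := S_struct hm1 hw
      have htake : w.take t = Q := by rw [hwQ]; exact take_append_all _ _ (by omega)
      have h1 : φ w = Q ++ List.replicate (m - 1) (-1) := by rw [hφ]; simp [htake]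
      have h2 : (φ w).take t = Q := by rw [h1]; exact take_append_all _ _ (by omega)
      rw [hψ]
      simp only [h2]
      rw [hwQ]
    · intro v hv
      obtain ⟨Q, r, hvQ, hjr, hrrun, hQlen, hQsum⟩ := T_struct hn hv
      have hrn : r ≤ n := by rw [hrrun]; exact run_le_n hv
      obtain ⟨hlen, hpm, hpre, hsum, -⟩ := hv
      have hts : t - Q.length = (r - (m - 1)) + 1 := by omega
      have htake : v.take t = Q ++ 1 :: List.replicate (r - (m - 1)) (-1) := by
        rw [hvQ, List.take_append, List.take_of_length_le (by omega : Q.length ≤ t),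
          hts, List.take_succ_cons, List.take_replicate,
          Nat.min_eq_left (by omega : r - (m - 1) ≤ r)]
      have hlt : (v.take t).length = t := by
        rw [List.length_take]
        have : t ≤ v.length := by omega
        omega
      have h2 : (ψ v).take t = v.take t := by
        rw [hψ]; exact take_append_all _ _ hlt
      rw [hφ]
      simp only [h2]
      rw [htake, hvQ, List.append_assoc, List.cons_append, ← List.replicate_add,
        show r - (m - 1) + (m - 1) = r by omega]
  have hbij : Set.BijOn φ (S (n + 1) m) (T n (m - 1)) := hinv.bijOn hmapsφ hmapsψ
  calc (S (n + 1) m).ncard = (φ '' S (n + 1) m).ncard :=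
        (Set.ncard_image_of_injOn hbij.injOn).symm
    _ = (T n (m - 1)).ncard := by rw [hbij.image_eq]

lemma T_split (n j : ℕ) : T n j = S n j ∪ T n (j + 1) := by
  ext w
  simp only [T, S, Set.mem_setOf_eq, Set.mem_union]
  constructor
  · rintro ⟨h1, h2, h3, h4, h5⟩
    rcases eq_or_lt_of_le h5 with h | h
    · exact Or.inl ⟨h1, h2, h3, h4, h.symm⟩
    · exact Or.inr ⟨h1, h2, h3, h4, h⟩
  · rintro (⟨h1, h2, h3, h4, h5⟩ | ⟨h1, h2, h3, h4, h5⟩)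
    · exact ⟨h1, h2, h3, h4, h5.ge⟩
    · exact ⟨h1, h2, h3, h4, by omega⟩

lemma T_empty (n j : ℕ) (h : n < j) : T n j = ∅ := by
  ext w
  simp only [Set.mem_empty_iff_false, iff_false]
  intro hw
  have := run_le_n hw
  have := hw.2.2.2.2
  omega

lemma T_card (n : ℕ) :
    ∀ j, (T n j).ncard = ∑ r ∈ Finset.Icc j n, (S n r).ncard := by
  suffices h : ∀ d j, n + 1 ≤ j + d → (T n j).ncard = ∑ r ∈ Finset.Icc j n, (S n r).ncard by
    intro j
    exact h (n + 1) j (by omega)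
  intro d
  induction d with
  | zero =>
    intro j hj
    rw [T_empty n j (by omega), Finset.Icc_eq_empty (by omega)]
    simp
  | succ d ih =>
    intro j hj
    by_cases hjn : n + 1 ≤ j + d
    · exact ih j hjn
    · have hjle : j ≤ n := by omega
      have hdisj : Disjoint (S n j) (T n (j + 1)) := by
        rw [Set.disjoint_left]
        rintro w ⟨-, -, -, -, h5⟩ ⟨-, -, -, -, h5'⟩
        omega
      rw [T_split n j, Set.ncard_union_eq hdisj (S_finite n j) (T_finite n (j + 1)),
        ih (j + 1) (by omega)]
      rw [show Finset.Icc j n = insert j (Finset.Icc (j + 1) n) by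
        rw [Finset.Icc_add_one_left_eq_Ioc, Finset.Ioc_insert_left hjle]]
      rw [Finset.sum_insert (by simp)]

lemma main (B : ℕ → ℕ → ℕ)
    (hB1 : B 1 0 = 1)
    (hrec : ∀ n k, 1 < n → k < n → B n k = ∑ i ∈ Finset.range (k + 1), B (n - 1) i)
    (hzero : ∀ n k, n ≤ k → B n k = 0) :
    ∀ n, 1 ≤ n → ∀ k, k < n → B n k = (S n (n - k)).ncard := by
  intro n hn'
  induction n, hn' using Nat.le_induction with
  | base =>
    intro k hk
    interval_cases k
    rw [hB1]
    exact S_one.symm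
  | succ n hn ih =>
    intro k hk
    rw [hrec (n + 1) k (by omega) hk]
    simp only [Nat.add_sub_cancel]
    have hterm : ∀ i ∈ Finset.range (k + 1), B n i = (S n (n - i)).ncard := by
      intro i hi
      simp only [Finset.mem_range] at hi
      by_cases hin : i < n
      · exact ih i hin
      · have hieq : i = n := by omega
        rw [hieq, hzero n n le_rfl, Nat.sub_self, S_zero n hn]
    rw [Finset.sum_congr rfl hterm]
    have hsum : ∑ i ∈ Finset.range (k + 1), (S n (n - i)).ncard
        = ∑ r ∈ Finset.Icc (n - k) n, (S n r).ncard := by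
      refine Finset.sum_nbij' (fun i => n - i) (fun r => n - r) ?_ ?_ ?_ ?_ ?_
      · intro i hi
        simp only [Finset.mem_range] at hi
        simp only [Finset.mem_Icc]
        omega
      · intro r hr
        simp only [Finset.mem_Icc] at hr
        simp only [Finset.mem_range]
        omega
      · intro i hi
        simp only [Finset.mem_range] at hi
        show n - (n - i) = i
        omega
      · intro r hr
        simp only [Finset.mem_Icc] at hr
        show n - (n - r) = r
        omega
      · intro i hi
        rfl
    rw [hsum, ← T_card n (n - k)]
    rw [show n - k = n + 1 - k - 1 from by omega]
    exact (card_step n (n + 1 - k) hn (by omega) (by omega)).symm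

end BallotAux

/-- For `0 ≤ k < n`, the ballot number `B n k` counts the Dyck paths of
length `2n` (sequences of `±1` steps with nonnegative partial sums and total sum `0`)
whose maximal final run of consecutive down steps has length exactly `n - k`. -/
theorem ballot_number_counts_dyck_paths
    (B : ℕ → ℕ → ℕ)
    (hB1 : B 1 0 = 1)
    (hrec : ∀ n k, 1 < n → k < n → B n k = ∑ i ∈ Finset.range (k + 1), B (n - 1) i)
    (hzero : ∀ n k, n ≤ k → B n k = 0) :
    ∀ n k : ℕ, k < n →
      B n k = Set.ncard {w : List ℤ |
        w.length = 2 * n ∧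
        (∀ x ∈ w, x = 1 ∨ x = -1) ∧
        (∀ j : ℕ, 0 ≤ (w.take j).sum) ∧
        w.sum = 0 ∧
        (w.reverse.takeWhile (fun x => decide (x = -1))).length = n - k} := by
  intro n k hk
  exact BallotAux.main B hB1 hrec hzero n (by omega) k hk
end

section
/- Let B₃ : ℕ → ℕ → ℕ → ℕ satisfy: B₃(1,0,0)=1; for all n>1 and k+l<n, B₃(n,k,l)=∑_{i=0}^{k}∑_{j=0}^{l} B₃(n−1,i,j); and B₃(n,k,l)=0 whenever k+l≥n. Then for every positive integer n, ∑_{k,l≥0} B₃(n,k,l) = C₃(n), where C₃(n) = (1/(2n+1))·binom(3n,n); equivalently (2n+1)·∑_{k,l} B₃(n,k,l) = binom(3n,n). -/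
open Finset

lemma hockey (p : ℕ) : ∀ l : ℕ, ∑ j ∈ range (l+1), (p+j).choose j = (p+l+1).choose l := by
  intro l
  induction l with
  | zero => simp
  | succ l ih =>
    rw [sum_range_succ, ih]
    have h1 : p + (l+1) = (p + l) + 1 := by ring
    rw [h1]
    exact (Nat.choose_succ_succ' (p+l+1) l).symm

lemma L2 (p i : ℕ) : ∀ l d : ℕ, i + l + d = p + 1 →
    (p+2) * ∑ j ∈ range (l+1), ((p+1) - i - j) * (p+j).choose j
      = (p+1+l).choose l * ((p+1) * d + (d + l)) := by
  intro l
  induction l with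
  | zero =>
    intro d hd
    have h1 : p + 1 - i - 0 = d := by omega
    rw [Finset.sum_range_one, h1]
    simp only [Nat.add_zero, Nat.choose_zero_right, mul_one, add_zero]
    ring
  | succ l ih =>
    intro d hd
    have h1 : p + 1 - i - (l+1) = d := by omega
    rw [sum_range_succ, h1]
    have hIH := ih (d+1) (by omega)
    have hkey : (p+1+l).choose (l+1) * (l+1) = (p+1+l).choose l * (p+1) := by
      have := Nat.choose_succ_right_eq (p+1+l) l
      rwa [show p+1+l - l = p+1 by omega] at this
    have hpas : (p+1+(l+1)).choose (l+1) = (p+1+l).choose l + (p+1+l).choose (l+1) := by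
      rw [show p+1+(l+1) = (p+1+l)+1 by ring, Nat.choose_succ_succ']
    rw [show p+(l+1) = p+1+l by ring]
    set A := (p+1+l).choose l with hA
    set B := (p+1+l).choose (l+1) with hB
    set S := ∑ j ∈ range (l+1), ((p+1) - i - j) * (p+j).choose j with hS
    rw [hpas]
    zify at hIH hkey ⊢
    linear_combination hIH - hkey
lemma lemmaA (p k l e : ℕ) (h : k + l + e = p + 1) :
    (p+2) * ∑ i ∈ range (k+1), ∑ j ∈ range (l+1),
        ((p+1) - i - j) * ((p+i).choose i * (p+j).choose j)
      = (p+1) * ((e+1) * ((p+1+k).choose k * (p+1+l).choose l)) := by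
  apply Nat.eq_of_mul_eq_mul_left (show 0 < p+2 by omega)
  have e1 : ∀ i ∈ range (k+1),
      (p+2) * ∑ j ∈ range (l+1), ((p+1) - i - j) * ((p+i).choose i * (p+j).choose j)
        = (p+i).choose i * ((p+1+l).choose l
            * ((p+1) * ((p+1)-l-i) + (((p+1)-l-i) + l))) := by
    intro i hi
    rw [mem_range, Nat.lt_succ_iff] at hi
    have hfac : ∑ j ∈ range (l+1), ((p+1) - i - j) * ((p+i).choose i * (p+j).choose j)
        = (p+i).choose i * ∑ j ∈ range (l+1), ((p+1) - i - j) * (p+j).choose j := by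
      rw [mul_sum]; exact sum_congr rfl fun j _ => by ring
    rw [hfac, ← mul_assoc, mul_comm (p+2) ((p+i).choose i), mul_assoc,
        L2 p i l ((p+1)-l-i) (by omega)]
  have hX : (p+2) * ∑ i ∈ range (k+1), ∑ j ∈ range (l+1),
        ((p+1) - i - j) * ((p+i).choose i * (p+j).choose j)
      = ∑ i ∈ range (k+1), (p+i).choose i * ((p+1+l).choose l
            * ((p+1) * ((p+1)-l-i) + (((p+1)-l-i) + l))) := by
    rw [mul_sum]; exact sum_congr rfl e1
  rw [hX]
  have e2 : ∑ i ∈ range (k+1), (p+i).choose i * ((p+1+l).choose l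
            * ((p+1) * ((p+1)-l-i) + (((p+1)-l-i) + l)))
      = (p+1+l).choose l * ((p+1) * ∑ i ∈ range (k+1), ((p+1)-l-i) * (p+i).choose i
          + ∑ i ∈ range (k+1), ((p+1)-0-i) * (p+i).choose i) := by
    simp only [mul_add, mul_sum, ← sum_add_distrib]
    refine sum_congr rfl fun i hi => ?_
    rw [mem_range, Nat.lt_succ_iff] at hi
    have hei : ((p+1)-l-i) + l = (p+1) - 0 - i := by omega
    rw [← hei]; ring
  rw [e2]
  have e3 : (p+2) * ((p+1+l).choose l
        * ((p+1) * ∑ i ∈ range (k+1), ((p+1)-l-i) * (p+i).choose i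
          + ∑ i ∈ range (k+1), ((p+1)-0-i) * (p+i).choose i))
      = (p+1+l).choose l * ((p+1) * ((p+2) * ∑ i ∈ range (k+1), ((p+1)-l-i) * (p+i).choose i)
          + (p+2) * ∑ i ∈ range (k+1), ((p+1)-0-i) * (p+i).choose i) := by ring
  rw [e3, L2 p l k e (by omega), L2 p 0 k (l+e) (by omega)]
  set ck := (p+1+k).choose k
  set cl := (p+1+l).choose l
  zify
  have h' : (k:ℤ) + l + e = p + 1 := by exact_mod_cast h
  linear_combination (((p:ℤ)+2) * ck * cl) * h'
lemma L3 (b : ℕ) : ∀ a m : ℕ,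
    ∑ i ∈ range (m+1), (a+i).choose i * (b+(m-i)).choose (m-i) = (a+b+m+1).choose m := by
  intro a
  induction a with
  | zero =>
    intro m
    calc ∑ i ∈ range (m+1), (0+i).choose i * (b+(m-i)).choose (m-i)
        = ∑ i ∈ range (m+1), (fun j => (b+j).choose j) (m+1-1-i) := by
          refine sum_congr rfl fun i hi => ?_
          simp [Nat.zero_add, Nat.choose_self]
      _ = ∑ i ∈ range (m+1), (b+i).choose i :=
          sum_range_reflect (fun j => (b+j).choose j) (m+1)
      _ = (b+m+1).choose m := hockey b m
      _ = (0+b+m+1).choose m := by rw [Nat.zero_add]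
  | succ a iha =>
    intro m
    induction m with
    | zero => simp
    | succ m ihm =>
      rw [sum_range_succ']
      have hterm : ∀ i ∈ range (m+1),
          (a+1+(i+1)).choose (i+1) * (b+(m+1-(i+1))).choose (m+1-(i+1))
            = (a+1+i).choose i * (b+(m-i)).choose (m-i)
              + (a+1+i).choose (i+1) * (b+(m-i)).choose (m-i) := by
        intro i hi
        rw [show m+1-(i+1) = m-i from by omega,
            show a+1+(i+1) = (a+1+i)+1 from by ring,
            Nat.choose_succ_succ', add_mul]
      rw [sum_congr rfl hterm, sum_add_distrib, ihm]
      have hA : (a+b+(m+1)+1).choose (m+1)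
          = ∑ i ∈ range (m+1), (a+1+i).choose (i+1) * (b+(m-i)).choose (m-i)
            + (b+(m+1)).choose (m+1) := by
        rw [← iha (m+1), sum_range_succ']
        congr 1
        · refine sum_congr rfl fun i hi => ?_
          rw [show m+1-(i+1) = m-i from by omega,
              show a+(i+1) = a+1+i from by ring]
        · simp
      have hf0 : (a+1+0).choose 0 * (b+(m+1-0)).choose (m+1-0)
          = (b+(m+1)).choose (m+1) := by simp
      rw [add_assoc, hf0, ← hA]
      rw [show a+1+b+(m+1)+1 = (a+b+(m+1)+1)+1 from by ring,
          Nat.choose_succ_succ']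
      congr 2
      omega
lemma Slemma (p : ℕ) :
    (∑ k ∈ range (p+1), ∑ l ∈ range (p+1),
      ((p+1) - k - l) * ((p+k).choose k * (p+l).choose l))
    = (p+(p+2)+p+1).choose p := by
  apply Nat.eq_of_mul_eq_mul_left (show 0 < p+2 by omega)
  have e1 : ∀ k ∈ range (p+1),
      (p+2) * ∑ l ∈ range (p+1), ((p+1) - k - l) * ((p+k).choose k * (p+l).choose l)
        = (p+2) * ((p+k).choose k * ((p+2)+(p-k)).choose (p-k)) := by
    intro k hk
    rw [mem_range, Nat.lt_succ_iff] at hk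
    have hfac : ∑ l ∈ range (p+1), ((p+1) - k - l) * ((p+k).choose k * (p+l).choose l)
        = (p+k).choose k * ∑ l ∈ range (p+1), ((p+1) - k - l) * (p+l).choose l := by
      rw [mul_sum]; exact sum_congr rfl fun l _ => by ring
    have htrunc : ∑ l ∈ range ((p-k)+1), ((p+1) - k - l) * (p+l).choose l
        = ∑ l ∈ range (p+1), ((p+1) - k - l) * (p+l).choose l := by
      apply sum_subset
      · intro x hx
        rw [mem_range] at hx ⊢
        omega
      · intro x _ hnx
        rw [mem_range, not_lt] at hnx
        rw [show (p+1) - k - x = 0 from by omega, zero_mul]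
    have hL2 := L2 p k (p-k) 1 (by omega)
    rw [htrunc] at hL2
    have habs : (p+1+(p-k)).choose (p-k) * ((p+1) * 1 + (1 + (p-k)))
        = (p+2) * (((p+2)+(p-k)).choose (p-k)) := by
      have h5 := Nat.choose_mul_succ_eq (p+1+(p-k)) (p-k)
      rw [show p+1+(p-k)+1 = (p+2)+(p-k) from by ring,
          show (p+2)+(p-k)-(p-k) = p+2 from by omega] at h5
      rw [show (p+1) * 1 + (1 + (p-k)) = (p+2)+(p-k) from by ring, h5, mul_comm]
    calc (p+2) * ∑ l ∈ range (p+1), ((p+1) - k - l) * ((p+k).choose k * (p+l).choose l)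
        = (p+k).choose k * ((p+2) * ∑ l ∈ range (p+1), ((p+1) - k - l) * (p+l).choose l) := by
          rw [hfac]; ring
      _ = (p+k).choose k * ((p+1+(p-k)).choose (p-k) * ((p+1) * 1 + (1 + (p-k)))) := by
          rw [hL2]
      _ = (p+k).choose k * ((p+2) * (((p+2)+(p-k)).choose (p-k))) := by rw [habs]
      _ = (p+2) * ((p+k).choose k * ((p+2)+(p-k)).choose (p-k)) := by ring
  rw [mul_sum, sum_congr rfl e1, ← mul_sum, L3 (p+2) p p]
/-- The sums of the slices of the Fuss–Catalan tetrahedron `B₃` are the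
order-3 Fuss–Catalan numbers: `(2n+1) * ∑_{k,l} B₃ n k l = binom(3n, n)` for positive `n`.
(Since `B₃ n k l = 0` whenever `k + l ≥ n`, summing `k` and `l` over `{0,…,n-1}`
captures all nonzero terms.) -/
theorem fuss_catalan_tetrahedron_slice_sum
    (B₃ : ℕ → ℕ → ℕ → ℕ)
    (hB1 : B₃ 1 0 0 = 1)
    (hrec : ∀ n k l, 1 < n → k + l < n →
      B₃ n k l = ∑ i ∈ Finset.range (k + 1), ∑ j ∈ Finset.range (l + 1), B₃ (n - 1) i j)
    (hzero : ∀ n k l, n ≤ k + l → B₃ n k l = 0) :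
    ∀ n : ℕ, 0 < n →
      (2 * n + 1) * (∑ k ∈ Finset.range n, ∑ l ∈ Finset.range n, B₃ n k l)
        = Nat.choose (3 * n) n := by
  have hF : ∀ p k l : ℕ, (p+1) * B₃ (p+1) k l
      = ((p+1) - k - l) * ((p+k).choose k * (p+l).choose l) := by
    intro p
    induction p with
    | zero =>
      intro k l
      by_cases hkl : k = 0 ∧ l = 0
      · obtain ⟨rfl, rfl⟩ := hkl
        simp [hB1]
      · rw [hzero 1 k l (by omega), show 0 + 1 - k - l = 0 from by omega]
        simp
    | succ p ih =>
      intro k l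
      by_cases hkl : k + l ≤ p + 1
      · obtain ⟨e, he⟩ : ∃ e, k + l + e = p + 1 := ⟨p+1-(k+l), by omega⟩
        have hr := hrec (p+2) k l (by omega) (by omega)
        rw [show p+2-1 = p+1 from by omega] at hr
        apply Nat.eq_of_mul_eq_mul_left (show 0 < p+1 by omega)
        have hpush : (p+1) * (∑ i ∈ range (k+1), ∑ j ∈ range (l+1), B₃ (p+1) i j)
            = ∑ i ∈ range (k+1), ∑ j ∈ range (l+1), (p+1) * B₃ (p+1) i j := by
          rw [mul_sum]
          exact sum_congr rfl fun i _ => mul_sum _ _ _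
        calc (p+1) * ((p+1+1) * B₃ (p+1+1) k l)
            = (p+2) * ((p+1) * B₃ (p+2) k l) := by ring_nf
          _ = (p+2) * ((p+1) * ∑ i ∈ range (k+1), ∑ j ∈ range (l+1), B₃ (p+1) i j) := by
              rw [hr]
          _ = (p+2) * ∑ i ∈ range (k+1), ∑ j ∈ range (l+1), (p+1) * B₃ (p+1) i j := by
              rw [hpush]
          _ = (p+2) * ∑ i ∈ range (k+1), ∑ j ∈ range (l+1),
                ((p+1) - i - j) * ((p+i).choose i * (p+j).choose j) := by
              congr 1
              exact sum_congr rfl fun i _ => sum_congr rfl fun j _ => ih i j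
          _ = (p+1) * ((e+1) * ((p+1+k).choose k * (p+1+l).choose l)) := lemmaA p k l e he
          _ = (p+1) * ((p+1+1 - k - l) * ((p+1+k).choose k * (p+1+l).choose l)) := by
              rw [show p+1+1-k-l = e+1 from by omega]
      · rw [hzero (p+1+1) k l (by omega), show p+1+1-k-l = 0 from by omega]
        simp
  intro n hn
  obtain ⟨p, rfl⟩ : ∃ p, n = p+1 := ⟨n-1, by omega⟩
  have hnT : (p+1) * (∑ k ∈ range (p+1), ∑ l ∈ range (p+1), B₃ (p+1) k l)
      = (3*(p+1)).choose p := by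
    rw [mul_sum]
    calc ∑ k ∈ range (p+1), (p+1) * ∑ l ∈ range (p+1), B₃ (p+1) k l
        = ∑ k ∈ range (p+1), ∑ l ∈ range (p+1),
            ((p+1) - k - l) * ((p+k).choose k * (p+l).choose l) := by
          refine sum_congr rfl fun k _ => ?_
          rw [mul_sum]
          exact sum_congr rfl fun l _ => hF p k l
      _ = (p+(p+2)+p+1).choose p := Slemma p
      _ = (3*(p+1)).choose p := by rw [show p+(p+2)+p+1 = 3*(p+1) from by ring]
  have hkey : (3*(p+1)).choose (p+1) * (p+1) = (3*(p+1)).choose p * (2*(p+1)+1) := by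
    have := Nat.choose_succ_right_eq (3*(p+1)) p
    rwa [show 3*(p+1) - p = 2*(p+1)+1 from by omega] at this
  apply Nat.eq_of_mul_eq_mul_left (show 0 < p+1 by omega)
  calc (p+1) * ((2*(p+1)+1) * ∑ k ∈ range (p+1), ∑ l ∈ range (p+1), B₃ (p+1) k l)
      = (2*(p+1)+1) * ((p+1) * ∑ k ∈ range (p+1), ∑ l ∈ range (p+1), B₃ (p+1) k l) := by
        ring
    _ = (2*(p+1)+1) * (3*(p+1)).choose p := by rw [hnT]
    _ = (3*(p+1)).choose (p+1) * (p+1) := by rw [hkey]; ring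
    _ = (p+1) * (3*(p+1)).choose (p+1) := by ring
end

section
/- Let B₃ : ℕ → ℕ → ℕ → ℕ satisfy: B₃(1,0,0)=1; for all n>1 and k+l<n, B₃(n,k,l)=∑_{i=0}^{k}∑_{j=0}^{l} B₃(n−1,i,j); and B₃(n,k,l)=0 whenever k+l≥n. Then for all n≥1 and k,l≥0 with k+l<n, B₃(n,k,l) equals the number of 2-Dyck paths of length 3n having exactly k down steps of even height and exactly l down steps of odd height, where down steps belonging to the maximal final run of consecutive down steps are not counted. -/
namespace FCT

def rep (m : ℕ) : List ℤ := List.replicate m (-2)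

def trun (w : List ℤ) : ℕ := (w.reverse.takeWhile (fun x => decide (x = -2))).length

def cnt (P : ℤ → Prop) [DecidablePred P] (w : List ℤ) (m : ℕ) : ℕ :=
  ((Finset.range m).filter (fun j => w.getD j 0 = -2 ∧ P ((w.take (j + 1)).sum))).card

def S (n k l : ℕ) : Set (List ℤ) :=
  {w | w.length = 3 * n ∧ (∀ x ∈ w, x = 1 ∨ x = -2) ∧ (∀ j : ℕ, 0 ≤ (w.take j).sum) ∧
    w.sum = 0 ∧ cnt Even w (w.length - trun w) = k ∧ cnt Odd w (w.length - trun w) = l}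

@[simp] lemma length_rep (m : ℕ) : (rep m).length = m := List.length_replicate

@[simp] lemma sum_rep (m : ℕ) : (rep m).sum = -2 * m := by
  simp [rep, List.sum_replicate, nsmul_eq_mul]; ring

@[simp] lemma sum_take_rep (t m : ℕ) : ((rep m).take t).sum = -2 * (min t m : ℕ) := by
  rw [rep, List.take_replicate]; simp [List.sum_replicate, nsmul_eq_mul]; ring

lemma getD_rep {t m : ℕ} (h : t < m) : (rep m).getD t 0 = -2 := by
  rw [rep, List.getD_eq_getElem?_getD, List.getElem?_replicate]
  simp [h]

lemma mem_rep {x : ℤ} {m : ℕ} (h : x ∈ rep m) : x = -2 := List.eq_of_mem_replicate h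

lemma trun_le (w : List ℤ) : trun w ≤ w.length := by
  have := (List.takeWhile_prefix (l := w.reverse) (fun x => decide (x = -2))).length_le
  simpa [trun] using this

@[simp] lemma reverse_rep (m : ℕ) : (rep m).reverse = rep m := by
  simp [rep]

lemma takeWhile_rev (w : List ℤ) :
    w.reverse.takeWhile (fun x => decide (x = -2)) = rep (trun w) := by
  rw [rep, trun]
  exact List.eq_replicate_of_mem (fun b hb => by
    have := List.mem_takeWhile_imp hb
    simpa using this)

lemma peel' (w : List ℤ) :
    w = (w.reverse.dropWhile (fun x => decide (x = -2))).reverse ++ rep (trun w) := by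
  have h1 := takeWhile_rev w
  conv_lhs => rw [← w.reverse_reverse,
    ← List.takeWhile_append_dropWhile (p := fun x => decide (x = -2)) (l := w.reverse)]
  rw [List.reverse_append, h1, reverse_rep]

lemma strip_eq (w : List ℤ) :
    w.take (w.length - trun w) = (w.reverse.dropWhile (fun x => decide (x = -2))).reverse := by
  have h2 := peel' w
  have hlen : (w.reverse.dropWhile (fun x => decide (x = -2))).reverse.length
      = w.length - trun w := by
    have h3 := congrArg List.length (List.takeWhile_append_dropWhile
      (p := fun x => decide (x = -2)) (l := w.reverse))
    rw [List.length_append] at h3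
    simp only [List.length_reverse] at h3 ⊢
    rw [← trun] at h3
    omega
  calc w.take (w.length - trun w)
      = ((w.reverse.dropWhile (fun x => decide (x = -2))).reverse ++ rep (trun w)).take
          (w.length - trun w) := by rw [← h2]
    _ = ((w.reverse.dropWhile (fun x => decide (x = -2))).reverse ++ rep (trun w)).take
          (w.reverse.dropWhile (fun x => decide (x = -2))).reverse.length := by rw [hlen]
    _ = _ := List.take_left

lemma peel (w : List ℤ) : w = w.take (w.length - trun w) ++ rep (trun w) := by
  rw [strip_eq]; exact peel' w

lemma strip_last (w : List ℤ) :
    w.take (w.length - trun w) = [] ∨ (w.take (w.length - trun w)).getLast? ≠ some (-2) := by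
  rw [strip_eq, List.getLast?_reverse]
  have h := List.head?_dropWhile_not (fun x => decide (x = -2)) w.reverse
  cases hd : (w.reverse.dropWhile (fun x => decide (x = -2))).head? with
  | none => left; simp [List.head?_eq_none_iff.mp hd]
  | some a =>
    right
    rw [hd] at h
    simp only [decide_eq_false_iff_not] at h
    exact fun hc => h (Option.some.inj hc)

lemma trun_append_rep {p : List ℤ} (hp : p = [] ∨ p.getLast? ≠ some (-2)) (m : ℕ) :
    trun (p ++ rep m) = m := by
  have htw : (p ++ rep m).reverse.takeWhile (fun x => decide (x = -2)) = rep m := by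
    rw [List.reverse_append, rep, List.reverse_replicate, ← rep]
    rw [List.takeWhile_append]
    have h1 : (rep m).takeWhile (fun x => decide (x = -2)) = rep m := by
      rw [rep, List.takeWhile_replicate]; simp
    rw [h1, if_pos rfl]
    have h2 : p.reverse.takeWhile (fun x => decide (x = -2)) = [] := by
      cases hrev : p.reverse with
      | nil => rfl
      | cons a t =>
        have ha : p.getLast? = some a := by
          rw [← List.head?_reverse, hrev]; rfl
        rcases hp with h | h
        · subst h; simp at hrev
        · rw [List.takeWhile_cons]
          have : a ≠ -2 := fun hc => h (by rw [ha, hc])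
          simp [this]
    rw [h2, List.append_nil]
  rw [trun, htw, length_rep]

lemma strip_append_rep {p : List ℤ} (hp : p = [] ∨ p.getLast? ≠ some (-2)) (m : ℕ) :
    (p ++ rep m).take ((p ++ rep m).length - trun (p ++ rep m)) = p := by
  rw [trun_append_rep hp m, List.length_append, length_rep]
  have : p.length + m - m = p.length := by omega
  rw [this, List.take_append_of_le_length le_rfl, List.take_length]

lemma cnt_succ (P : ℤ → Prop) [DecidablePred P] (w : List ℤ) (m : ℕ) :
    cnt P w (m + 1) = cnt P w m +
      (if w.getD m 0 = -2 ∧ P ((w.take (m + 1)).sum) then 1 else 0) := by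
  unfold cnt
  rw [Finset.range_add_one, Finset.filter_insert]
  split
  · rw [Finset.card_insert_of_notMem (by simp)]
  · rw [add_zero]

lemma cnt_all (P : ℤ → Prop) [DecidablePred P] (w : List ℤ) (m : ℕ) (e : ℕ)
    (h : ∀ t, t < e → w.getD (m + t) 0 = -2 ∧ P ((w.take (m + t + 1)).sum)) :
    cnt P w (m + e) = cnt P w m + e := by
  induction e with
  | zero => simp
  | succ e ih =>
    rw [← Nat.add_assoc, Nat.add_one, cnt_succ,
      ih (fun t ht => h t (Nat.lt_succ_of_lt ht)), if_pos (h e (Nat.lt_succ_self e))]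
    omega

lemma cnt_none (P : ℤ → Prop) [DecidablePred P] (w : List ℤ) (m : ℕ) (e : ℕ)
    (h : ∀ t, t < e → ¬(w.getD (m + t) 0 = -2 ∧ P ((w.take (m + t + 1)).sum))) :
    cnt P w (m + e) = cnt P w m := by
  induction e with
  | zero => rfl
  | succ e ih =>
    rw [← Nat.add_assoc, Nat.add_one, cnt_succ,
      ih (fun t ht => h t (Nat.lt_succ_of_lt ht)), if_neg (h e (Nat.lt_succ_self e)), add_zero]

lemma cnt_prefix (P : ℤ → Prop) [DecidablePred P] (p q : List ℤ) (m : ℕ)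
    (h : m ≤ p.length) : cnt P (p ++ q) m = cnt P p m := by
  unfold cnt
  congr 1
  refine Finset.filter_congr (fun j hj => ?_)
  rw [Finset.mem_range] at hj
  rw [List.getD_append _ _ _ _ (by omega), List.take_append_of_le_length (by omega)]

lemma cd_spec (w : List ℤ) :
    ((Finset.range w.length).filter (fun j => w.getD j 0 = -2)).card = w.count (-2) := by
  induction w using List.reverseRecOn with
  | nil => simp
  | append_singleton t x ih =>
    rw [List.length_append, List.length_singleton, Finset.range_add_one, Finset.filter_insert]
    have hfilter : (Finset.range t.length).filter (fun j => (t ++ [x]).getD j 0 = -2)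
        = (Finset.range t.length).filter (fun j => t.getD j 0 = -2) :=
      Finset.filter_congr (fun j hj =>
        by rw [List.getD_append _ _ _ _ (Finset.mem_range.mp hj)])
    have hlast : (t ++ [x]).getD t.length 0 = x := by
      rw [List.getD_append_right _ _ _ _ le_rfl, Nat.sub_self]
      rfl
    rw [List.count_append, hlast]
    split
    · rename_i hx
      rw [Finset.card_insert_of_notMem (by simp), hfilter, ih, hx]
      simp
    · rename_i hx
      rw [hfilter, ih]
      have : List.count (-2) [x] = 0 := by
        simp [List.count_singleton']
        intro hc
        exact hx (by simpa using hc)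
      omega

lemma count_parts (w : List ℤ) (hw : ∀ x ∈ w, x = 1 ∨ x = -2) :
    w.sum = (w.count 1 : ℤ) - 2 * (w.count (-2) : ℤ) ∧
      w.length = w.count 1 + w.count (-2) := by
  induction w with
  | nil => simp
  | cons a t ih =>
    obtain ⟨h1, h2⟩ := ih (fun x hx => hw x (List.mem_cons_of_mem _ hx))
    rcases hw a (List.mem_cons_self) with rfl | rfl <;>
      · simp only [List.count_cons, List.sum_cons, List.length_cons, h1, h2]
        norm_num
        push_cast
        constructor <;> ring_nf <;> omega

lemma cnt_split (w : List ℤ) (m : ℕ) :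
    cnt Even w m + cnt Odd w m
      = ((Finset.range m).filter (fun j => w.getD j 0 = -2)).card := by
  classical
  unfold cnt
  rw [Finset.filter_congr_decidable, Finset.filter_congr_decidable]
  rw [← Finset.filter_filter (fun j => w.getD j 0 = -2)
        (fun j => Even ((w.take (j + 1)).sum)) (Finset.range m),
      ← Finset.filter_filter (fun j => w.getD j 0 = -2)
        (fun j => Odd ((w.take (j + 1)).sum)) (Finset.range m)]
  have h2 : Finset.filter (fun j => Odd ((w.take (j + 1)).sum))
        (Finset.filter (fun j => w.getD j 0 = -2) (Finset.range m))
      = Finset.filter (fun j => ¬ Even ((w.take (j + 1)).sum))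
        (Finset.filter (fun j => w.getD j 0 = -2) (Finset.range m)) :=
    Finset.filter_congr (fun j _ => by rw [Int.not_even_iff_odd])
  rw [h2]
  exact Finset.card_filter_add_card_filter_not _

lemma last_down {w : List ℤ} (hne : w ≠ [])
    (hw : ∀ x ∈ w, x = 1 ∨ x = -2) (hpre : ∀ j : ℕ, 0 ≤ (w.take j).sum)
    (hsum : w.sum = 0) : w.getLast? = some (-2) := by
  obtain ⟨q, x, rfl⟩ : ∃ q x, w = q ++ [x] :=
    ⟨w.dropLast, w.getLast hne, (List.dropLast_append_getLast hne).symm⟩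
  rw [List.getLast?_concat]
  rcases hw x (by simp) with rfl | rfl
  · exfalso
    have h1 := hpre q.length
    rw [List.take_left] at h1
    rw [List.sum_append] at hsum
    simp at hsum
    omega
  · rfl

lemma trun_pos {w : List ℤ} (hne : w ≠ [])
    (hw : ∀ x ∈ w, x = 1 ∨ x = -2) (hpre : ∀ j : ℕ, 0 ≤ (w.take j).sum)
    (hsum : w.sum = 0) : 1 ≤ trun w := by
  by_contra h
  have ht0 : trun w = 0 := by omega
  have := strip_last w
  rw [ht0, Nat.sub_zero, List.take_length] at this
  rcases this with h1 | h1
  · exact hne h1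
  · exact h1 (last_down hne hw hpre hsum)

lemma mem_S_struct {n k l : ℕ} (hn : 1 ≤ n) {w : List ℤ} (hw : w ∈ S n k l) :
    1 ≤ trun w ∧ k + l + trun w = n := by
  obtain ⟨hlen, halpha, hpre, hsum, hk, hl⟩ := hw
  have hne : w ≠ [] := by
    intro h
    rw [h] at hlen
    simp at hlen
    omega
  have htpos : 1 ≤ trun w := trun_pos hne halpha hpre hsum
  have htle := trun_le w
  obtain ⟨hcp1, hcp2⟩ := count_parts w halpha
  have hcount : w.count (-2) = n := by
    rw [hsum] at hcp1
    rw [hlen] at hcp2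
    omega
  set p := w.take (w.length - trun w) with hp
  have hpeel := peel w
  have hplen : p.length = w.length - trun w := by
    rw [hp, List.length_take]
    omega
  have hsplit := cnt_split w (w.length - trun w)
  have hgd : ∀ j < w.length - trun w, w.getD j 0 = p.getD j 0 := by
    intro j hj
    conv_lhs => rw [hpeel]
    rw [List.getD_append _ _ _ _ (by rw [List.length_take]; omega)]
  have hcard : ((Finset.range (w.length - trun w)).filter (fun j => w.getD j 0 = -2)).card
      = p.count (-2) := by
    rw [← cd_spec p, hplen]
    congr 1
    refine Finset.filter_congr (fun j hj => ?_)
    rw [Finset.mem_range] at hj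
    rw [hgd j hj]
  have hcnt : k + l = p.count (-2) := by rw [← hk, ← hl, hsplit, hcard]
  have hcw : w.count (-2) = p.count (-2) + trun w := by
    conv_lhs => rw [hpeel]
    rw [List.count_append, rep, List.count_replicate]
    simp
    rfl
  omega

lemma S_empty {n k l : ℕ} (hn : 1 ≤ n) (h : n ≤ k + l) : S n k l = ∅ := by
  ext w
  simp only [Set.mem_empty_iff_false, iff_false]
  intro hw
  have := mem_S_struct hn hw
  omega

/-! ### The segment list `Q` -/

def Q (a b c : ℕ) : List ℤ := rep a ++ ([1] ++ (rep b ++ ([1] ++ rep (c + 1))))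

@[simp] lemma Q_length (a b c : ℕ) : (Q a b c).length = a + b + c + 3 := by
  simp [Q]; omega

lemma Q_sum (a b c : ℕ) : (Q a b c).sum = -2 * ((a : ℤ) + b + c) := by
  simp [Q, List.sum_append]; ring

lemma getD_append_off (p q : List ℤ) (t : ℕ) :
    (p ++ q).getD (p.length + t) 0 = q.getD t 0 := by
  rw [List.getD_append_right _ _ _ _ (Nat.le_add_right _ _), Nat.add_sub_cancel_left]

lemma take_sum_off (p q : List ℤ) (s : ℕ) :
    ((p ++ q).take (p.length + s)).sum = p.sum + (q.take s).sum := by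
  rw [List.take_append, List.sum_append]
  rw [List.take_of_length_le (by omega), Nat.add_sub_cancel_left]

lemma Q_take1 {a t : ℕ} (b c : ℕ) (h : t ≤ a) :
    ((Q a b c).take t).sum = -2 * (t : ℤ) := by
  rw [Q, List.take_append_of_le_length (by simpa using h), sum_take_rep]
  rw [Nat.min_eq_left h]

lemma Q_take2 {b t : ℕ} (a c : ℕ) (h : t ≤ b) :
    ((Q a b c).take (a + 1 + t)).sum = -2 * (a : ℤ) + 1 + -2 * (t : ℤ) := by
  have h1 : a + 1 + t = (rep a).length + (1 + t) := by simp; omega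
  rw [Q, h1, take_sum_off]
  have h2 : (1 + t) = ([(1 : ℤ)]).length + t := by simp
  rw [h2, take_sum_off]
  rw [List.take_append_of_le_length (by simpa using h), sum_take_rep, Nat.min_eq_left h]
  simp; ring

lemma Q_take3 {c t : ℕ} (a b : ℕ) (h : t ≤ c + 1) :
    ((Q a b c).take (a + 1 + b + 1 + t)).sum
      = -2 * (a : ℤ) - 2 * (b : ℤ) + 2 + -2 * (t : ℤ) := by
  have h1 : a + 1 + b + 1 + t = (rep a).length + (1 + (b + (1 + t))) := by simp; omega
  rw [Q, h1, take_sum_off]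
  have h2 : (1 + (b + (1 + t))) = ([(1 : ℤ)]).length + (b + (1 + t)) := by simp
  rw [h2, take_sum_off]
  have h3 : (b + (1 + t)) = (rep b).length + (1 + t) := by simp
  rw [h3, take_sum_off]
  have h4 : (1 + t) = ([(1 : ℤ)]).length + t := by simp
  rw [h4, take_sum_off]
  rw [sum_take_rep, Nat.min_eq_left h]
  simp; ring

lemma Q_getD1 {a t : ℕ} (b c : ℕ) (h : t < a) : (Q a b c).getD t 0 = -2 := by
  rw [Q, List.getD_append _ _ _ _ (by simpa using h)]
  exact getD_rep h

lemma Q_getD2 (a b c : ℕ) : (Q a b c).getD a 0 = 1 := by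
  rw [Q, List.getD_append_right _ _ _ _ (by simp)]
  simp [rep]

lemma Q_getD3 {b t : ℕ} (a c : ℕ) (h : t < b) : (Q a b c).getD (a + 1 + t) 0 = -2 := by
  have h1 : a + 1 + t = (rep a).length + (1 + t) := by simp; omega
  rw [Q, h1, getD_append_off]
  have h2 : (1 + t) = ([(1 : ℤ)]).length + t := by simp
  rw [h2, getD_append_off]
  rw [List.getD_append _ _ _ _ (by simpa using h)]
  exact getD_rep h

lemma Q_getD4 (a b c : ℕ) : (Q a b c).getD (a + 1 + b) 0 = 1 := by
  have h1 : a + 1 + b = (rep a).length + (1 + b) := by simp; omega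
  rw [Q, h1, getD_append_off]
  have h2 : (1 + b) = ([(1 : ℤ)]).length + b := by simp
  rw [h2, getD_append_off]
  rw [List.getD_append_right _ _ _ _ (by simp)]
  simp [rep]

lemma Q_take_bound (a b c : ℕ) (s : ℕ) :
    -2 * ((a : ℤ) + b + c) ≤ ((Q a b c).take s).sum := by
  rcases le_or_gt s a with h | h
  · rw [Q_take1 b c h]; omega
  rcases le_or_gt s (a + 1 + b) with h2 | h2
  · obtain ⟨t, rfl⟩ : ∃ t, s = a + 1 + t := ⟨s - (a + 1), by omega⟩
    rw [Q_take2 a c (by omega)]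
    have : (t : ℤ) ≤ (b : ℤ) := by exact_mod_cast (by omega : t ≤ b)
    omega
  rcases le_or_gt s (a + 1 + b + 1 + (c + 1)) with h3 | h3
  · obtain ⟨t, rfl⟩ : ∃ t, s = a + 1 + b + 1 + t := ⟨s - (a + 1 + b + 1), by omega⟩
    rw [Q_take3 a b (by omega)]
    have : (t : ℤ) ≤ (c : ℤ) + 1 := by exact_mod_cast (by omega : t ≤ c + 1)
    omega
  · rw [List.take_of_length_le (le_of_lt (by rw [Q_length]; omega)), Q_sum]

/-! ### Core construction lemmas -/

lemma W_trun {p : List ℤ} (hlast : p.getLast? = some 1) (a b c : ℕ) :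
    trun (p ++ Q a b c) = c + 1 := by
  have hW : p ++ Q a b c = ((p ++ rep a ++ [1] ++ rep b) ++ [1]) ++ rep (c + 1) := by
    simp [Q, List.append_assoc]
  rw [hW, trun_append_rep (Or.inr (by rw [List.getLast?_concat]; norm_num))]

lemma W_strip {p : List ℤ} (hlast : p.getLast? = some 1) (a b c : ℕ) :
    (p ++ Q a b c).take ((p ++ Q a b c).length - trun (p ++ Q a b c))
      = (p ++ rep a ++ [1] ++ rep b) ++ [1] := by
  have hW : p ++ Q a b c = ((p ++ rep a ++ [1] ++ rep b) ++ [1]) ++ rep (c + 1) := by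
    simp [Q, List.append_assoc]
  rw [hW, strip_append_rep (Or.inr (by rw [List.getLast?_concat]; norm_num))]

lemma W'_trun {p : List ℤ} (hlast : p.getLast? = some 1) (m : ℕ) :
    trun (p ++ rep m) = m :=
  trun_append_rep (Or.inr (by rw [hlast]; norm_num)) m

lemma W'_strip {p : List ℤ} (hlast : p.getLast? = some 1) (m : ℕ) :
    (p ++ rep m).take ((p ++ rep m).length - trun (p ++ rep m)) = p :=
  strip_append_rep (Or.inr (by rw [hlast]; norm_num)) m

lemma W_len (p : List ℤ) (a b c : ℕ) :
    (p ++ Q a b c).length = p.length + (a + b + c) + 3 := by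
  rw [List.length_append, Q_length]; omega

lemma W_alpha {p : List ℤ} (halpha : ∀ x ∈ p, x = 1 ∨ x = -2) (a b c : ℕ) :
    ∀ x ∈ p ++ Q a b c, x = 1 ∨ x = -2 := by
  intro x hx
  rcases List.mem_append.mp hx with h | h
  · exact halpha x h
  · simp only [Q, rep, List.mem_append, List.mem_singleton, List.mem_replicate] at h
    tauto

lemma W_sum {p : List ℤ} {a b c : ℕ} (hsum : p.sum = 2 * ((a : ℤ) + b + c)) :
    (p ++ Q a b c).sum = 0 := by
  rw [List.sum_append, Q_sum, hsum]; ring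

lemma W_pre {p : List ℤ} {a b c : ℕ} (hpre : ∀ j : ℕ, 0 ≤ (p.take j).sum)
    (hsum : p.sum = 2 * ((a : ℤ) + b + c)) :
    ∀ j : ℕ, 0 ≤ ((p ++ Q a b c).take j).sum := by
  intro j
  rcases le_or_gt j p.length with hj | hj
  · rw [List.take_append_of_le_length hj]; exact hpre j
  · obtain ⟨s, rfl⟩ : ∃ s, j = p.length + s := ⟨j - p.length, by omega⟩
    rw [take_sum_off, hsum]
    have := Q_take_bound a b c s
    omega

lemma W'_sum {p : List ℤ} {a b c : ℕ} (hsum : p.sum = 2 * ((a : ℤ) + b + c)) :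
    (p ++ rep (a + b + c)).sum = 0 := by
  rw [List.sum_append, sum_rep, hsum]
  push_cast
  ring

lemma W'_alpha {p : List ℤ} (halpha : ∀ x ∈ p, x = 1 ∨ x = -2) (m : ℕ) :
    ∀ x ∈ p ++ rep m, x = 1 ∨ x = -2 := by
  intro x hx
  rcases List.mem_append.mp hx with h | h
  · exact halpha x h
  · exact Or.inr (mem_rep h)

lemma W'_pre {p : List ℤ} {a b c : ℕ} (hpre : ∀ j : ℕ, 0 ≤ (p.take j).sum)
    (hsum : p.sum = 2 * ((a : ℤ) + b + c)) :
    ∀ j : ℕ, 0 ≤ ((p ++ rep (a + b + c)).take j).sum := by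
  intro j
  rcases le_or_gt j p.length with hj | hj
  · rw [List.take_append_of_le_length hj]; exact hpre j
  · obtain ⟨s, rfl⟩ : ∃ s, j = p.length + s := ⟨j - p.length, by omega⟩
    rw [take_sum_off, hsum, sum_take_rep]
    have h1 : min s (a + b + c) ≤ a + b + c := Nat.min_le_right _ _
    have h2 : ((min s (a + b + c) : ℕ) : ℤ) ≤ ((a + b + c : ℕ) : ℤ) := by exact_mod_cast h1
    push_cast at h2 ⊢
    omega

lemma W_cnt_even {p : List ℤ} {a b c : ℕ} (hsum : p.sum = 2 * ((a : ℤ) + b + c)) :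
    cnt Even (p ++ Q a b c) (p.length + a + 1 + b + 1) = cnt Even p p.length + a := by
  set W := p ++ Q a b c with hW
  have s1 : cnt Even W p.length = cnt Even p p.length := cnt_prefix _ _ _ _ le_rfl
  have s2 : cnt Even W (p.length + a) = cnt Even W p.length + a := by
    apply cnt_all
    intro t ht
    refine ⟨by rw [hW, getD_append_off]; exact Q_getD1 b c ht, ?_⟩
    rw [hW, show p.length + t + 1 = p.length + (t + 1) from by omega, take_sum_off,
      Q_take1 b c (by omega), hsum, Int.even_iff]
    omega
  have s3 : cnt Even W (p.length + a + 1) = cnt Even W (p.length + a) := by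
    apply cnt_none _ _ _ 1
    intro t ht
    have : t = 0 := by omega
    subst this
    rintro ⟨hd, -⟩
    rw [add_zero, hW, getD_append_off, Q_getD2] at hd
    norm_num at hd
  have s4 : cnt Even W (p.length + a + 1 + b) = cnt Even W (p.length + a + 1) := by
    apply cnt_none
    intro t ht
    rintro ⟨-, hev⟩
    rw [hW, show p.length + a + 1 + t + 1 = p.length + (a + 1 + (t + 1)) from by omega,
      take_sum_off, Q_take2 a c (by omega), hsum, Int.even_iff] at hev
    omega
  have s5 : cnt Even W (p.length + a + 1 + b + 1) = cnt Even W (p.length + a + 1 + b) := by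
    apply cnt_none _ _ _ 1
    intro t ht
    have : t = 0 := by omega
    subst this
    rintro ⟨hd, -⟩
    rw [add_zero, hW, show p.length + a + 1 + b = p.length + (a + 1 + b) from by omega,
      getD_append_off, Q_getD4] at hd
    norm_num at hd
  omega

lemma W_cnt_odd {p : List ℤ} {a b c : ℕ} (hsum : p.sum = 2 * ((a : ℤ) + b + c)) :
    cnt Odd (p ++ Q a b c) (p.length + a + 1 + b + 1) = cnt Odd p p.length + b := by
  set W := p ++ Q a b c with hW
  have s1 : cnt Odd W p.length = cnt Odd p p.length := cnt_prefix _ _ _ _ le_rfl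
  have s2 : cnt Odd W (p.length + a) = cnt Odd W p.length := by
    apply cnt_none
    intro t ht
    rintro ⟨-, hod⟩
    rw [hW, show p.length + t + 1 = p.length + (t + 1) from by omega, take_sum_off,
      Q_take1 b c (by omega), hsum, Int.odd_iff] at hod
    omega
  have s3 : cnt Odd W (p.length + a + 1) = cnt Odd W (p.length + a) := by
    apply cnt_none _ _ _ 1
    intro t ht
    have : t = 0 := by omega
    subst this
    rintro ⟨hd, -⟩
    rw [add_zero, hW, getD_append_off, Q_getD2] at hd
    norm_num at hd
  have s4 : cnt Odd W (p.length + a + 1 + b) = cnt Odd W (p.length + a + 1) + b := by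
    apply cnt_all
    intro t ht
    refine ⟨?_, ?_⟩
    · rw [hW, show p.length + a + 1 + t = p.length + (a + 1 + t) from by omega, getD_append_off]
      exact Q_getD3 a c ht
    · rw [hW, show p.length + a + 1 + t + 1 = p.length + (a + 1 + (t + 1)) from by omega,
        take_sum_off, Q_take2 a c (by omega), hsum, Int.odd_iff]
      omega
  have s5 : cnt Odd W (p.length + a + 1 + b + 1) = cnt Odd W (p.length + a + 1 + b) := by
    apply cnt_none _ _ _ 1
    intro t ht
    have : t = 0 := by omega
    subst this
    rintro ⟨hd, -⟩
    rw [add_zero, hW, show p.length + a + 1 + b = p.length + (a + 1 + b) from by omega,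
      getD_append_off, Q_getD4] at hd
    norm_num at hd
  omega

lemma W'_cnt (P : ℤ → Prop) [DecidablePred P] (p : List ℤ) (m : ℕ) :
    cnt P (p ++ rep m) p.length = cnt P p p.length :=
  cnt_prefix _ _ _ _ le_rfl

/-! ### Forward and backward decomposition -/

lemma strip_last_one {w : List ℤ} (halpha : ∀ x ∈ w, x = 1 ∨ x = -2)
    (hne : w.take (w.length - trun w) ≠ []) :
    (w.take (w.length - trun w)).getLast? = some 1 := by
  rcases strip_last w with h | h
  · exact absurd h hne
  · have hmem : (w.take (w.length - trun w)).getLast hne ∈ w :=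
      List.take_subset _ _ (List.getLast_mem hne)
    have heq := List.getLast?_eq_getLast hne
    rcases halpha _ hmem with h1 | h1
    · rw [heq, h1]
    · exact absurd (heq.trans (by rw [h1])) h

lemma fwd {n k l i j : ℕ} (hn : 2 ≤ n) (hkl : k + l < n) (hik : i ≤ k) (hjl : j ≤ l)
    {w' : List ℤ} (hw' : w' ∈ S (n - 1) i j) :
    (w'.take (w'.length - trun w')).getLast? = some 1 ∧
    w' = w'.take (w'.length - trun w') ++ rep ((k - i) + (l - j) + (n - 1 - k - l)) ∧
    (w'.take (w'.length - trun w') ++ Q (k - i) (l - j) (n - 1 - k - l)) ∈ S n k l := by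
  obtain ⟨hlen, halpha, hpre, hsum, hk, hl⟩ := hw'
  obtain ⟨ht1, ht2⟩ := mem_S_struct (by omega) ⟨hlen, halpha, hpre, hsum, hk, hl⟩
  have htle := trun_le w'
  set a := k - i with hadef
  set b := l - j with hbdef
  set c := n - 1 - k - l with hcdef
  set p := w'.take (w'.length - trun w') with hp
  have hpeel := peel w'
  rw [← hp] at hpeel
  have habc : trun w' = a + b + c := by omega
  have hplen : p.length = 3 * (n - 1) - trun w' := by
    rw [hp, List.length_take, hlen]
    omega
  have hpne : p ≠ [] := by
    intro h
    rw [h] at hplen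
    simp at hplen
    omega
  have hlast : p.getLast? = some 1 := strip_last_one halpha hpne
  have hpalpha : ∀ x ∈ p, x = 1 ∨ x = -2 := fun x hx => halpha x (List.take_subset _ _ hx)
  have hppre : ∀ jj : ℕ, 0 ≤ (p.take jj).sum := by
    intro jj
    rw [hp, List.take_take]
    exact hpre _
  have hpsum : p.sum = 2 * ((a : ℤ) + b + c) := by
    have h0 := congrArg List.sum hpeel
    rw [hsum, List.sum_append, sum_rep, habc] at h0
    push_cast at h0 ⊢
    omega
  have hmm : w'.length - trun w' = p.length := by omega
  have hiEq : cnt Even p p.length = i := by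
    rw [← hk, hmm]
    conv_rhs => rw [hpeel]
    rw [habc, W'_cnt]
  have hjEq : cnt Odd p p.length = j := by
    rw [← hl, hmm]
    conv_rhs => rw [hpeel]
    rw [habc, W'_cnt]
  refine ⟨hlast, by rw [← habc]; exact hpeel, ?_, W_alpha hpalpha _ _ _,
    W_pre hppre hpsum, W_sum hpsum, ?_, ?_⟩
  · rw [W_len]
    omega
  · have hm : (p ++ Q a b c).length - trun (p ++ Q a b c) = p.length + a + 1 + b + 1 := by
      rw [W_len, W_trun hlast]
      omega
    rw [hm, W_cnt_even hpsum, hiEq]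
    omega
  · have hm : (p ++ Q a b c).length - trun (p ++ Q a b c) = p.length + a + 1 + b + 1 := by
      rw [W_len, W_trun hlast]
      omega
    rw [hm, W_cnt_odd hpsum, hjEq]
    omega

lemma bwd {n k l : ℕ} (hn : 2 ≤ n) (hkl : k + l < n) {w : List ℤ} (hw : w ∈ S n k l) :
    ∃ i j, i ≤ k ∧ j ≤ l ∧ ∃ w' ∈ S (n - 1) i j,
      w = (w'.take (w'.length - trun w')) ++ Q (k - i) (l - j) (n - 1 - k - l) := by
  obtain ⟨hlen, halpha, hpre, hsum, hk, hl⟩ := hw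
  obtain ⟨ht1, ht2⟩ := mem_S_struct (by omega) ⟨hlen, halpha, hpre, hsum, hk, hl⟩
  have htle := trun_le w
  obtain ⟨hcp1, hcp2⟩ := count_parts w halpha
  have hc2 : w.count (-2) = n := by rw [hsum] at hcp1; rw [hlen] at hcp2; omega
  have hc1 : w.count 1 = 2 * n := by rw [hsum] at hcp1; rw [hlen] at hcp2; omega
  -- first peel
  set r := trun w with hr
  set P0 := w.take (w.length - r) with hP0
  have hpeel0 := peel w
  rw [← hr, ← hP0] at hpeel0
  have hP0ne : P0 ≠ [] := by
    intro h
    rw [h, List.nil_append] at hpeel0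
    rw [hpeel0, rep, List.count_replicate] at hc1
    simp at hc1
    omega
  have hP0last : P0.getLast? = some 1 := strip_last_one halpha hP0ne
  have hgl0 : P0.getLast hP0ne = 1 :=
    Option.some.inj ((List.getLast?_eq_getLast hP0ne).symm.trans hP0last)
  obtain ⟨X, hX⟩ : ∃ X, P0 = X ++ [1] :=
    ⟨P0.dropLast, by conv_lhs => rw [← List.dropLast_append_getLast hP0ne, hgl0]⟩
  have hXsub : ∀ x ∈ X, x = 1 ∨ x = -2 := by
    intro x hx
    refine halpha x ?_
    rw [hpeel0, hX]
    exact List.mem_append_left _ (List.mem_append_left _ hx)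
  -- second peel
  set b := trun X with hb
  set P1 := X.take (X.length - b) with hP1
  have hpeel1 := peel X
  rw [← hb, ← hP1] at hpeel1
  have hP1ne : P1 ≠ [] := by
    intro h
    rw [h, List.nil_append] at hpeel1
    have hwform : w = (rep b ++ [1]) ++ rep r := by rw [hpeel0, hX, hpeel1]
    rw [hwform] at hc1
    simp [rep, List.count_append, List.count_replicate] at hc1
    omega
  have hP1last : P1.getLast? = some 1 := strip_last_one hXsub hP1ne
  have hgl1 : P1.getLast hP1ne = 1 :=
    Option.some.inj ((List.getLast?_eq_getLast hP1ne).symm.trans hP1last)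
  obtain ⟨Y, hY⟩ : ∃ Y, P1 = Y ++ [1] :=
    ⟨P1.dropLast, by conv_lhs => rw [← List.dropLast_append_getLast hP1ne, hgl1]⟩
  have hYsub : ∀ x ∈ Y, x = 1 ∨ x = -2 := by
    intro x hx
    refine hXsub x ?_
    rw [hpeel1, hY]
    exact List.mem_append_left _ (List.mem_append_left _ hx)
  -- third peel
  set a := trun Y with ha
  set p := Y.take (Y.length - a) with hpp
  have hpeel2 := peel Y
  rw [← ha, ← hpp] at hpeel2
  have hpne : p ≠ [] := by
    intro h
    rw [h, List.nil_append] at hpeel2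
    have hwform : w = ((((rep a ++ [1]) ++ rep b) ++ [1]) ++ rep r) := by
      rw [hpeel0, hX, hpeel1, hY, hpeel2]
    rw [hwform] at hc1
    simp [rep, List.count_append, List.count_replicate] at hc1
    omega
  have hplast : p.getLast? = some 1 := strip_last_one hYsub hpne
  -- assemble
  have hrc : r = (r - 1) + 1 := by omega
  have hwQ : w = p ++ Q a b (r - 1) := by
    rw [hpeel0, hX, hpeel1, hY, hpeel2]
    rw [show rep r = rep ((r - 1) + 1) from by rw [← hrc]]
    simp [Q, List.append_assoc]
  have hpalpha : ∀ x ∈ p, x = 1 ∨ x = -2 := fun x hx => hYsub x (List.take_subset _ _ hx)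
  have hppre : ∀ jj : ℕ, 0 ≤ (p.take jj).sum := by
    intro jj
    rcases le_or_gt jj p.length with hj | hj
    · have h0 := hpre jj
      rw [hwQ, List.take_append_of_le_length hj] at h0
      exact h0
    · rw [List.take_of_length_le (by omega)]
      have h0 := hpre p.length
      rw [hwQ, List.take_append_of_le_length le_rfl, List.take_length] at h0
      exact h0
  have hpsum : p.sum = 2 * ((a : ℤ) + b + (r - 1 : ℕ)) := by
    have h0 := congrArg List.sum hwQ
    rw [hsum, List.sum_append, Q_sum] at h0
    omega
  have hwlen : w.length = p.length + (a + b + (r - 1)) + 3 := by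
    rw [hwQ, W_len]
  have hmw : w.length - trun w = p.length + a + 1 + b + 1 := by
    rw [← hr]
    omega
  rw [hmw, hwQ, W_cnt_even hpsum] at hk
  rw [hmw, hwQ, W_cnt_odd hpsum] at hl
  refine ⟨cnt Even p p.length, cnt Odd p p.length, by omega, by omega, p ++ rep (a + b + (r - 1)),
    ⟨?_, W'_alpha hpalpha _, W'_pre hppre hpsum, W'_sum hpsum, ?_, ?_⟩, ?_⟩
  · rw [List.length_append, length_rep]
    rw [hlen] at hwlen
    omega
  · have hm' : (p ++ rep (a + b + (r - 1))).length - trun (p ++ rep (a + b + (r - 1)))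
        = p.length := by
      rw [List.length_append, length_rep, W'_trun hplast]
      omega
    rw [hm', W'_cnt]
  · have hm' : (p ++ rep (a + b + (r - 1))).length - trun (p ++ rep (a + b + (r - 1)))
        = p.length := by
      rw [List.length_append, length_rep, W'_trun hplast]
      omega
    rw [hm', W'_cnt]
  · have hstr : (p ++ rep (a + b + (r - 1))).take
        ((p ++ rep (a + b + (r - 1))).length - trun (p ++ rep (a + b + (r - 1)))) = p :=
      W'_strip hplast _
    rw [hstr]
    have hae : k - cnt Even p p.length = a := by omega
    have hbe : l - cnt Odd p p.length = b := by omega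
    have hce : n - 1 - k - l = r - 1 := by omega
    rw [hae, hbe, hce]
    exact hwQ

lemma rec_eq {p₁ p₂ : List ℤ} {a₁ a₂ b₁ b₂ : ℕ} {c : ℕ}
    (h₁ : p₁.getLast? = some 1) (h₂ : p₂.getLast? = some 1)
    (heq : p₁ ++ Q a₁ b₁ c = p₂ ++ Q a₂ b₂ c) :
    p₁ = p₂ ∧ a₁ = a₂ ∧ b₁ = b₂ := by
  have hs := congrArg (fun z : List ℤ => z.take (z.length - trun z)) heq
  rw [W_strip h₁, W_strip h₂] at hs
  have hd := congrArg List.dropLast hs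
  rw [List.dropLast_concat, List.dropLast_concat] at hd
  have hbt : b₁ = b₂ := by
    have h3 := congrArg trun hd
    rwa [trun_append_rep (Or.inr (by rw [List.getLast?_concat]; norm_num)),
      trun_append_rep (Or.inr (by rw [List.getLast?_concat]; norm_num))] at h3
  subst hbt
  have hs2 := congrArg (fun z : List ℤ => z.take (z.length - trun z)) hd
  rw [strip_append_rep (Or.inr (by rw [List.getLast?_concat]; norm_num)),
    strip_append_rep (Or.inr (by rw [List.getLast?_concat]; norm_num))] at hs2
  have hd2 := congrArg List.dropLast hs2
  rw [List.dropLast_concat, List.dropLast_concat] at hd2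
  have hat : a₁ = a₂ := by
    have h3 := congrArg trun hd2
    rwa [trun_append_rep (Or.inr (by rw [h₁]; norm_num)),
      trun_append_rep (Or.inr (by rw [h₂]; norm_num))] at h3
  subst hat
  have hp : p₁ = p₂ := by
    have h3 := congrArg (fun z : List ℤ => z.take (z.length - trun z)) hd2
    rwa [strip_append_rep (Or.inr (by rw [h₁]; norm_num)),
      strip_append_rep (Or.inr (by rw [h₂]; norm_num))] at h3
  exact ⟨hp, rfl, rfl⟩

lemma S_finite (n k l : ℕ) : (S n k l).Finite := by
  haveI : Finite {x : ℤ // x = 1 ∨ x = -2} := by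
    have hfin : ({1, -2} : Set ℤ).Finite := (Set.finite_singleton _).insert _
    have heq : {x : ℤ | x = 1 ∨ x = -2} = ({1, -2} : Set ℤ) := by
      ext x; simp [Set.mem_insert_iff]
    exact (heq ▸ hfin).to_subtype
  have hsub : S n k l ⊆ (fun t : List {x : ℤ // x = 1 ∨ x = -2} => t.map Subtype.val) ''
      {t | t.length = 3 * n} := by
    rintro w ⟨hlen, halpha, -⟩
    refine ⟨w.attach.map (fun x => ⟨x.1, halpha x.1 x.2⟩), by simp [hlen], ?_⟩
    dsimp only
    rw [List.map_map]
    exact (List.attach_map_val (f := id)).trans (List.map_id w)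
  exact ((List.finite_length_eq _ (3 * n)).image _).subset hsub

lemma S_rec {n k l : ℕ} (hn : 2 ≤ n) (hkl : k + l < n) :
    (S n k l).ncard
      = ∑ i ∈ Finset.range (k + 1), ∑ j ∈ Finset.range (l + 1), (S (n - 1) i j).ncard := by
  classical
  have hfin := S_finite n k l
  have hfin' : ∀ i j, (S (n - 1) i j).Finite := fun i j => S_finite _ i j
  have key : hfin.toFinset = (Finset.range (k + 1) ×ˢ Finset.range (l + 1)).biUnion
      (fun ij => ((hfin' ij.1 ij.2).toFinset).image
        (fun w' => (w'.take (w'.length - trun w')) ++ Q (k - ij.1) (l - ij.2) (n - 1 - k - l))) := by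
    ext w
    simp only [Set.Finite.mem_toFinset, Finset.mem_biUnion, Finset.mem_product,
      Finset.mem_range, Finset.mem_image, Set.Finite.mem_toFinset]
    constructor
    · intro hw
      obtain ⟨i, j, hi, hj, w', hw', hEq⟩ := bwd hn hkl hw
      exact ⟨(i, j), ⟨by omega, by omega⟩, w', hw', hEq.symm⟩
    · rintro ⟨⟨i, j⟩, ⟨hi, hj⟩, w', hw', rfl⟩
      exact (fwd hn hkl (by omega) (by omega) hw').2.2
  have hdisj : ∀ ij₁ ∈ Finset.range (k + 1) ×ˢ Finset.range (l + 1),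
      ∀ ij₂ ∈ Finset.range (k + 1) ×ˢ Finset.range (l + 1), ij₁ ≠ ij₂ →
      Disjoint (((hfin' ij₁.1 ij₁.2).toFinset).image
          (fun w' => (w'.take (w'.length - trun w')) ++ Q (k - ij₁.1) (l - ij₁.2) (n - 1 - k - l)))
        (((hfin' ij₂.1 ij₂.2).toFinset).image
          (fun w' => (w'.take (w'.length - trun w')) ++ Q (k - ij₂.1) (l - ij₂.2) (n - 1 - k - l))) := by
    rintro ⟨i₁, j₁⟩ h₁ ⟨i₂, j₂⟩ h₂ hne
    simp only [Finset.mem_product, Finset.mem_range] at h₁ h₂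
    rw [Finset.disjoint_left]
    rintro w hw₁ hw₂
    simp only [Finset.mem_image, Set.Finite.mem_toFinset] at hw₁ hw₂
    obtain ⟨w₁, hw₁m, hE₁⟩ := hw₁
    obtain ⟨w₂, hw₂m, hE₂⟩ := hw₂
    have f₁ := fwd hn hkl (by omega) (by omega) hw₁m
    have f₂ := fwd hn hkl (by omega) (by omega) hw₂m
    have hqq := rec_eq f₁.1 f₂.1 (hE₁.trans hE₂.symm)
    have hii : i₁ = i₂ := by have := hqq.2.1; omega
    have hjj : j₁ = j₂ := by have := hqq.2.2; omega
    exact hne (by rw [hii, hjj])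
  rw [Set.ncard_eq_toFinset_card _ hfin, key, Finset.card_biUnion hdisj, Finset.sum_product]
  refine Finset.sum_congr rfl (fun i hi => Finset.sum_congr rfl (fun j hj => ?_))
  rw [Finset.mem_range] at hi hj
  rw [Finset.card_image_of_injOn, Set.ncard_eq_toFinset_card _ (hfin' i j)]
  intro w₁ hw₁ w₂ hw₂ hEq
  rw [Finset.mem_coe, Set.Finite.mem_toFinset] at hw₁ hw₂
  have f₁ := fwd hn hkl (by omega) (by omega) hw₁
  have f₂ := fwd hn hkl (by omega) (by omega) hw₂
  have hqq := rec_eq f₁.1 f₂.1 hEq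
  rw [f₁.2.1, f₂.2.1, hqq.1]

lemma S_one : S 1 0 0 = {([1, 1, -2] : List ℤ)} := by
  ext w
  constructor
  · rintro ⟨hlen, halpha, hpre, hsum, -, -⟩
    have hlen3 : w.length = 3 := by rw [hlen]
    obtain ⟨x, y, z, rfl⟩ : ∃ x y z, w = [x, y, z] := by
      rcases w with _ | ⟨x, _ | ⟨y, _ | ⟨z, _ | t⟩⟩⟩ <;> simp at hlen3
      exact ⟨x, y, z, rfl⟩
    have hx := halpha x (by simp)
    have hy := halpha y (by simp)
    have hz := halpha z (by simp)
    have h1 := hpre 1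
    have h2 := hpre 2
    simp [List.take] at h1 h2
    simp at hsum
    show [x, y, z] = [1, 1, -2]
    rcases hx with rfl | rfl <;> rcases hy with rfl | rfl <;> rcases hz with rfl | rfl <;>
      first
        | rfl
        | (exfalso; omega)
  · rintro rfl
    refine ⟨by norm_num, ?_, ?_, by decide, by decide, by decide⟩
    · intro x hx
      simp at hx
      rcases hx with rfl | rfl <;> norm_num
    · intro j
      rcases j with _ | _ | _ | jj
      · simp
      · decide
      · decide
      · rw [List.take_of_length_le (by simp)]
        decide

end FCT


/-- For `n ≥ 1` and `k + l < n`, `B₃ n k l` counts the 2-Dyck paths of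
length `3n` (sequences of steps `+1` or `-2` with nonnegative partial sums and total
sum `0`) having exactly `k` down steps of even height and exactly `l` down steps of odd
height, where the height of a down step is the partial sum up to and including it, and
the down steps of the maximal final run of consecutive down steps are not counted. -/
theorem fuss_catalan_tetrahedron_counts_two_dyck_paths
    (B₃ : ℕ → ℕ → ℕ → ℕ)
    (hB1 : B₃ 1 0 0 = 1)
    (hrec : ∀ n k l, 1 < n → k + l < n →
      B₃ n k l = ∑ i ∈ Finset.range (k + 1), ∑ j ∈ Finset.range (l + 1), B₃ (n - 1) i j)
    (hzero : ∀ n k l, n ≤ k + l → B₃ n k l = 0) :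
    ∀ n k l : ℕ, 1 ≤ n → k + l < n →
      B₃ n k l = Set.ncard {w : List ℤ |
        w.length = 3 * n ∧
        (∀ x ∈ w, x = 1 ∨ x = -2) ∧
        (∀ j : ℕ, 0 ≤ (w.take j).sum) ∧
        w.sum = 0 ∧
        ((Finset.range (w.length - (w.reverse.takeWhile (fun x => decide (x = -2))).length)).filter
          (fun j => w.getD j 0 = -2 ∧ Even ((w.take (j + 1)).sum))).card = k ∧
        ((Finset.range (w.length - (w.reverse.takeWhile (fun x => decide (x = -2))).length)).filter
          (fun j => w.getD j 0 = -2 ∧ Odd ((w.take (j + 1)).sum))).card = l} := by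
  have main : ∀ n k l : ℕ, 1 ≤ n → k + l < n → B₃ n k l = (FCT.S n k l).ncard := by
    intro n
    induction n with
    | zero => intro k l h1 h2; omega
    | succ m ih =>
      intro k l h1 h2
      rcases Nat.eq_zero_or_pos m with rfl | hm
      · have hk0 : k = 0 := by omega
        have hl0 : l = 0 := by omega
        subst hk0; subst hl0
        rw [hB1, FCT.S_one, Set.ncard_singleton]
      · rw [hrec (m + 1) k l (by omega) h2, FCT.S_rec (by omega) h2]
        simp only [Nat.add_sub_cancel]
        refine Finset.sum_congr rfl fun i hi => Finset.sum_congr rfl fun j hj => ?_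
        rw [Finset.mem_range] at hi hj
        rcases Nat.lt_or_ge (i + j) m with hij | hij
        · exact ih i j (by omega) hij
        · rw [hzero m i j hij, FCT.S_empty (by omega) hij, Set.ncard_empty]
  intro n k l hn h
  exact main n k l hn h
end

section
/- Let B₃ : ℕ → ℕ → ℕ → ℕ satisfy: B₃(1,0,0)=1; for all n>1 and k+l<n, B₃(n,k,l)=∑_{i=0}^{k}∑_{j=0}^{l} B₃(n−1,i,j); and B₃(n,k,l)=0 whenever k+l≥n. Then for all n≥1 and k,l≥0 with k+l<n, B₃(n,k,l) = binom(n+k,k)·binom(n+l−1,l)·(n−k−l)/(n+k); equivalently (n+k)·B₃(n,k,l) = binom(n+k,k)·binom(n+l−1,l)·(n−k−l). -/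
open Finset

private lemma hs1 (n l : ℕ) :
    ∑ j ∈ range (l+1), Nat.choose (n + j - 1) j = Nat.choose (n + l) l := by
  induction l with
  | zero => simp
  | succ l ih =>
    rw [Finset.sum_range_succ, ih, show n + (l+1) - 1 = n + l from by omega,
      show n + (l+1) = (n+l)+1 from rfl, Nat.choose_succ_succ]

private lemma hs2 (n l : ℕ) :
    (n+1) * ∑ j ∈ range (l+1), j * Nat.choose (n + j - 1) j
      = n * l * Nat.choose (n + l) l := by
  induction l with
  | zero => simp
  | succ l ih =>
    rw [Finset.sum_range_succ, Nat.mul_add, ih, show n + (l+1) - 1 = n + l from by omega,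
      show n + (l+1) = (n+l)+1 from rfl, Nat.choose_succ_succ]
    have h2 : Nat.choose (n+l) (l+1) * (l+1) = Nat.choose (n+l) l * n := by
      rw [Nat.choose_succ_right_eq]; congr 1; omega
    zify at h2 ⊢
    linear_combination ((n:ℤ)+1) * h2 - (n:ℤ) * h2

private lemma ch (m k : ℕ) : (m+1+k) * Nat.choose (m+k) k = (m+1) * Nat.choose (m+k+1) k := by
  have h1 : Nat.choose (m+k) k = Nat.choose (m+k) m := by
    rw [← Nat.choose_symm (by omega : m ≤ m + k)]; congr 1; omega
  have h2 : Nat.choose (m+k+1) k = Nat.choose (m+k+1) (m+1) := by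
    rw [← Nat.choose_symm (by omega : m+1 ≤ m + k+1)]; congr 1; omega
  rw [h1, h2, show m+1+k = m+k+1 from by omega]
  have := Nat.add_one_mul_choose_eq (m+k) m
  simpa [Nat.succ_eq_add_one, mul_comm] using this

private lemma key (B₃ : ℕ → ℕ → ℕ → ℕ)
    (hB1 : B₃ 1 0 0 = 1)
    (hrec : ∀ n k l, 1 < n → k + l < n →
      B₃ n k l = ∑ i ∈ Finset.range (k + 1), ∑ j ∈ Finset.range (l + 1), B₃ (n - 1) i j)
    (hzero : ∀ n k l, n ≤ k + l → B₃ n k l = 0) :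
    ∀ n : ℕ, 1 ≤ n → ∀ k l : ℕ, k + l ≤ n →
      (n : ℤ) * B₃ n k l
        = (Nat.choose (n+k-1) k : ℤ) * (Nat.choose (n+l-1) l : ℤ) * ((n:ℤ) - k - l) := by
  intro n
  induction n with
  | zero => omega
  | succ n ih =>
    intro _ k l hkl
    rcases Nat.lt_or_ge (k + l) (n+1) with hlt | hge
    · -- k + l ≤ n
      rcases Nat.eq_zero_or_pos n with hn0 | hn1
      · subst hn0
        obtain ⟨rfl, rfl⟩ : k = 0 ∧ l = 0 := by omega
        norm_num [hB1]
      · have hkl' : k + l ≤ n := by omega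
        rw [hrec (n+1) k l (by omega) (by omega)]
        simp only [Nat.add_sub_cancel]
        have e1 : n + 1 + k - 1 = n + k := by omega
        have e2 : n + 1 + l - 1 = n + l := by omega
        rw [e1, e2]
        have hn : (n : ℤ) ≠ 0 := by exact_mod_cast hn1.ne'
        have hS : (n:ℤ) * ∑ i ∈ range (k+1), ∑ j ∈ range (l+1), (B₃ n i j : ℤ)
            = ∑ i ∈ range (k+1), ∑ j ∈ range (l+1),
                ((Nat.choose (n+i-1) i : ℤ) * (Nat.choose (n+j-1) j : ℤ) * ((n:ℤ) - i - j)) := by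
          rw [Finset.mul_sum]
          refine Finset.sum_congr rfl fun i hi => ?_
          rw [Finset.mul_sum]
          refine Finset.sum_congr rfl fun j hj => ?_
          refine ih hn1 i j ?_
          simp only [Finset.mem_range] at hi hj
          omega
        have hsplit : ∑ i ∈ range (k+1), ∑ j ∈ range (l+1),
              ((Nat.choose (n+i-1) i : ℤ) * (Nat.choose (n+j-1) j : ℤ) * ((n:ℤ) - i - j))
            = (n:ℤ) * (∑ i ∈ range (k+1), (Nat.choose (n+i-1) i : ℤ))
                * (∑ j ∈ range (l+1), (Nat.choose (n+j-1) j : ℤ))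
              - (∑ i ∈ range (k+1), (i:ℤ) * Nat.choose (n+i-1) i)
                * (∑ j ∈ range (l+1), (Nat.choose (n+j-1) j : ℤ))
              - (∑ i ∈ range (k+1), (Nat.choose (n+i-1) i : ℤ))
                * (∑ j ∈ range (l+1), (j:ℤ) * Nat.choose (n+j-1) j) := by
          rw [Finset.mul_sum (a := (n:ℤ)) (s := range (k+1))
            (f := fun i => (Nat.choose (n+i-1) i : ℤ))]
          simp only [Finset.sum_mul_sum]
          rw [← Finset.sum_sub_distrib, ← Finset.sum_sub_distrib]
          refine Finset.sum_congr rfl fun i _ => ?_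
          rw [← Finset.sum_sub_distrib, ← Finset.sum_sub_distrib]
          refine Finset.sum_congr rfl fun j _ => ?_
          ring
        have hPk : ∑ i ∈ range (k+1), (Nat.choose (n+i-1) i : ℤ)
            = (Nat.choose (n+k) k : ℤ) := by exact_mod_cast hs1 n k
        have hPl : ∑ j ∈ range (l+1), (Nat.choose (n+j-1) j : ℤ)
            = (Nat.choose (n+l) l : ℤ) := by exact_mod_cast hs1 n l
        have hRk : ((n:ℤ)+1) * ∑ i ∈ range (k+1), (i:ℤ) * Nat.choose (n+i-1) i
            = (n:ℤ) * k * Nat.choose (n+k) k := by exact_mod_cast hs2 n k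
        have hRl : ((n:ℤ)+1) * ∑ j ∈ range (l+1), (j:ℤ) * Nat.choose (n+j-1) j
            = (n:ℤ) * l * Nat.choose (n+l) l := by exact_mod_cast hs2 n l
        rw [hPk, hPl] at hsplit
        push_cast
        apply mul_left_cancel₀ hn
        linear_combination ((n:ℤ)+1) * hS + ((n:ℤ)+1) * hsplit
          - (Nat.choose (n+l) l : ℤ) * hRk - (Nat.choose (n+k) k : ℤ) * hRl
    · -- k + l = n + 1
      rw [hzero (n+1) k l (by omega)]
      push_cast
      rw [show ((n:ℤ)+1) - k - l = 0 from by push_cast; omega]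
      ring

/-- Explicit formula for `B₃`:
for `n ≥ 1` and `k + l < n`,
`(n + k) * B₃ n k l = binom(n+k, k) * binom(n+l-1, l) * (n - k - l)`. -/
theorem fuss_catalan_tetrahedron_closed_formula
    (B₃ : ℕ → ℕ → ℕ → ℕ)
    (hB1 : B₃ 1 0 0 = 1)
    (hrec : ∀ n k l, 1 < n → k + l < n →
      B₃ n k l = ∑ i ∈ Finset.range (k + 1), ∑ j ∈ Finset.range (l + 1), B₃ (n - 1) i j)
    (hzero : ∀ n k l, n ≤ k + l → B₃ n k l = 0) :
    ∀ n k l : ℕ, 1 ≤ n → k + l < n →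
      (n + k) * B₃ n k l
        = Nat.choose (n + k) k * Nat.choose (n + l - 1) l * (n - k - l) := by
  intro n k l hn hkl
  have hk := key B₃ hB1 hrec hzero n hn k l (by omega)
  obtain ⟨m, rfl⟩ : ∃ m, n = m + 1 := ⟨n - 1, by omega⟩
  have hch := ch m k
  zify at hch
  have e1 : m + 1 + k - 1 = m + k := by omega
  rw [e1] at hk
  have hcast : ((m + 1 - k - l : ℕ) : ℤ) = ((m:ℤ) + 1) - k - l := by push_cast; omega
  zify
  rw [hcast]
  have hmn : ((m:ℤ)+1) ≠ 0 := by positivity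
  apply mul_left_cancel₀ hmn
  have e2 : m + 1 + k = m + k + 1 := by omega
  rw [e2]
  push_cast at hk
  push_cast
  linear_combination ((m:ℤ)+1+k) * hk + ((Nat.choose (m+1+l-1) l : ℤ) * (((m:ℤ)+1) - k - l)) * hch
end

section
/- In the ring of formal power series in three variables t, x, y over ℤ, let F = 1 + ∑_{n≥1, k+l<n} B₃(n,k,l)·t^n·x^k·y^l and G = 1 + ∑_{n≥1, k+l<n} B₃(n,k,l)·t^n·x^{n−l}·y^l, and let G~ denote G with the variables x and y exchanged. Then F = 1 + t·G·G~·F. -/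
open MvPowerSeries Finset

namespace GFaux

/-- the exponent triple (a,b,c) as an element of `Fin 3 →₀ ℕ` -/
noncomputable def mk3 (a b c : ℕ) : Fin 3 →₀ ℕ :=
  Finsupp.single 0 a + Finsupp.single 1 b + Finsupp.single 2 c

/-- the monomial t^a x^b y^c -/
noncomputable def N3 (a b c : ℕ) : MvPowerSeries (Fin 3) ℤ :=
  MvPowerSeries.monomial (mk3 a b c) 1

/-- `DD B 0 = 1`; for r ≥ 1, `DD B r` is the series ∑ B(k+l+r,k,l)·t^(k+l+r)·x^k·y^l -/
noncomputable def DD (B : ℕ → ℕ → ℕ → ℕ) : ℕ → MvPowerSeries (Fin 3) ℤ :=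
  fun r => if r = 0 then 1 else
    (fun d => if d 0 = d 1 + d 2 + r then (B (d 0) (d 1) (d 2) : ℤ) else 0)




@[simp] lemma mk3_apply0 (a b c : ℕ) : mk3 a b c 0 = a := by
  simp [mk3, Finsupp.single_apply]

@[simp] lemma mk3_apply1 (a b c : ℕ) : mk3 a b c 1 = b := by
  simp [mk3, Finsupp.single_apply]

@[simp] lemma mk3_apply2 (a b c : ℕ) : mk3 a b c 2 = c := by
  simp [mk3, Finsupp.single_apply]

lemma eq_mk3 (d : Fin 3 →₀ ℕ) : d = mk3 (d 0) (d 1) (d 2) := by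
  ext i
  fin_cases i <;> simp

lemma mk3_eq_mk3_iff {a b c a' b' c' : ℕ} :
    mk3 a b c = mk3 a' b' c' ↔ a = a' ∧ b = b' ∧ c = c' := by
  constructor
  · intro h
    refine ⟨?_, ?_, ?_⟩
    · have := DFunLike.congr_fun h 0; simpa using this
    · have := DFunLike.congr_fun h 1; simpa using this
    · have := DFunLike.congr_fun h 2; simpa using this
  · rintro ⟨rfl, rfl, rfl⟩; rfl

@[simp] lemma mk3_eq_zero_iff {a b c : ℕ} : mk3 a b c = 0 ↔ a = 0 ∧ b = 0 ∧ c = 0 := by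
  have h0 : (0 : Fin 3 →₀ ℕ) = mk3 0 0 0 := by simp [mk3]
  rw [h0, mk3_eq_mk3_iff]

lemma mk3_le_iff {a b c : ℕ} {d : Fin 3 →₀ ℕ} :
    mk3 a b c ≤ d ↔ a ≤ d 0 ∧ b ≤ d 1 ∧ c ≤ d 2 := by
  rw [Finsupp.le_def]
  constructor
  · intro h
    exact ⟨by simpa using h 0, by simpa using h 1, by simpa using h 2⟩
  · rintro ⟨h0, h1, h2⟩ i
    fin_cases i <;> simpa

lemma sub_mk3 (a b c : ℕ) (d : Fin 3 →₀ ℕ) :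
    d - mk3 a b c = mk3 (d 0 - a) (d 1 - b) (d 2 - c) := by
  ext i
  fin_cases i <;> simp [Finsupp.tsub_apply]

variable (B : ℕ → ℕ → ℕ → ℕ)

@[simp] lemma DD_zero : DD B 0 = 1 := if_pos rfl

lemma coeff_DD_pos {r : ℕ} (hr : r ≠ 0) (d : Fin 3 →₀ ℕ) :
    MvPowerSeries.coeff d (DD B r) =
      if d 0 = d 1 + d 2 + r then (B (d 0) (d 1) (d 2) : ℤ) else 0 := by
  have hDD : DD B r = (fun d => if d 0 = d 1 + d 2 + r then (B (d 0) (d 1) (d 2) : ℤ) else 0) :=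
    if_neg hr
  rw [hDD]; rfl

lemma coeff_N3_mul (a b c : ℕ) (φ : MvPowerSeries (Fin 3) ℤ) (d : Fin 3 →₀ ℕ) :
    MvPowerSeries.coeff d (N3 a b c * φ) =
      if a ≤ d 0 ∧ b ≤ d 1 ∧ c ≤ d 2 then
        MvPowerSeries.coeff (mk3 (d 0 - a) (d 1 - b) (d 2 - c)) φ else 0 := by
  rw [N3, MvPowerSeries.coeff_monomial_mul, sub_mk3]
  by_cases h : mk3 a b c ≤ d
  · rw [if_pos h, if_pos (mk3_le_iff.mp h), one_mul]
  · rw [if_neg h, if_neg (fun hc => h (mk3_le_iff.mpr hc))]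
lemma factR (hB1 : B 1 0 0 = 1)
    (hrec : ∀ n k l, 1 < n → k + l < n →
      B n k l = ∑ i ∈ Finset.range (k + 1), ∑ j ∈ Finset.range (l + 1), B (n - 1) i j)
    (hzero : ∀ n k l, n ≤ k + l → B n k l = 0)
    (r : ℕ) (d : Fin 3 →₀ ℕ) :
    MvPowerSeries.coeff d (DD B (r+1)) =
      ∑ a ∈ Finset.range (d 1 + 1), ∑ b ∈ Finset.range (d 2 + 1),
        MvPowerSeries.coeff d (N3 1 a b * DD B (r + a + b)) := by
  rcases Nat.lt_or_ge (d 0) 1 with h0 | h0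
  · -- d 0 = 0
    rw [coeff_DD_pos B (by omega), if_neg (by omega)]
    symm
    apply Finset.sum_eq_zero; intro a _
    apply Finset.sum_eq_zero; intro b _
    rw [coeff_N3_mul, if_neg (by omega)]
  · by_cases hdiag : d 0 = d 1 + d 2 + (r + 1)
    · -- on the diagonal
      rw [coeff_DD_pos B (by omega), if_pos hdiag]
      rcases Nat.lt_or_ge (d 0) 2 with h1 | h1
      · -- d 0 = 1 : base case
        have hd0 : d 0 = 1 := by omega
        have hd1 : d 1 = 0 := by omega
        have hr : r = 0 := by omega
        have hd2 : d 2 = 0 := by omega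
        rw [hd0, hd1, hd2, hr, hB1]
        rw [Finset.sum_range_one, Finset.sum_range_one]
        rw [coeff_N3_mul, if_pos ⟨by omega, by omega, by omega⟩]
        simp only [Nat.add_zero, DD_zero, MvPowerSeries.coeff_one]
        rw [if_pos (by rw [mk3_eq_zero_iff]; omega)]
        norm_num
      · -- d 0 ≥ 2
        have hterm : ∀ a ∈ Finset.range (d 1 + 1), ∀ b ∈ Finset.range (d 2 + 1),
            MvPowerSeries.coeff d (N3 1 a b * DD B (r + a + b)) =
              (B (d 0 - 1) (d 1 - a) (d 2 - b) : ℤ) := by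
          intro a ha b hb
          rw [Finset.mem_range] at ha hb
          rw [coeff_N3_mul, if_pos ⟨h0, by omega, by omega⟩]
          rcases Nat.eq_zero_or_pos (r + a + b) with hz | hp
          · have hr0 : r = 0 := by omega
            have ha0 : a = 0 := by omega
            have hb0 : b = 0 := by omega
            subst hr0; subst ha0; subst hb0
            simp only [Nat.add_zero, Nat.sub_zero, DD_zero, MvPowerSeries.coeff_one]
            rw [if_neg (by rw [mk3_eq_zero_iff]; omega)]
            have : B (d 0 - 1) (d 1) (d 2) = 0 := hzero _ _ _ (by omega)
            rw [this]; norm_num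
          · rw [coeff_DD_pos B (by omega)]
            rw [if_pos (by simp only [mk3_apply0, mk3_apply1, mk3_apply2]; omega)]
            simp only [mk3_apply0, mk3_apply1, mk3_apply2]
        rw [Finset.sum_congr rfl (fun a ha => Finset.sum_congr rfl (fun b hb => hterm a ha b hb))]
        have h2 := hrec (d 0) (d 1) (d 2) (by omega) (by omega)
        have h2' : (B (d 0) (d 1) (d 2) : ℤ) =
            ∑ i ∈ Finset.range (d 1 + 1), ∑ j ∈ Finset.range (d 2 + 1),
              (B (d 0 - 1) i j : ℤ) := by
          rw [h2]; push_cast; ring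
        rw [h2']
        rw [← Finset.sum_range_reflect (fun i => ∑ j ∈ Finset.range (d 2 + 1),
              (B (d 0 - 1) i j : ℤ)) (d 1 + 1)]
        apply Finset.sum_congr rfl; intro a ha
        rw [Finset.mem_range] at ha
        have e1 : d 1 + 1 - 1 - a = d 1 - a := by omega
        rw [e1]
        rw [← Finset.sum_range_reflect (fun j => (B (d 0 - 1) (d 1 - a) j : ℤ)) (d 2 + 1)]
        apply Finset.sum_congr rfl; intro b hb
        rw [Finset.mem_range] at hb
        have e2 : d 2 + 1 - 1 - b = d 2 - b := by omega
        rw [e2]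
    · -- off the diagonal : both sides vanish
      rw [coeff_DD_pos B (by omega), if_neg hdiag]
      symm
      apply Finset.sum_eq_zero; intro a ha
      apply Finset.sum_eq_zero; intro b hb
      rw [Finset.mem_range] at ha hb
      rw [coeff_N3_mul, if_pos ⟨h0, by omega, by omega⟩]
      rcases Nat.eq_zero_or_pos (r + a + b) with hz | hp
      · have hr0 : r = 0 := by omega
        have ha0 : a = 0 := by omega
        have hb0 : b = 0 := by omega
        subst hr0; subst ha0; subst hb0
        simp only [Nat.add_zero, Nat.sub_zero, DD_zero, MvPowerSeries.coeff_one]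
        rw [if_neg (by rw [mk3_eq_zero_iff]; omega)]
      · rw [coeff_DD_pos B (by omega)]
        rw [if_neg (by simp only [mk3_apply0, mk3_apply1, mk3_apply2]; omega)]
lemma coeff_pow_DD (hB1 : B 1 0 0 = 1)
    (hrec : ∀ n k l, 1 < n → k + l < n →
      B n k l = ∑ i ∈ Finset.range (k + 1), ∑ j ∈ Finset.range (l + 1), B (n - 1) i j)
    (hzero : ∀ n k l, n ≤ k + l → B n k l = 0) :
    ∀ (n r : ℕ) (d : Fin 3 →₀ ℕ), d 1 + d 2 = n →
      MvPowerSeries.coeff d ((DD B 1) ^ r) = MvPowerSeries.coeff d (DD B r) := by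
  intro n
  induction n using Nat.strong_induction_on with
  | _ n ih =>
  intro r
  induction r with
  | zero => intro d hd; rw [pow_zero, DD_zero]
  | succ r ihr =>
  intro d hd
  have E1 : MvPowerSeries.coeff d (DD B (r+1)) =
      ∑ a ∈ Finset.range (d 1 + 1), ∑ b ∈ Finset.range (d 2 + 1),
        MvPowerSeries.coeff d (N3 1 a b * (DD B 1) ^ (r + a + b)) := by
    rw [factR B hB1 hrec hzero r d]
    apply Finset.sum_congr rfl; intro a ha
    apply Finset.sum_congr rfl; intro b hb
    rw [Finset.mem_range] at ha hb
    rw [coeff_N3_mul, coeff_N3_mul]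
    by_cases hg : 1 ≤ d 0 ∧ a ≤ d 1 ∧ b ≤ d 2
    · rw [if_pos hg, if_pos hg]
      rcases Nat.eq_zero_or_pos (a + b) with hz | hp
      · have ha0 : a = 0 := by omega
        have hb0 : b = 0 := by omega
        subst ha0; subst hb0
        exact (ihr (mk3 (d 0 - 1) (d 1 - 0) (d 2 - 0))
          (by simp only [mk3_apply1, mk3_apply2]; omega)).symm
      · exact (ih ((d 1 - a) + (d 2 - b)) (by omega) (r + a + b)
          (mk3 (d 0 - 1) (d 1 - a) (d 2 - b))
          (by simp only [mk3_apply1, mk3_apply2])).symm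
    · rw [if_neg hg, if_neg hg]
  have E2 : MvPowerSeries.coeff d ((DD B 1) ^ (r+1)) =
      ∑ a ∈ Finset.range (d 1 + 1), ∑ b ∈ Finset.range (d 2 + 1),
        MvPowerSeries.coeff d (N3 1 a b * (DD B 1) ^ (r + a + b)) := by
    rw [pow_succ', MvPowerSeries.coeff_mul]
    have step : ∀ p ∈ Finset.HasAntidiagonal.antidiagonal d,
        MvPowerSeries.coeff p.1 (DD B 1) * MvPowerSeries.coeff p.2 ((DD B 1) ^ r) =
          ∑ a ∈ Finset.range (d 1 + 1), ∑ b ∈ Finset.range (d 2 + 1),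
            MvPowerSeries.coeff p.1 (N3 1 a b * (DD B 1) ^ (a + b)) *
              MvPowerSeries.coeff p.2 ((DD B 1) ^ r) := by
      intro p hp
      have hmem : p.1 + p.2 = d := Finset.HasAntidiagonal.mem_antidiagonal.mp hp
      have h1 : p.1 1 ≤ d 1 := by
        rw [← hmem, Finsupp.add_apply]; omega
      have h2 : p.1 2 ≤ d 2 := by
        rw [← hmem, Finsupp.add_apply]; omega
      have key : MvPowerSeries.coeff p.1 (DD B 1) =
          ∑ a ∈ Finset.range (d 1 + 1), ∑ b ∈ Finset.range (d 2 + 1),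
            MvPowerSeries.coeff p.1 (N3 1 a b * (DD B 1) ^ (a + b)) := by
      -- first the truncated version from factR at r = 0
        have k0 := factR B hB1 hrec hzero 0 p.1
        simp only [Nat.zero_add, zero_add] at k0
        -- convert DD (a+b) to powers termwise
        have conv : ∀ a b : ℕ,
            MvPowerSeries.coeff p.1 (N3 1 a b * DD B (a + b)) =
              MvPowerSeries.coeff p.1 (N3 1 a b * (DD B 1) ^ (a + b)) := by
          intro a b
          rcases Nat.eq_zero_or_pos (a + b) with hz | hpos
          · have ha0 : a = 0 := by omega
            have hb0 : b = 0 := by omega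
            subst ha0; subst hb0
            rw [show (0:ℕ) + 0 = 0 from rfl, DD_zero, pow_zero]
          · rw [coeff_N3_mul, coeff_N3_mul]
            by_cases hg : 1 ≤ p.1 0 ∧ a ≤ p.1 1 ∧ b ≤ p.1 2
            · rw [if_pos hg, if_pos hg]
              exact (ih ((p.1 1 - a) + (p.1 2 - b)) (by omega) (a + b)
                (mk3 (p.1 0 - 1) (p.1 1 - a) (p.1 2 - b))
                (by simp only [mk3_apply1, mk3_apply2])).symm
            · rw [if_neg hg, if_neg hg]
        rw [k0]
        -- pad the ranges
        have pad1 : ∀ a : ℕ,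
            ∑ b ∈ Finset.range (p.1 2 + 1),
              MvPowerSeries.coeff p.1 (N3 1 a b * (DD B 1) ^ (a + b)) =
            ∑ b ∈ Finset.range (d 2 + 1),
              MvPowerSeries.coeff p.1 (N3 1 a b * (DD B 1) ^ (a + b)) := by
          intro a
          apply Finset.sum_subset
          · exact Finset.range_subset_range.mpr (by omega)
          · intro b _ hb
            rw [Finset.mem_range, not_lt] at hb
            rw [coeff_N3_mul, if_neg (by omega)]
        calc ∑ a ∈ Finset.range (p.1 1 + 1), ∑ b ∈ Finset.range (p.1 2 + 1),
              MvPowerSeries.coeff p.1 (N3 1 a b * DD B (a + b))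
            = ∑ a ∈ Finset.range (p.1 1 + 1), ∑ b ∈ Finset.range (d 2 + 1),
              MvPowerSeries.coeff p.1 (N3 1 a b * (DD B 1) ^ (a + b)) := by
              apply Finset.sum_congr rfl; intro a _
              rw [← pad1 a]
              apply Finset.sum_congr rfl; intro b _
              exact conv a b
          _ = ∑ a ∈ Finset.range (d 1 + 1), ∑ b ∈ Finset.range (d 2 + 1),
              MvPowerSeries.coeff p.1 (N3 1 a b * (DD B 1) ^ (a + b)) := by
              apply Finset.sum_subset
              · exact Finset.range_subset_range.mpr (by omega)
              · intro a _ ha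
                rw [Finset.mem_range, not_lt] at ha
                apply Finset.sum_eq_zero; intro b _
                rw [coeff_N3_mul, if_neg (by omega)]
      rw [key, Finset.sum_mul]
      apply Finset.sum_congr rfl; intro a _
      rw [Finset.sum_mul]
    rw [Finset.sum_congr rfl step]
    rw [Finset.sum_comm]
    apply Finset.sum_congr rfl; intro a _
    rw [Finset.sum_comm]
    apply Finset.sum_congr rfl; intro b _
    rw [← MvPowerSeries.coeff_mul]
    rw [mul_assoc, ← pow_add]
    have : a + b + r = r + a + b := by omega
    rw [this]
  rw [E2, E1]
lemma mk3_add (a b c a' b' c' : ℕ) :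
    mk3 a b c + mk3 a' b' c' = mk3 (a+a') (b+b') (c+c') := by
  ext i
  fin_cases i <;> simp [Finsupp.add_apply]

lemma N3_mul_N3 (a b c a' b' c' : ℕ) : N3 a b c * N3 a' b' c' = N3 (a+a') (b+b') (c+c') := by
  rw [N3, N3, N3, MvPowerSeries.monomial_mul_monomial, one_mul, mk3_add]

lemma single_eq_mk3_0 (n : ℕ) : Finsupp.single (0 : Fin 3) n = mk3 n 0 0 := by
  ext i
  fin_cases i <;> simp [mk3, Finsupp.single_apply]

lemma single_eq_mk3_1 (n : ℕ) : Finsupp.single (1 : Fin 3) n = mk3 0 n 0 := by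
  ext i
  fin_cases i <;> simp [mk3, Finsupp.single_apply]

lemma single_eq_mk3_2 (n : ℕ) : Finsupp.single (2 : Fin 3) n = mk3 0 0 n := by
  ext i
  fin_cases i <;> simp [mk3, Finsupp.single_apply]

lemma X1_eq : (MvPowerSeries.X 1 : MvPowerSeries (Fin 3) ℤ) = N3 0 1 0 := by
  rw [MvPowerSeries.X, N3, single_eq_mk3_1]

lemma X2_eq : (MvPowerSeries.X 2 : MvPowerSeries (Fin 3) ℤ) = N3 0 0 1 := by
  rw [MvPowerSeries.X, N3, single_eq_mk3_2]

lemma X0_eq : (MvPowerSeries.X 0 : MvPowerSeries (Fin 3) ℤ) = N3 1 0 0 := by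
  rw [MvPowerSeries.X, N3, single_eq_mk3_0]

lemma coeff_N3 (a b c : ℕ) (d : Fin 3 →₀ ℕ) :
    MvPowerSeries.coeff d (N3 a b c) =
      if d 0 = a ∧ d 1 = b ∧ d 2 = c then 1 else 0 := by
  rw [N3, MvPowerSeries.coeff_monomial]
  congr 1
  rw [eq_mk3 d, mk3_eq_mk3_iff]
  simp

/-- The key identity: t = D·(1 - x·D)·(1 - y·D). -/
lemma key_ident (hB1 : B 1 0 0 = 1)
    (hrec : ∀ n k l, 1 < n → k + l < n →
      B n k l = ∑ i ∈ Finset.range (k + 1), ∑ j ∈ Finset.range (l + 1), B (n - 1) i j)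
    (hzero : ∀ n k l, n ≤ k + l → B n k l = 0) :
    (MvPowerSeries.X 0 : MvPowerSeries (Fin 3) ℤ) =
      DD B 1 * (1 - MvPowerSeries.X 1 * DD B 1) * (1 - MvPowerSeries.X 2 * DD B 1) := by
  have p2 : (DD B 1) ^ 2 = DD B 2 :=
    MvPowerSeries.ext fun d => coeff_pow_DD B hB1 hrec hzero (d 1 + d 2) 2 d rfl
  have p3 : (DD B 1) ^ 3 = DD B 3 :=
    MvPowerSeries.ext fun d => coeff_pow_DD B hB1 hrec hzero (d 1 + d 2) 3 d rfl
  have expand : DD B 1 * (1 - MvPowerSeries.X 1 * DD B 1) * (1 - MvPowerSeries.X 2 * DD B 1) =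
      DD B 1 - MvPowerSeries.X 1 * (DD B 1) ^ 2 - MvPowerSeries.X 2 * (DD B 1) ^ 2 +
        MvPowerSeries.X 1 * MvPowerSeries.X 2 * (DD B 1) ^ 3 := by
    ring
  rw [expand, p2, p3]
  apply MvPowerSeries.ext
  intro d
  rw [map_add, map_sub, map_sub]
  rw [X1_eq, X2_eq, N3_mul_N3, coeff_N3_mul, coeff_N3_mul, coeff_N3_mul]
  rw [X0_eq, coeff_N3]
  rw [coeff_DD_pos B one_ne_zero]
  simp only [coeff_DD_pos B (by norm_num : (2:ℕ) ≠ 0),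
    coeff_DD_pos B (by norm_num : (3:ℕ) ≠ 0),
    mk3_apply0, mk3_apply1, mk3_apply2, Nat.sub_zero, zero_add, add_zero]
  by_cases hdiag : d 0 = d 1 + d 2 + 1
  · rcases Nat.eq_zero_or_pos (d 1) with h1 | h1 <;> rcases Nat.eq_zero_or_pos (d 2) with h2 | h2
    · -- d1 = d2 = 0, d0 = 1
      have hB : B (d 0) (d 1) (d 2) = 1 := by
        rw [h1, h2, show d 0 = 1 by omega]; exact hB1
      split_ifs <;> omega
    · -- d1 = 0, d2 ≥ 1 : B(d0,d1,d2) = B(d0,d1,d2-1)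
      have e1 := hrec (d 0) (d 1) (d 2) (by omega) (by omega)
      have e2 := hrec (d 0) (d 1) (d 2 - 1) (by omega) (by omega)
      rw [show d 2 - 1 + 1 = d 2 by omega] at e2
      have e1' : B (d 0) (d 1) (d 2) =
          (∑ i ∈ Finset.range (d 1 + 1), ∑ j ∈ Finset.range (d 2), B (d 0 - 1) i j) +
            ∑ i ∈ Finset.range (d 1 + 1), B (d 0 - 1) i (d 2) := by
        rw [e1, ← Finset.sum_add_distrib]
        apply Finset.sum_congr rfl; intro i _
        rw [Finset.sum_range_succ]
      have hz : ∀ i ∈ Finset.range (d 1 + 1), B (d 0 - 1) i (d 2) = 0 := by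
        intro i hi
        rw [Finset.mem_range] at hi
        exact hzero _ _ _ (by omega)
      rw [Finset.sum_congr rfl hz, Finset.sum_const, smul_eq_mul, mul_zero, add_zero] at e1'
      have key : B (d 0) (d 1) (d 2) = B (d 0) (d 1) (d 2 - 1) := by rw [e1', e2]
      split_ifs <;> omega
    · -- d1 ≥ 1, d2 = 0 : B(d0,d1,d2) = B(d0,d1-1,d2)
      have e1 := hrec (d 0) (d 1) (d 2) (by omega) (by omega)
      have e2 := hrec (d 0) (d 1 - 1) (d 2) (by omega) (by omega)
      rw [show d 1 - 1 + 1 = d 1 by omega] at e2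
      have e1' : B (d 0) (d 1) (d 2) =
          (∑ i ∈ Finset.range (d 1), ∑ j ∈ Finset.range (d 2 + 1), B (d 0 - 1) i j) +
            ∑ j ∈ Finset.range (d 2 + 1), B (d 0 - 1) (d 1) j := by
        rw [e1, Finset.sum_range_succ]
      have hz : ∀ j ∈ Finset.range (d 2 + 1), B (d 0 - 1) (d 1) j = 0 := by
        intro j hj
        rw [Finset.mem_range] at hj
        exact hzero _ _ _ (by omega)
      rw [Finset.sum_congr rfl hz, Finset.sum_const, smul_eq_mul, mul_zero, add_zero] at e1'
      have key : B (d 0) (d 1) (d 2) = B (d 0) (d 1 - 1) (d 2) := by rw [e1', e2]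
      split_ifs <;> omega
    · -- d1 ≥ 1, d2 ≥ 1
      have e1 := hrec (d 0) (d 1) (d 2) (by omega) (by omega)
      have e2 := hrec (d 0) (d 1 - 1) (d 2) (by omega) (by omega)
      have e3 := hrec (d 0) (d 1) (d 2 - 1) (by omega) (by omega)
      have e4 := hrec (d 0) (d 1 - 1) (d 2 - 1) (by omega) (by omega)
      rw [show d 1 - 1 + 1 = d 1 by omega] at e2 e4
      rw [show d 2 - 1 + 1 = d 2 by omega] at e3 e4
      have e1' : B (d 0) (d 1) (d 2) =
          B (d 0) (d 1 - 1) (d 2) + ∑ j ∈ Finset.range (d 2 + 1), B (d 0 - 1) (d 1) j := by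
        rw [e1, Finset.sum_range_succ, e2]
      have e3' : B (d 0) (d 1) (d 2 - 1) =
          B (d 0) (d 1 - 1) (d 2 - 1) + ∑ j ∈ Finset.range (d 2), B (d 0 - 1) (d 1) j := by
        rw [e3, Finset.sum_range_succ, e4]
      have e5 : ∑ j ∈ Finset.range (d 2 + 1), B (d 0 - 1) (d 1) j =
          ∑ j ∈ Finset.range (d 2), B (d 0 - 1) (d 1) j := by
        rw [Finset.sum_range_succ, hzero (d 0 - 1) (d 1) (d 2) (by omega), add_zero]
      have key : B (d 0) (d 1) (d 2) + B (d 0) (d 1 - 1) (d 2 - 1) =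
          B (d 0) (d 1 - 1) (d 2) + B (d 0) (d 1) (d 2 - 1) := by
        rw [e1', e3', e5]; ring
      split_ifs <;> omega
  · split_ifs <;> omega

lemma fin3_eq_zero_iff (d : Fin 3 →₀ ℕ) : d = 0 ↔ d 0 = 0 ∧ d 1 = 0 ∧ d 2 = 0 := by
  constructor
  · intro h; rw [h]; simp
  · intro ⟨h0, h1, h2⟩
    rw [eq_mk3 d, h0, h1, h2]
    rw [mk3_eq_zero_iff]; exact ⟨rfl, rfl, rfl⟩

lemma Bsymm (hrec : ∀ n k l, 1 < n → k + l < n →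
      B n k l = ∑ i ∈ Finset.range (k + 1), ∑ j ∈ Finset.range (l + 1), B (n - 1) i j)
    (hzero : ∀ n k l, n ≤ k + l → B n k l = 0) :
    ∀ n k l, B n k l = B n l k := by
  intro n
  induction n using Nat.strong_induction_on with
  | _ n ih =>
  intro k l
  by_cases h : n ≤ k + l
  · rw [hzero n k l h, hzero n l k (by omega)]
  · rcases Nat.lt_or_ge n 2 with h2 | h2
    · have hk : k = 0 := by omega
      have hl : l = 0 := by omega
      rw [hk, hl]
    · rw [hrec n k l (by omega) (by omega), hrec n l k (by omega) (by omega),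
        Finset.sum_comm]
      apply Finset.sum_congr rfl; intro i _
      apply Finset.sum_congr rfl; intro j _
      exact ih (n-1) (by omega) j i

/-- coefficients of F agree with the geometric partial sum of DD B 1 up to t-degree m -/
lemma coeff_F_part (hB1 : B 1 0 0 = 1)
    (hrec : ∀ n k l, 1 < n → k + l < n →
      B n k l = ∑ i ∈ Finset.range (k + 1), ∑ j ∈ Finset.range (l + 1), B (n - 1) i j)
    (hzero : ∀ n k l, n ≤ k + l → B n k l = 0)
    (F : MvPowerSeries (Fin 3) ℤ)
    (hF : ∀ d : Fin 3 →₀ ℕ, MvPowerSeries.coeff d F =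
      if d = 0 then 1 else
        if d 1 + d 2 < d 0 then (B (d 0) (d 1) (d 2) : ℤ) else 0)
    (m : ℕ) (d : Fin 3 →₀ ℕ) (hd : d 0 ≤ m) :
    MvPowerSeries.coeff d F =
      MvPowerSeries.coeff d (∑ r ∈ Finset.range (m+1), (DD B 1) ^ r) := by
  rw [map_sum, hF]
  have hterm : ∀ r, MvPowerSeries.coeff d ((DD B 1) ^ r) =
      MvPowerSeries.coeff d (DD B r) := fun r =>
    coeff_pow_DD B hB1 hrec hzero (d 1 + d 2) r d rfl
  rw [Finset.sum_congr rfl (fun r _ => hterm r)]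
  by_cases h0 : d = 0
  · rw [if_pos h0]
    rw [Finset.sum_eq_single 0]
    · rw [DD_zero, h0, MvPowerSeries.coeff_one, if_pos rfl]
    · intro r _ hr
      rw [coeff_DD_pos B hr, if_neg (by rw [fin3_eq_zero_iff] at h0; omega)]
    · intro h; exact absurd (Finset.mem_range.mpr (by omega)) h
  · rw [if_neg h0]
    rw [fin3_eq_zero_iff] at h0
    by_cases hlt : d 1 + d 2 < d 0
    · rw [if_pos hlt]
      rw [Finset.sum_eq_single (d 0 - d 1 - d 2)]
      · rw [coeff_DD_pos B (by omega), if_pos (by omega)]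
      · intro r _ hr
        rcases Nat.eq_zero_or_pos r with h | h
        · rw [h, DD_zero, MvPowerSeries.coeff_one,
            if_neg (fun hc => h0 ((fin3_eq_zero_iff d).mp hc))]
        · rw [coeff_DD_pos B (by omega), if_neg (by omega)]
      · intro h; exact absurd (Finset.mem_range.mpr (by omega)) h
    · rw [if_neg hlt]
      symm
      apply Finset.sum_eq_zero
      intro r _
      rcases Nat.eq_zero_or_pos r with h | h
      · rw [h, DD_zero, MvPowerSeries.coeff_one,
          if_neg (fun hc => h0 ((fin3_eq_zero_iff d).mp hc))]
      · rw [coeff_DD_pos B (by omega), if_neg (by omega)]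

lemma coeff_G_part (hB1 : B 1 0 0 = 1)
    (hrec : ∀ n k l, 1 < n → k + l < n →
      B n k l = ∑ i ∈ Finset.range (k + 1), ∑ j ∈ Finset.range (l + 1), B (n - 1) i j)
    (hzero : ∀ n k l, n ≤ k + l → B n k l = 0)
    (G : MvPowerSeries (Fin 3) ℤ)
    (hG : ∀ d : Fin 3 →₀ ℕ, MvPowerSeries.coeff d G =
      if d = 0 then 1 else
        if 1 ≤ d 1 ∧ d 0 = d 1 + d 2 then
          ∑ k ∈ Finset.range (d 1), (B (d 0) k (d 2) : ℤ) else 0)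
    (m : ℕ) (d : Fin 3 →₀ ℕ) (hd : d 0 ≤ m) :
    MvPowerSeries.coeff d G =
      MvPowerSeries.coeff d (∑ r ∈ Finset.range (m+1),
        (MvPowerSeries.X 1 * DD B 1) ^ r) := by
  rw [map_sum, hG]
  have hterm : ∀ r, MvPowerSeries.coeff d ((MvPowerSeries.X 1 * DD B 1) ^ r) =
      if r ≤ d 1 ∧ d 0 = d 1 + d 2 ∧ 1 ≤ r then (B (d 0) (d 1 - r) (d 2) : ℤ)
      else if r = 0 ∧ d = 0 then 1 else 0 := by
    intro r
    rcases Nat.eq_zero_or_pos r with h | h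
    · subst h
      rw [pow_zero, MvPowerSeries.coeff_one]
      by_cases h0 : d = 0
      · simp [h0]
      · simp [h0]
    · rw [mul_pow, MvPowerSeries.X_pow_eq, single_eq_mk3_1, ← N3, coeff_N3_mul]
      by_cases hg : r ≤ d 1
      · rw [if_pos ⟨by omega, hg, by omega⟩]
        rw [coeff_pow_DD B hB1 hrec hzero _ r _ rfl, coeff_DD_pos B (by omega)]
        simp only [mk3_apply0, mk3_apply1, mk3_apply2, Nat.sub_zero]
        by_cases hdiag : d 0 = d 1 + d 2
        · rw [if_pos (by omega), if_pos (by omega)]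
        · rw [if_neg (by omega), if_neg (by omega),
            if_neg (fun hc => absurd hc.1 (by omega))]
      · rw [if_neg (by omega), if_neg (by omega),
          if_neg (fun hc => absurd hc.1 (by omega))]
  rw [Finset.sum_congr rfl (fun r _ => hterm r)]
  by_cases h0 : d = 0
  · have h0' := (fin3_eq_zero_iff d).mp h0
    rw [if_pos h0]
    rw [Finset.sum_eq_single 0]
    · rw [if_neg (by omega), if_pos ⟨rfl, h0⟩]
    · intro r _ hr
      rw [if_neg (by omega), if_neg (by simp [hr])]
    · intro h; exact absurd (Finset.mem_range.mpr (by omega)) h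
  · rw [if_neg h0]
    have h0' : ¬ (d 0 = 0 ∧ d 1 = 0 ∧ d 2 = 0) := fun hc => h0 ((fin3_eq_zero_iff d).mpr hc)
    by_cases hcond : 1 ≤ d 1 ∧ d 0 = d 1 + d 2
    · rw [if_pos hcond]
      rw [Finset.sum_range_succ']
      have hz0 : (if (0:ℕ) ≤ d 1 ∧ d 0 = d 1 + d 2 ∧ 1 ≤ (0:ℕ) then (B (d 0) (d 1 - 0) (d 2) : ℤ)
          else if (0:ℕ) = 0 ∧ d = 0 then 1 else 0) = 0 := by
        rw [if_neg (by omega), if_neg (by simp [h0])]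
      rw [hz0, add_zero]
      have hsub : ∑ i ∈ Finset.range m,
          (if i + 1 ≤ d 1 ∧ d 0 = d 1 + d 2 ∧ 1 ≤ i + 1 then (B (d 0) (d 1 - (i+1)) (d 2) : ℤ)
            else if i + 1 = 0 ∧ d = 0 then 1 else 0) =
          ∑ i ∈ Finset.range (d 1),
          (if i + 1 ≤ d 1 ∧ d 0 = d 1 + d 2 ∧ 1 ≤ i + 1 then (B (d 0) (d 1 - (i+1)) (d 2) : ℤ)
            else if i + 1 = 0 ∧ d = 0 then 1 else 0) := by
        symm
        apply Finset.sum_subset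
        · exact Finset.range_subset_range.mpr (by omega)
        · intro i _ hi
          rw [Finset.mem_range, not_lt] at hi
          rw [if_neg (by omega), if_neg (by omega)]
      rw [hsub]
      have hval : ∀ i ∈ Finset.range (d 1),
          (if i + 1 ≤ d 1 ∧ d 0 = d 1 + d 2 ∧ 1 ≤ i + 1 then (B (d 0) (d 1 - (i+1)) (d 2) : ℤ)
            else if i + 1 = 0 ∧ d = 0 then 1 else 0) = (B (d 0) (d 1 - 1 - i) (d 2) : ℤ) := by
        intro i hi
        rw [Finset.mem_range] at hi
        rw [if_pos ⟨by omega, hcond.2, by omega⟩]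
        congr 2
        omega
      rw [Finset.sum_congr rfl hval]
      exact (Finset.sum_range_reflect (fun k => (B (d 0) k (d 2) : ℤ)) (d 1)).symm
    · rw [if_neg hcond]
      symm
      apply Finset.sum_eq_zero
      intro r _
      rw [if_neg (by omega), if_neg (by simp [h0])]

lemma coeff_G'_part (hB1 : B 1 0 0 = 1)
    (hrec : ∀ n k l, 1 < n → k + l < n →
      B n k l = ∑ i ∈ Finset.range (k + 1), ∑ j ∈ Finset.range (l + 1), B (n - 1) i j)
    (hzero : ∀ n k l, n ≤ k + l → B n k l = 0)
    (G' : MvPowerSeries (Fin 3) ℤ)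
    (hG' : ∀ d : Fin 3 →₀ ℕ, MvPowerSeries.coeff d G' =
      if d = 0 then 1 else
        if 1 ≤ d 2 ∧ d 0 = d 1 + d 2 then
          ∑ k ∈ Finset.range (d 2), (B (d 0) k (d 1) : ℤ) else 0)
    (m : ℕ) (d : Fin 3 →₀ ℕ) (hd : d 0 ≤ m) :
    MvPowerSeries.coeff d G' =
      MvPowerSeries.coeff d (∑ r ∈ Finset.range (m+1),
        (MvPowerSeries.X 2 * DD B 1) ^ r) := by
  rw [map_sum, hG']
  have hterm : ∀ r, MvPowerSeries.coeff d ((MvPowerSeries.X 2 * DD B 1) ^ r) =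
      if r ≤ d 2 ∧ d 0 = d 1 + d 2 ∧ 1 ≤ r then (B (d 0) (d 1) (d 2 - r) : ℤ)
      else if r = 0 ∧ d = 0 then 1 else 0 := by
    intro r
    rcases Nat.eq_zero_or_pos r with h | h
    · subst h
      rw [pow_zero, MvPowerSeries.coeff_one]
      by_cases h0 : d = 0
      · simp [h0]
      · simp [h0]
    · rw [mul_pow, MvPowerSeries.X_pow_eq, single_eq_mk3_2, ← N3, coeff_N3_mul]
      by_cases hg : r ≤ d 2
      · rw [if_pos ⟨by omega, by omega, hg⟩]
        rw [coeff_pow_DD B hB1 hrec hzero _ r _ rfl, coeff_DD_pos B (by omega)]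
        simp only [mk3_apply0, mk3_apply1, mk3_apply2, Nat.sub_zero]
        by_cases hdiag : d 0 = d 1 + d 2
        · rw [if_pos (by omega), if_pos (by omega)]
        · rw [if_neg (by omega), if_neg (by omega),
            if_neg (fun hc => absurd hc.1 (by omega))]
      · rw [if_neg (by omega), if_neg (by omega),
          if_neg (fun hc => absurd hc.1 (by omega))]
  rw [Finset.sum_congr rfl (fun r _ => hterm r)]
  by_cases h0 : d = 0
  · have h0' := (fin3_eq_zero_iff d).mp h0
    rw [if_pos h0]
    rw [Finset.sum_eq_single 0]
    · rw [if_neg (by omega), if_pos ⟨rfl, h0⟩]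
    · intro r _ hr
      rw [if_neg (by omega), if_neg (by simp [hr])]
    · intro h; exact absurd (Finset.mem_range.mpr (by omega)) h
  · rw [if_neg h0]
    have h0' : ¬ (d 0 = 0 ∧ d 1 = 0 ∧ d 2 = 0) := fun hc => h0 ((fin3_eq_zero_iff d).mpr hc)
    by_cases hcond : 1 ≤ d 2 ∧ d 0 = d 1 + d 2
    · rw [if_pos hcond]
      rw [Finset.sum_range_succ']
      have hz0 : (if (0:ℕ) ≤ d 2 ∧ d 0 = d 1 + d 2 ∧ 1 ≤ (0:ℕ) then (B (d 0) (d 1) (d 2 - 0) : ℤ)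
          else if (0:ℕ) = 0 ∧ d = 0 then 1 else 0) = 0 := by
        rw [if_neg (by omega), if_neg (by simp [h0])]
      rw [hz0, add_zero]
      have hsub : ∑ i ∈ Finset.range m,
          (if i + 1 ≤ d 2 ∧ d 0 = d 1 + d 2 ∧ 1 ≤ i + 1 then (B (d 0) (d 1) (d 2 - (i+1)) : ℤ)
            else if i + 1 = 0 ∧ d = 0 then 1 else 0) =
          ∑ i ∈ Finset.range (d 2),
          (if i + 1 ≤ d 2 ∧ d 0 = d 1 + d 2 ∧ 1 ≤ i + 1 then (B (d 0) (d 1) (d 2 - (i+1)) : ℤ)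
            else if i + 1 = 0 ∧ d = 0 then 1 else 0) := by
        symm
        apply Finset.sum_subset
        · exact Finset.range_subset_range.mpr (by omega)
        · intro i _ hi
          rw [Finset.mem_range, not_lt] at hi
          rw [if_neg (by omega), if_neg (by omega)]
      rw [hsub]
      have hval : ∀ i ∈ Finset.range (d 2),
          (if i + 1 ≤ d 2 ∧ d 0 = d 1 + d 2 ∧ 1 ≤ i + 1 then (B (d 0) (d 1) (d 2 - (i+1)) : ℤ)
            else if i + 1 = 0 ∧ d = 0 then 1 else 0) = (B (d 0) (d 2 - 1 - i) (d 1) : ℤ) := by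
        intro i hi
        rw [Finset.mem_range] at hi
        rw [if_pos ⟨by omega, hcond.2, by omega⟩]
        rw [Bsymm B hrec hzero]
        congr 2
        omega
      rw [Finset.sum_congr rfl hval]
      exact (Finset.sum_range_reflect (fun k => (B (d 0) k (d 1) : ℤ)) (d 2)).symm
    · rw [if_neg hcond]
      symm
      apply Finset.sum_eq_zero
      intro r _
      rw [if_neg (by omega), if_neg (by simp [h0])]

lemma coeff_mul_congr (P Q Z : MvPowerSeries (Fin 3) ℤ) (d : Fin 3 →₀ ℕ)
    (h : ∀ u : Fin 3 →₀ ℕ, u 0 ≤ d 0 → MvPowerSeries.coeff u P = MvPowerSeries.coeff u Q) :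
    MvPowerSeries.coeff d (P * Z) = MvPowerSeries.coeff d (Q * Z) := by
  rw [MvPowerSeries.coeff_mul, MvPowerSeries.coeff_mul]
  apply Finset.sum_congr rfl
  intro p hp
  have hmem : p.1 + p.2 = d := Finset.HasAntidiagonal.mem_antidiagonal.mp hp
  have hle : p.1 0 ≤ d 0 := by
    rw [← hmem, Finsupp.add_apply]; omega
  rw [h p.1 hle]

/-- coefficients of (X i * DD B 1)^(m+1) * W vanish in t-degrees ≤ m -/
lemma coeff_junk_vanish (hB1 : B 1 0 0 = 1)
    (hrec : ∀ n k l, 1 < n → k + l < n →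
      B n k l = ∑ i ∈ Finset.range (k + 1), ∑ j ∈ Finset.range (l + 1), B (n - 1) i j)
    (hzero : ∀ n k l, n ≤ k + l → B n k l = 0)
    (i : Fin 3) (hi : i = 1 ∨ i = 2)
    (W : MvPowerSeries (Fin 3) ℤ) (m : ℕ) (d : Fin 3 →₀ ℕ) (hd : d 0 ≤ m) :
    MvPowerSeries.coeff d ((MvPowerSeries.X i * DD B 1) ^ (m+1) * W) = 0 := by
  have h0 : MvPowerSeries.coeff d (((0 : MvPowerSeries (Fin 3) ℤ)) * W) = 0 := by
    rw [zero_mul, map_zero]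
  rw [← h0]
  apply coeff_mul_congr
  intro u hu
  rw [map_zero]
  rcases hi with hi | hi <;> subst hi
  · rw [mul_pow, MvPowerSeries.X_pow_eq, single_eq_mk3_1, ← N3, coeff_N3_mul]
    by_cases hg : 0 ≤ u 0 ∧ m + 1 ≤ u 1 ∧ 0 ≤ u 2
    · rw [if_pos hg]
      rw [coeff_pow_DD B hB1 hrec hzero _ (m+1) _ rfl, coeff_DD_pos B (by omega)]
      rw [if_neg (by simp only [mk3_apply0, mk3_apply1, mk3_apply2]; omega)]
    · rw [if_neg hg]
  · rw [mul_pow, MvPowerSeries.X_pow_eq, single_eq_mk3_2, ← N3, coeff_N3_mul]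
    by_cases hg : 0 ≤ u 0 ∧ 0 ≤ u 1 ∧ m + 1 ≤ u 2
    · rw [if_pos hg]
      rw [coeff_pow_DD B hB1 hrec hzero _ (m+1) _ rfl, coeff_DD_pos B (by omega)]
      rw [if_neg (by simp only [mk3_apply0, mk3_apply1, mk3_apply2]; omega)]
    · rw [if_neg hg]


end GFaux

open GFaux Finset in

/-- With `F = 1 + ∑_{n≥1, k+l<n} B₃(n,k,l) t^n x^k y^l`,
`G = 1 + ∑_{n≥1, k+l<n} B₃(n,k,l) t^n x^{n-l} y^l` and `G'` the series `G` with `x`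
and `y` exchanged (all viewed in `ℤ[[t,x,y]]`, variables indexed `t = X 0`, `x = X 1`,
`y = X 2`), one has `F = 1 + t·G·G'·F`.
The coefficient of `t^a x^b y^c` in `G` is `∑_{k < b} B₃(a,k,c)` when `a = b + c` and
`b ≥ 1` (collecting the monomials `t^n x^{n-l} y^l` over the index `k < n - l`), and
similarly for `G'` with the roles of `x` and `y` exchanged. -/
theorem gf_equation_F
    (B₃ : ℕ → ℕ → ℕ → ℕ)
    (hB1 : B₃ 1 0 0 = 1)
    (hrec : ∀ n k l, 1 < n → k + l < n →
      B₃ n k l = ∑ i ∈ Finset.range (k + 1), ∑ j ∈ Finset.range (l + 1), B₃ (n - 1) i j)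
    (hzero : ∀ n k l, n ≤ k + l → B₃ n k l = 0)
    (F G G' : MvPowerSeries (Fin 3) ℤ)
    (hF : ∀ d : Fin 3 →₀ ℕ, MvPowerSeries.coeff d F =
      if d = 0 then 1 else
        if d 1 + d 2 < d 0 then (B₃ (d 0) (d 1) (d 2) : ℤ) else 0)
    (hG : ∀ d : Fin 3 →₀ ℕ, MvPowerSeries.coeff d G =
      if d = 0 then 1 else
        if 1 ≤ d 1 ∧ d 0 = d 1 + d 2 then
          ∑ k ∈ Finset.range (d 1), (B₃ (d 0) k (d 2) : ℤ) else 0)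
    (hG' : ∀ d : Fin 3 →₀ ℕ, MvPowerSeries.coeff d G' =
      if d = 0 then 1 else
        if 1 ≤ d 2 ∧ d 0 = d 1 + d 2 then
          ∑ k ∈ Finset.range (d 2), (B₃ (d 0) k (d 1) : ℤ) else 0) :
    F = 1 + (MvPowerSeries.X 0) * G * G' * F := by
  apply MvPowerSeries.ext
  intro d
  -- notation
  set D : MvPowerSeries (Fin 3) ℤ := DD B₃ 1 with hD
  set Fm : MvPowerSeries (Fin 3) ℤ := ∑ r ∈ Finset.range (d 0 + 1), D ^ r with hFm
  set Gm : MvPowerSeries (Fin 3) ℤ :=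
    ∑ r ∈ Finset.range (d 0 + 1), (MvPowerSeries.X 1 * D) ^ r with hGm
  set Gm' : MvPowerSeries (Fin 3) ℤ :=
    ∑ r ∈ Finset.range (d 0 + 1), (MvPowerSeries.X 2 * D) ^ r with hGm'
  -- replace G, G', F by polynomial truncations inside the coefficient
  have e1 : MvPowerSeries.coeff d (MvPowerSeries.X 0 * G * G' * F) =
      MvPowerSeries.coeff d (Fm * (MvPowerSeries.X 0 * Gm * Gm')) := by
    rw [show MvPowerSeries.X 0 * G * G' * F = G * (MvPowerSeries.X 0 * G' * F) by ring]
    rw [coeff_mul_congr G Gm (MvPowerSeries.X 0 * G' * F) d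
      (fun u hu => coeff_G_part B₃ hB1 hrec hzero G hG (d 0) u hu)]
    rw [show Gm * (MvPowerSeries.X 0 * G' * F) = G' * (MvPowerSeries.X 0 * Gm * F) by ring]
    rw [coeff_mul_congr G' Gm' (MvPowerSeries.X 0 * Gm * F) d
      (fun u hu => coeff_G'_part B₃ hB1 hrec hzero G' hG' (d 0) u hu)]
    rw [show Gm' * (MvPowerSeries.X 0 * Gm * F) = F * (MvPowerSeries.X 0 * Gm * Gm') by ring]
    rw [coeff_mul_congr F Fm (MvPowerSeries.X 0 * Gm * Gm') d
      (fun u hu => coeff_F_part B₃ hB1 hrec hzero F hF (d 0) u hu)]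
  -- the key algebraic identity
  have hX0 : (MvPowerSeries.X 0 : MvPowerSeries (Fin 3) ℤ) =
      D * (1 - MvPowerSeries.X 1 * D) * (1 - MvPowerSeries.X 2 * D) :=
    key_ident B₃ hB1 hrec hzero
  have geo1 : (1 - MvPowerSeries.X 1 * D) * Gm = 1 - (MvPowerSeries.X 1 * D) ^ (d 0 + 1) := by
    have h := geom_sum_mul (MvPowerSeries.X 1 * D) (d 0 + 1)
    rw [hGm]
    linear_combination -h
  have geo2 : (1 - MvPowerSeries.X 2 * D) * Gm' = 1 - (MvPowerSeries.X 2 * D) ^ (d 0 + 1) := by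
    have h := geom_sum_mul (MvPowerSeries.X 2 * D) (d 0 + 1)
    rw [hGm']
    linear_combination -h
  have expand : Fm * (MvPowerSeries.X 0 * Gm * Gm') =
      D * Fm +
        ((MvPowerSeries.X 1 * D) ^ (d 0 + 1) *
            (D * Fm * ((MvPowerSeries.X 2 * D) ^ (d 0 + 1) - 1)) +
          (MvPowerSeries.X 2 * D) ^ (d 0 + 1) * (-(D * Fm))) := by
    calc Fm * (MvPowerSeries.X 0 * Gm * Gm')
        = D * ((1 - MvPowerSeries.X 1 * D) * Gm) *
            ((1 - MvPowerSeries.X 2 * D) * Gm') * Fm := by rw [hX0]; ring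
      _ = D * (1 - (MvPowerSeries.X 1 * D) ^ (d 0 + 1)) *
            (1 - (MvPowerSeries.X 2 * D) ^ (d 0 + 1)) * Fm := by rw [geo1, geo2]
      _ = _ := by ring
  have e2 : MvPowerSeries.coeff d (Fm * (MvPowerSeries.X 0 * Gm * Gm')) =
      MvPowerSeries.coeff d (D * Fm) := by
    rw [expand, map_add, map_add]
    rw [coeff_junk_vanish B₃ hB1 hrec hzero 1 (Or.inl rfl) _ (d 0) d le_rfl]
    rw [coeff_junk_vanish B₃ hB1 hrec hzero 2 (Or.inr rfl) _ (d 0) d le_rfl]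
    ring
  -- left-hand side
  have e3 : MvPowerSeries.coeff d F =
      MvPowerSeries.coeff d (D * Fm + 1) := by
    rw [coeff_F_part B₃ hB1 hrec hzero F hF (d 0 + 1) d (by omega)]
    congr 1
    rw [geom_sum_succ]
  rw [e3, map_add, map_add, e1, e2]
  ring
end

section
/- In the ring of formal power series in three variables t, x, y over ℤ, let F = 1 + ∑_{n≥1, k+l<n} B₃(n,k,l)·t^n·x^k·y^l, let G = 1 + ∑_{n≥1, k+l<n} B₃(n,k,l)·t^n·x^{n−l}·y^l, and let G~ denote G with the variables x and y exchanged. Then F·(1 − t·G·G~) = 1, i.e., F is the multiplicative inverse of 1 − t·G·G~. -/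
open Finset MvPowerSeries

namespace GFStatement13

abbrev R3 := MvPowerSeries (Fin 3) ℤ

section Aux
variable (B : ℕ → ℕ → ℕ → ℕ)

/-- integer cast of the array -/
def bz (n k l : ℕ) : ℤ := (B n k l : ℤ)

/-- double partial sum -/
def Tz (n k l : ℕ) : ℤ := ∑ i ∈ range (k+1), ∑ j ∈ range (l+1), bz B n i j

/-- coefficient function of F -/
def fz (n k l : ℕ) : ℤ :=
  if n = 0 ∧ k = 0 ∧ l = 0 then 1 else if k + l < n then bz B n k l else 0

lemma bz_congr {n k l n' k' l' : ℕ} (h1 : n = n') (h2 : k = k') (h3 : l = l') :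
    bz B n k l = bz B n' k' l' := by rw [h1, h2, h3]

lemma fz_congr {n k l n' k' l' : ℕ} (h1 : n = n') (h2 : k = k') (h3 : l = l') :
    fz B n k l = fz B n' k' l' := by rw [h1, h2, h3]

lemma bz_zero (hzero : ∀ n k l, n ≤ k + l → B n k l = 0) {n k l : ℕ} (h : n ≤ k + l) :
    bz B n k l = 0 := by
  simp [bz, hzero n k l h]

lemma bz_one (hB1 : B 1 0 0 = 1) (hzero : ∀ n k l, n ≤ k + l → B n k l = 0) (k l : ℕ) :
    bz B 1 k l = if k = 0 ∧ l = 0 then 1 else 0 := by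
  rcases Nat.eq_zero_or_pos (k + l) with h | h
  · have hk : k = 0 := by omega
    have hl : l = 0 := by omega
    simp [hk, hl, bz, hB1]
  · rw [if_neg (by omega), bz_zero B hzero (by omega)]

lemma bz_eq_T
    (hrec : ∀ n k l, 1 < n → k + l < n →
      B n k l = ∑ i ∈ Finset.range (k + 1), ∑ j ∈ Finset.range (l + 1), B (n - 1) i j)
    {n k l : ℕ} (h2 : 2 ≤ n) (h : k + l < n) :
    bz B n k l = Tz B (n-1) k l := by
  rw [bz, hrec n k l (by omega) h]
  push_cast [Tz, bz]
  rfl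

lemma T_right {n k l : ℕ} (hl : 1 ≤ l) :
    Tz B n k l = Tz B n k (l-1) + ∑ i ∈ range (k+1), bz B n i l := by
  obtain ⟨l', rfl⟩ : ∃ l', l = l' + 1 := ⟨l - 1, by omega⟩
  simp only [Tz, Nat.add_sub_cancel]
  rw [← Finset.sum_add_distrib]
  congr 1; ext i
  rw [Finset.sum_range_succ]

lemma T_left {n k l : ℕ} (hk : 1 ≤ k) :
    Tz B n k l = Tz B n (k-1) l + ∑ j ∈ range (l+1), bz B n k j := by
  obtain ⟨k', rfl⟩ : ∃ k', k = k' + 1 := ⟨k - 1, by omega⟩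
  simp only [Tz, Nat.add_sub_cancel]
  rw [Finset.sum_range_succ]

lemma T_zero_zero {n : ℕ} : Tz B n 0 0 = bz B n 0 0 := by simp [Tz]

lemma TIE (n k l : ℕ) :
    Tz B n k l = (if 1 ≤ k then Tz B n (k-1) l else 0)
      + (if 1 ≤ l then Tz B n k (l-1) else 0)
      - (if 1 ≤ k ∧ 1 ≤ l then Tz B n (k-1) (l-1) else 0)
      + bz B n k l := by
  rcases Nat.eq_zero_or_pos k with hk | hk
  · subst hk
    rcases Nat.eq_zero_or_pos l with hl | hl
    · subst hl; simp [T_zero_zero]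
    · rw [if_neg (by omega), if_pos (by omega : 1 ≤ l), if_neg (by omega), T_right B hl]
      simp
  · rcases Nat.eq_zero_or_pos l with hl | hl
    · subst hl
      rw [if_pos (by omega : 1 ≤ k), if_neg (by omega), if_neg (by omega), T_left B hk]
      simp
    · rw [if_pos (by omega : 1 ≤ k), if_pos (by omega : 1 ≤ l), if_pos ⟨by omega, by omega⟩]
      rw [T_left B hk, T_left B (n := n) (l := l-1) hk]
      have : ∑ j ∈ range (l+1), bz B n k j
          = ∑ j ∈ range (l-1+1), bz B n k j + bz B n k l := by
        obtain ⟨l', rfl⟩ : ∃ l', l = l' + 1 := ⟨l - 1, by omega⟩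
        simp [Finset.sum_range_succ]
      rw [this]; ring

lemma bz_symm (hB1 : B 1 0 0 = 1)
    (hrec : ∀ n k l, 1 < n → k + l < n →
      B n k l = ∑ i ∈ Finset.range (k + 1), ∑ j ∈ Finset.range (l + 1), B (n - 1) i j)
    (hzero : ∀ n k l, n ≤ k + l → B n k l = 0) :
    ∀ n k l, bz B n k l = bz B n l k := by
  intro n
  induction n using Nat.strong_induction_on with
  | _ n ih =>
    intro k l
    rcases le_or_gt n (k + l) with h | h
    · rw [bz_zero B hzero h, bz_zero B hzero (by omega)]
    · rcases Nat.lt_or_ge n 2 with h2 | h2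
      · have hn : n = 1 := by omega
        subst hn
        rw [bz_one B hB1 hzero, bz_one B hB1 hzero]
        simp [and_comm]
      · rw [bz_eq_T B hrec h2 h, bz_eq_T B hrec h2 (by omega)]
        rw [Tz, Tz, Finset.sum_comm]
        apply Finset.sum_congr rfl; intro j _
        apply Finset.sum_congr rfl; intro i _
        exact ih (n-1) (by omega) i j

lemma key1 (hB1 : B 1 0 0 = 1)
    (hrec : ∀ n k l, 1 < n → k + l < n →
      B n k l = ∑ i ∈ Finset.range (k + 1), ∑ j ∈ Finset.range (l + 1), B (n - 1) i j)
    (hzero : ∀ n k l, n ≤ k + l → B n k l = 0)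
    (r k l : ℕ) (hr : 1 ≤ r) :
    bz B (k+l+r) k l = bz B (k+l+r-1) k l
      + (if r = 1 ∧ k = 0 ∧ l = 0 then 1 else 0)
      + (if 1 ≤ k then bz B (k+l+r) (k-1) l else 0)
      + (if 1 ≤ l then bz B (k+l+r) k (l-1) else 0)
      - (if 1 ≤ k ∧ 1 ≤ l then bz B (k+l+r) (k-1) (l-1) else 0) := by
  rcases Nat.lt_or_ge (k+l+r) 2 with h2 | h2
  · have hr1 : r = 1 := by omega
    have hk : k = 0 := by omega
    have hl : l = 0 := by omega
    subst hr1; subst hk; subst hl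
    simp only [if_pos (⟨rfl, rfl, rfl⟩ : 1 = 1 ∧ 0 = 0 ∧ (0:ℕ) = 0),
      if_neg (by omega : ¬ (1:ℕ) ≤ 0)]
    rw [bz_zero B hzero (by omega : (0:ℕ)+0+1-1 ≤ 0 + 0)]
    simp [bz, hB1]
  · rw [bz_eq_T B hrec h2 (by omega), TIE]
    have hite : (if r = 1 ∧ k = 0 ∧ l = 0 then (1:ℤ) else 0) = 0 := if_neg (by omega)
    rw [hite]
    have e2 : (if 1 ≤ k then Tz B (k+l+r-1) (k-1) l else 0)
        = (if 1 ≤ k then bz B (k+l+r) (k-1) l else 0) := by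
      split_ifs with h
      · rw [bz_eq_T B hrec h2 (by omega)]
      · rfl
    have e3 : (if 1 ≤ l then Tz B (k+l+r-1) k (l-1) else 0)
        = (if 1 ≤ l then bz B (k+l+r) k (l-1) else 0) := by
      split_ifs with h
      · rw [bz_eq_T B hrec h2 (by omega)]
      · rfl
    have e4 : (if 1 ≤ k ∧ 1 ≤ l then Tz B (k+l+r-1) (k-1) (l-1) else 0)
        = (if 1 ≤ k ∧ 1 ≤ l then bz B (k+l+r) (k-1) (l-1) else 0) := by
      split_ifs with h
      · rw [bz_eq_T B hrec h2 (by omega)]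
      · rfl
    rw [e2, e3, e4]
    ring

lemma key3 (hB1 : B 1 0 0 = 1)
    (hrec : ∀ n k l, 1 < n → k + l < n →
      B n k l = ∑ i ∈ Finset.range (k + 1), ∑ j ∈ Finset.range (l + 1), B (n - 1) i j)
    (hzero : ∀ n k l, n ≤ k + l → B n k l = 0)
    (k l : ℕ) :
    (if k = 0 ∧ l = 0 then (1:ℤ) else 0)
      + (if 1 ≤ k then ∑ i ∈ range k, bz B (k+l) i l else 0)
    = bz B (k+l+1) k l - (if 1 ≤ l then bz B (k+l+1) k (l-1) else 0) := by
  rcases Nat.eq_zero_or_pos (k+l) with h0 | h0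
  · have hk : k = 0 := by omega
    have hl : l = 0 := by omega
    subst hk; subst hl
    simp [bz, hB1]
  · rw [if_neg (show ¬ (k = 0 ∧ l = 0) by omega)]
    have h11 : k + l + 1 - 1 = k + l := by omega
    have hL : bz B (k+l+1) k l = Tz B (k+l) k l := by
      rw [bz_eq_T B hrec (by omega) (by omega), h11]
    rw [hL]
    rcases Nat.eq_zero_or_pos l with hl | hl
    · subst hl
      rw [if_neg (show ¬ (1:ℕ) ≤ 0 by omega)]
      have : Tz B (k+0) k 0 = ∑ i ∈ range (k+1), bz B k i 0 := by
        simp [Tz]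
      rw [this, Finset.sum_range_succ, bz_zero B hzero (by omega)]
      rw [if_pos (show (1:ℕ) ≤ k by omega)]
      simp
    · rw [if_pos (show (1:ℕ) ≤ l by omega)]
      have hR : bz B (k+l+1) k (l-1) = Tz B (k+l) k (l-1) := by
        rw [bz_eq_T B hrec (by omega) (by omega), h11]
      rw [hR, T_right B (show (1:ℕ) ≤ l by omega)]
      rw [Finset.sum_range_succ, bz_zero B hzero (by omega)]
      rcases Nat.eq_zero_or_pos k with hk | hk
      · subst hk; simp
      · rw [if_pos (show (1:ℕ) ≤ k by omega)]; ring

lemma key4 (hB1 : B 1 0 0 = 1)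
    (hrec : ∀ n k l, 1 < n → k + l < n →
      B n k l = ∑ i ∈ Finset.range (k + 1), ∑ j ∈ Finset.range (l + 1), B (n - 1) i j)
    (hzero : ∀ n k l, n ≤ k + l → B n k l = 0)
    (k l : ℕ) :
    (if k = 0 ∧ l = 0 then (1:ℤ) else 0)
      + (if 1 ≤ l then ∑ i ∈ range l, bz B (k+l) i k else 0)
    = bz B (k+l+1) k l - (if 1 ≤ k then bz B (k+l+1) (k-1) l else 0) := by
  have h := key3 B hB1 hrec hzero l k
  rw [Nat.add_comm l k] at h
  rw [bz_symm B hB1 hrec hzero (k+l+1) l k,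
      bz_symm B hB1 hrec hzero (k+l+1) l (k-1)] at h
  simp only [show (l = 0 ∧ k = 0) ↔ (k = 0 ∧ l = 0) from and_comm] at h
  exact h

lemma key5 (hB1 : B 1 0 0 = 1)
    (hrec : ∀ n k l, 1 < n → k + l < n →
      B n k l = ∑ i ∈ Finset.range (k + 1), ∑ j ∈ Finset.range (l + 1), B (n - 1) i j)
    (hzero : ∀ n k l, n ≤ k + l → B n k l = 0)
    (n k l : ℕ) :
    fz B n k l - (if 1 ≤ k then fz B n (k-1) l else 0)
      - (if 1 ≤ l then fz B n k (l-1) else 0)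
      + (if 1 ≤ k ∧ 1 ≤ l then fz B n (k-1) (l-1) else 0)
      - (if 1 ≤ n then fz B (n-1) k l else 0)
    = (if n = 0 ∧ k = 0 ∧ l = 0 then 1 else 0)
      - (if n = 0 ∧ k = 1 ∧ l = 0 then 1 else 0)
      - (if n = 0 ∧ k = 0 ∧ l = 1 then 1 else 0)
      + (if n = 0 ∧ k = 1 ∧ l = 1 then 1 else 0)
      - (if 1 ≤ k ∧ n = k + l then bz B n (k-1) l else 0)
      - (if 1 ≤ l ∧ n = k + l then bz B n k (l-1) else 0)
      + (if 1 ≤ k ∧ 1 ≤ l ∧ n = k + l then bz B n (k-1) (l-1) else 0)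
      + (if 1 ≤ k ∧ 1 ≤ l ∧ n + 1 = k + l then bz B n (k-1) (l-1) else 0) := by
  rcases Nat.lt_or_ge n 2 with hn | hn2
  · rcases Nat.eq_zero_or_pos n with rfl | hn1
    · have bz0 : ∀ a c : ℕ, bz B 0 a c = 0 := fun a c => bz_zero B hzero (by omega)
      simp only [fz, bz0, Nat.not_lt_zero, if_false]
      rcases k with _|_|k <;> rcases l with _|_|l <;> simp
    · have hn : n = 1 := by omega
      subst hn
      simp only [fz, bz_one B hB1 hzero]
      rcases k with _|_|k <;> rcases l with _|_|l <;> simp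
  · have fzn : ∀ a c : ℕ, fz B n a c = bz B n a c := by
      intro a c
      simp only [fz, if_neg (show ¬(n = 0 ∧ a = 0 ∧ c = 0) by omega)]
      split_ifs with h
      · rfl
      · exact (bz_zero B hzero (by omega)).symm
    have fzn1 : fz B (n-1) k l = bz B (n-1) k l := by
      simp only [fz, if_neg (show ¬(n-1 = 0 ∧ k = 0 ∧ l = 0) by omega)]
      split_ifs with h
      · rfl
      · exact (bz_zero B hzero (by omega)).symm
    have a1 : (if n = 0 ∧ k = 0 ∧ l = 0 then (1:ℤ) else 0) = 0 := if_neg (by omega)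
    have a2 : (if n = 0 ∧ k = 1 ∧ l = 0 then (1:ℤ) else 0) = 0 := if_neg (by omega)
    have a3 : (if n = 0 ∧ k = 0 ∧ l = 1 then (1:ℤ) else 0) = 0 := if_neg (by omega)
    have a4 : (if n = 0 ∧ k = 1 ∧ l = 1 then (1:ℤ) else 0) = 0 := if_neg (by omega)
    have g1 : (if 1 ≤ k then fz B n (k-1) l else 0)
        = (if 1 ≤ k then bz B n (k-1) l else 0) := by
      split_ifs
      · rw [fzn]
      · rfl
    have g2 : (if 1 ≤ l then fz B n k (l-1) else 0)
        = (if 1 ≤ l then bz B n k (l-1) else 0) := by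
      split_ifs
      · rw [fzn]
      · rfl
    have g3 : (if 1 ≤ k ∧ 1 ≤ l then fz B n (k-1) (l-1) else 0)
        = (if 1 ≤ k ∧ 1 ≤ l then bz B n (k-1) (l-1) else 0) := by
      split_ifs
      · rw [fzn]
      · rfl
    have g4 : (if 1 ≤ n then fz B (n-1) k l else 0) = bz B (n-1) k l := by
      rw [if_pos (show 1 ≤ n by omega), fzn1]
    rw [fzn, g1, g2, g3, g4, a1, a2, a3, a4]
    rcases lt_trichotomy (k + l) n with hc | hc | hc
    · have r1 : (if 1 ≤ k ∧ n = k + l then bz B n (k-1) l else 0) = 0 := if_neg (by omega)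
      have r2 : (if 1 ≤ l ∧ n = k + l then bz B n k (l-1) else 0) = 0 := if_neg (by omega)
      have r3 : (if 1 ≤ k ∧ 1 ≤ l ∧ n = k + l then bz B n (k-1) (l-1) else 0) = 0 :=
        if_neg (by omega)
      have r4 : (if 1 ≤ k ∧ 1 ≤ l ∧ n + 1 = k + l then bz B n (k-1) (l-1) else 0) = 0 :=
        if_neg (by omega)
      rw [r1, r2, r3, r4]
      rw [bz_eq_T B hrec hn2 hc]
      have e2 : (if 1 ≤ k then bz B n (k-1) l else 0)
          = (if 1 ≤ k then Tz B (n-1) (k-1) l else 0) := by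
        split_ifs with h
        · exact bz_eq_T B hrec hn2 (by omega)
        · rfl
      have e3 : (if 1 ≤ l then bz B n k (l-1) else 0)
          = (if 1 ≤ l then Tz B (n-1) k (l-1) else 0) := by
        split_ifs with h
        · exact bz_eq_T B hrec hn2 (by omega)
        · rfl
      have e4 : (if 1 ≤ k ∧ 1 ≤ l then bz B n (k-1) (l-1) else 0)
          = (if 1 ≤ k ∧ 1 ≤ l then Tz B (n-1) (k-1) (l-1) else 0) := by
        split_ifs with h
        · exact bz_eq_T B hrec hn2 (by omega)
        · rfl
      rw [e2, e3, e4, TIE B (n-1) k l]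
      ring
    · rw [bz_zero B hzero (show n ≤ k + l by omega),
          bz_zero B hzero (show n - 1 ≤ k + l by omega)]
      have c1 : (if 1 ≤ k ∧ n = k + l then bz B n (k-1) l else 0)
          = (if 1 ≤ k then bz B n (k-1) l else 0) := if_congr (by omega) rfl rfl
      have c2 : (if 1 ≤ l ∧ n = k + l then bz B n k (l-1) else 0)
          = (if 1 ≤ l then bz B n k (l-1) else 0) := if_congr (by omega) rfl rfl
      have c3 : (if 1 ≤ k ∧ 1 ≤ l ∧ n = k + l then bz B n (k-1) (l-1) else 0)
          = (if 1 ≤ k ∧ 1 ≤ l then bz B n (k-1) (l-1) else 0) := if_congr (by omega) rfl rfl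
      have c4 : (if 1 ≤ k ∧ 1 ≤ l ∧ n + 1 = k + l then bz B n (k-1) (l-1) else 0) = 0 :=
        if_neg (by omega)
      rw [c1, c2, c3, c4]
      ring
    · rw [bz_zero B hzero (show n ≤ k + l by omega),
          bz_zero B hzero (show n - 1 ≤ k + l by omega)]
      have c1 : (if 1 ≤ k then bz B n (k-1) l else 0) = 0 := by
        split_ifs with h
        · exact bz_zero B hzero (by omega)
        · rfl
      have c2 : (if 1 ≤ l then bz B n k (l-1) else 0) = 0 := by
        split_ifs with h
        · exact bz_zero B hzero (by omega)
        · rfl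
      have r1 : (if 1 ≤ k ∧ n = k + l then bz B n (k-1) l else 0) = 0 := if_neg (by omega)
      have r2 : (if 1 ≤ l ∧ n = k + l then bz B n k (l-1) else 0) = 0 := if_neg (by omega)
      have r3 : (if 1 ≤ k ∧ 1 ≤ l ∧ n = k + l then bz B n (k-1) (l-1) else 0) = 0 :=
        if_neg (by omega)
      rw [c1, c2, r1, r2, r3]
      rcases Nat.eq_or_lt_of_le (show n + 1 ≤ k + l by omega) with he | he
      · have c3 : (if 1 ≤ k ∧ 1 ≤ l ∧ n + 1 = k + l then bz B n (k-1) (l-1) else 0)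
            = (if 1 ≤ k ∧ 1 ≤ l then bz B n (k-1) (l-1) else 0) := if_congr (by omega) rfl rfl
        rw [c3]; ring
      · have c3 : (if 1 ≤ k ∧ 1 ≤ l then bz B n (k-1) (l-1) else 0) = 0 := by
          split_ifs with h
          · exact bz_zero B hzero (by omega)
          · rfl
        have c4 : (if 1 ≤ k ∧ 1 ≤ l ∧ n + 1 = k + l then bz B n (k-1) (l-1) else 0) = 0 :=
          if_neg (by omega)
        rw [c3, c4]; ring

end Aux

section Series
variable (B : ℕ → ℕ → ℕ → ℕ)

/-- the diagonal families W_r as power series -/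
noncomputable def Wser (r : ℕ) : R3 :=
  fun d => if d 0 = d 1 + d 2 then bz B (d 0 + r) (d 1) (d 2) else 0

lemma coeff_Wser (r : ℕ) (d : Fin 3 →₀ ℕ) :
    MvPowerSeries.coeff d (Wser B r) =
      if d 0 = d 1 + d 2 then bz B (d 0 + r) (d 1) (d 2) else 0 := rfl

noncomputable def mk3 (a b c : ℕ) : Fin 3 →₀ ℕ :=
  Finsupp.single 0 a + Finsupp.single 1 b + Finsupp.single 2 c

@[simp] lemma mk3_0 (a b c : ℕ) : mk3 a b c 0 = a := by
  simp [mk3, Finsupp.single_apply]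
@[simp] lemma mk3_1 (a b c : ℕ) : mk3 a b c 1 = b := by
  simp [mk3, Finsupp.single_apply]
@[simp] lemma mk3_2 (a b c : ℕ) : mk3 a b c 2 = c := by
  simp [mk3, Finsupp.single_apply]

lemma fin3_le {e d : Fin 3 →₀ ℕ} : e ≤ d ↔ e 0 ≤ d 0 ∧ e 1 ≤ d 1 ∧ e 2 ≤ d 2 := by
  rw [Finsupp.le_def]
  constructor
  · intro h; exact ⟨h 0, h 1, h 2⟩
  · rintro ⟨h0, h1, h2⟩ i; fin_cases i <;> assumption

lemma fin3_eq_zero {d : Fin 3 →₀ ℕ} : d = 0 ↔ d 0 = 0 ∧ d 1 = 0 ∧ d 2 = 0 := by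
  constructor
  · rintro rfl; simp
  · rintro ⟨h0, h1, h2⟩; ext i; fin_cases i <;> simpa

lemma fin3_eq_mk3 {d : Fin 3 →₀ ℕ} {a b c : ℕ} :
    d = mk3 a b c ↔ d 0 = a ∧ d 1 = b ∧ d 2 = c := by
  constructor
  · rintro rfl; simp
  · rintro ⟨h0, h1, h2⟩; ext i; fin_cases i <;> simp [h0, h1, h2]

lemma mk3_add (a b c a' b' c' : ℕ) :
    mk3 a b c + mk3 a' b' c' = mk3 (a+a') (b+b') (c+c') := by
  ext i; fin_cases i <;> simp

lemma coeff_mono_gen (e : Fin 3 →₀ ℕ) (φ : R3) (d : Fin 3 →₀ ℕ) :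
    MvPowerSeries.coeff d (MvPowerSeries.monomial e 1 * φ) =
      if e ≤ d then MvPowerSeries.coeff (d - e) φ else 0 := by
  rw [coeff_monomial_mul]; split_ifs <;> simp

lemma coeff_mono_Wser (r a b c : ℕ) (d : Fin 3 →₀ ℕ) :
    MvPowerSeries.coeff d (MvPowerSeries.monomial (mk3 a b c) 1 * Wser B r) =
      if a ≤ d 0 ∧ b ≤ d 1 ∧ c ≤ d 2 ∧ d 0 - a = (d 1 - b) + (d 2 - c)
      then bz B ((d 0 - a) + r) (d 1 - b) (d 2 - c) else 0 := by
  rw [coeff_monomial_mul]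
  by_cases hle : mk3 a b c ≤ d
  · obtain ⟨ha, hb, hc⟩ := fin3_le.mp hle
    rw [mk3_0] at ha; rw [mk3_1] at hb; rw [mk3_2] at hc
    have sub0 : (d - mk3 a b c) 0 = d 0 - a := by rw [Finsupp.tsub_apply, mk3_0]
    have sub1 : (d - mk3 a b c) 1 = d 1 - b := by rw [Finsupp.tsub_apply, mk3_1]
    have sub2 : (d - mk3 a b c) 2 = d 2 - c := by rw [Finsupp.tsub_apply, mk3_2]
    rw [if_pos hle, one_mul, coeff_Wser, sub0, sub1, sub2]
    exact if_congr (by tauto) rfl rfl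
  · rw [if_neg hle, if_neg]
    intro h
    exact hle (fin3_le.mpr (by simp only [mk3_0, mk3_1, mk3_2]; exact ⟨h.1, h.2.1, h.2.2.1⟩))

lemma coeff_mono_F (F : R3) (hF' : ∀ d, MvPowerSeries.coeff d F = fz B (d 0) (d 1) (d 2))
    (a b c : ℕ) (d : Fin 3 →₀ ℕ) :
    MvPowerSeries.coeff d (MvPowerSeries.monomial (mk3 a b c) 1 * F) =
      if a ≤ d 0 ∧ b ≤ d 1 ∧ c ≤ d 2
      then fz B (d 0 - a) (d 1 - b) (d 2 - c) else 0 := by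
  rw [coeff_monomial_mul]
  by_cases hle : mk3 a b c ≤ d
  · have sub0 : (d - mk3 a b c) 0 = d 0 - a := by rw [Finsupp.tsub_apply, mk3_0]
    have sub1 : (d - mk3 a b c) 1 = d 1 - b := by rw [Finsupp.tsub_apply, mk3_1]
    have sub2 : (d - mk3 a b c) 2 = d 2 - c := by rw [Finsupp.tsub_apply, mk3_2]
    obtain ⟨ha, hb, hc⟩ := fin3_le.mp hle
    rw [mk3_0] at ha; rw [mk3_1] at hb; rw [mk3_2] at hc
    rw [if_pos hle, one_mul, hF', sub0, sub1, sub2, if_pos ⟨ha, hb, hc⟩]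
  · rw [if_neg hle, if_neg]
    intro h
    exact hle (fin3_le.mpr (by simp only [mk3_0, mk3_1, mk3_2]; exact ⟨h.1, h.2.1, h.2.2⟩))

lemma Wser_zero (hzero : ∀ n k l, n ≤ k + l → B n k l = 0) : Wser B 0 = 0 := by
  apply MvPowerSeries.ext; intro d
  rw [coeff_Wser]
  have h0 : MvPowerSeries.coeff d (0:R3) = 0 := map_zero _
  rw [h0]
  split_ifs with h
  · exact bz_zero B hzero (by omega)
  · rfl

lemma lemWrec (hB1 : B 1 0 0 = 1)
    (hrec : ∀ n k l, 1 < n → k + l < n →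
      B n k l = ∑ i ∈ Finset.range (k + 1), ∑ j ∈ Finset.range (l + 1), B (n - 1) i j)
    (hzero : ∀ n k l, n ≤ k + l → B n k l = 0)
    (r : ℕ) (hr : 1 ≤ r) :
    Wser B r = Wser B (r-1) + (if r = 1 then 1 else 0)
      + MvPowerSeries.monomial (mk3 1 1 0) 1 * Wser B (r+1)
      + MvPowerSeries.monomial (mk3 1 0 1) 1 * Wser B (r+1)
      - MvPowerSeries.monomial (mk3 2 1 1) 1 * Wser B (r+2) := by
  apply MvPowerSeries.ext; intro d
  rw [map_sub, map_add, map_add, map_add, coeff_Wser, coeff_Wser,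
    coeff_mono_Wser, coeff_mono_Wser, coeff_mono_Wser]
  have hone : MvPowerSeries.coeff d (if r = 1 then (1:R3) else 0)
      = if r = 1 ∧ d = 0 then 1 else 0 := by
    by_cases h : r = 1
    · simp [h, MvPowerSeries.coeff_one]
    · simp [h]
  rw [hone]
  by_cases hdiag : d 0 = d 1 + d 2
  · rw [if_pos hdiag, if_pos hdiag, hdiag]
    have t1 : d 1 + d 2 + (r - 1) = d 1 + d 2 + r - 1 := by omega
    rw [t1]
    have t2 : (if r = 1 ∧ d = 0 then (1:ℤ) else 0)
        = (if r = 1 ∧ d 1 = 0 ∧ d 2 = 0 then 1 else 0) := by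
      refine if_congr ?_ rfl rfl
      rw [fin3_eq_zero]; omega
    rw [t2]
    have t3 : (if 1 ≤ d 1 + d 2 ∧ 1 ≤ d 1 ∧ 0 ≤ d 2 ∧ d 1 + d 2 - 1 = d 1 - 1 + (d 2 - 0)
          then bz B (d 1 + d 2 - 1 + (r + 1)) (d 1 - 1) (d 2 - 0) else 0)
        = (if 1 ≤ d 1 then bz B (d 1 + d 2 + r) (d 1 - 1) (d 2) else 0) := by
      split_ifs with h1 h2 <;>
        first
          | rfl
          | (exact bz_congr B (by omega) (by omega) (by omega))
          | (exfalso; omega)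
    have t4 : (if 1 ≤ d 1 + d 2 ∧ 0 ≤ d 1 ∧ 1 ≤ d 2 ∧ d 1 + d 2 - 1 = d 1 - 0 + (d 2 - 1)
          then bz B (d 1 + d 2 - 1 + (r + 1)) (d 1 - 0) (d 2 - 1) else 0)
        = (if 1 ≤ d 2 then bz B (d 1 + d 2 + r) (d 1) (d 2 - 1) else 0) := by
      split_ifs with h1 h2 <;>
        first
          | rfl
          | (exact bz_congr B (by omega) (by omega) (by omega))
          | (exfalso; omega)
    have t5 : (if 2 ≤ d 1 + d 2 ∧ 1 ≤ d 1 ∧ 1 ≤ d 2 ∧ d 1 + d 2 - 2 = d 1 - 1 + (d 2 - 1)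
          then bz B (d 1 + d 2 - 2 + (r + 2)) (d 1 - 1) (d 2 - 1) else 0)
        = (if 1 ≤ d 1 ∧ 1 ≤ d 2 then bz B (d 1 + d 2 + r) (d 1 - 1) (d 2 - 1) else 0) := by
      split_ifs with h1 h2 <;>
        first
          | rfl
          | (exact bz_congr B (by omega) (by omega) (by omega))
          | (exfalso; omega)
    rw [t3, t4, t5]
    exact key1 B hB1 hrec hzero r (d 1) (d 2) hr
  · rw [if_neg hdiag, if_neg hdiag]
    rw [if_neg (show ¬(r = 1 ∧ d = 0) by
      rintro ⟨-, h0⟩; apply hdiag; rw [h0]; simp)]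
    rw [if_neg (show ¬(1 ≤ d 0 ∧ 1 ≤ d 1 ∧ 0 ≤ d 2 ∧ d 0 - 1 = d 1 - 1 + (d 2 - 0)) by
      rintro ⟨h1, h2, h3, h4⟩; apply hdiag; omega)]
    rw [if_neg (show ¬(1 ≤ d 0 ∧ 0 ≤ d 1 ∧ 1 ≤ d 2 ∧ d 0 - 1 = d 1 - 0 + (d 2 - 1)) by
      rintro ⟨h1, h2, h3, h4⟩; apply hdiag; omega)]
    rw [if_neg (show ¬(2 ≤ d 0 ∧ 1 ≤ d 1 ∧ 1 ≤ d 2 ∧ d 0 - 2 = d 1 - 1 + (d 2 - 1)) by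
      rintro ⟨h1, h2, h3, h4⟩; apply hdiag; omega)]
    ring

end Series

section GLemmas
variable (B : ℕ → ℕ → ℕ → ℕ)

lemma lemG (hB1 : B 1 0 0 = 1)
    (hrec : ∀ n k l, 1 < n → k + l < n →
      B n k l = ∑ i ∈ Finset.range (k + 1), ∑ j ∈ Finset.range (l + 1), B (n - 1) i j)
    (hzero : ∀ n k l, n ≤ k + l → B n k l = 0)
    (G : R3)
    (hG : ∀ d : Fin 3 →₀ ℕ, MvPowerSeries.coeff d G =
      if d = 0 then 1 else
        if 1 ≤ d 1 ∧ d 0 = d 1 + d 2 then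
          ∑ k ∈ Finset.range (d 1), bz B (d 0) k (d 2) else 0) :
    G = Wser B 1 - MvPowerSeries.monomial (mk3 1 0 1) 1 * Wser B 2 := by
  apply MvPowerSeries.ext; intro d
  rw [map_sub, coeff_Wser, coeff_mono_Wser, hG d]
  by_cases hd0 : d = 0
  · obtain ⟨h0, h1, h2⟩ := fin3_eq_zero.mp hd0
    rw [if_pos hd0, h0, h1, h2]
    rw [if_pos (by omega : (0:ℕ) = 0 + 0)]
    rw [if_neg (by omega : ¬(1 ≤ (0:ℕ) ∧ 0 ≤ (0:ℕ) ∧ 1 ≤ (0:ℕ) ∧ 0 - 1 = 0 - 0 + (0 - 1)))]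
    simp [bz, hB1]
  · rw [if_neg hd0]
    by_cases hdiag : d 0 = d 1 + d 2
    · rw [if_pos hdiag, hdiag]
      have hk0 : ¬(d 1 = 0 ∧ d 2 = 0) := by
        rintro ⟨u, v⟩
        exact hd0 (fin3_eq_zero.mpr ⟨by omega, u, v⟩)
      have t1 : (if 1 ≤ d 1 + d 2 ∧ 0 ≤ d 1 ∧ 1 ≤ d 2 ∧ d 1 + d 2 - 1 = d 1 - 0 + (d 2 - 1)
            then bz B (d 1 + d 2 - 1 + 2) (d 1 - 0) (d 2 - 1) else 0)
          = (if 1 ≤ d 2 then bz B (d 1 + d 2 + 1) (d 1) (d 2 - 1) else 0) := by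
        split_ifs with h1 h2 <;>
          first
            | rfl
            | (exact bz_congr B (by omega) (by omega) (by omega))
            | (exfalso; omega)
      rw [t1]
      have t2 : (if 1 ≤ d 1 ∧ d 1 + d 2 = d 1 + d 2
            then ∑ k ∈ Finset.range (d 1), bz B (d 1 + d 2) k (d 2) else 0)
          = (if 1 ≤ d 1 then ∑ k ∈ Finset.range (d 1), bz B (d 1 + d 2) k (d 2) else 0) :=
        if_congr (by omega) rfl rfl
      rw [t2]
      have h := key3 B hB1 hrec hzero (d 1) (d 2)
      rw [if_neg hk0, zero_add] at h
      exact h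
    · rw [if_neg (show ¬(1 ≤ d 1 ∧ d 0 = d 1 + d 2) by tauto),
        if_neg hdiag,
        if_neg (show ¬(1 ≤ d 0 ∧ 0 ≤ d 1 ∧ 1 ≤ d 2 ∧ d 0 - 1 = d 1 - 0 + (d 2 - 1)) by
          rintro ⟨u1, u2, u3, u4⟩; apply hdiag; omega)]
      ring

lemma lemG' (hB1 : B 1 0 0 = 1)
    (hrec : ∀ n k l, 1 < n → k + l < n →
      B n k l = ∑ i ∈ Finset.range (k + 1), ∑ j ∈ Finset.range (l + 1), B (n - 1) i j)
    (hzero : ∀ n k l, n ≤ k + l → B n k l = 0)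
    (G' : R3)
    (hG' : ∀ d : Fin 3 →₀ ℕ, MvPowerSeries.coeff d G' =
      if d = 0 then 1 else
        if 1 ≤ d 2 ∧ d 0 = d 1 + d 2 then
          ∑ k ∈ Finset.range (d 2), bz B (d 0) k (d 1) else 0) :
    G' = Wser B 1 - MvPowerSeries.monomial (mk3 1 1 0) 1 * Wser B 2 := by
  apply MvPowerSeries.ext; intro d
  rw [map_sub, coeff_Wser, coeff_mono_Wser, hG' d]
  by_cases hd0 : d = 0
  · obtain ⟨h0, h1, h2⟩ := fin3_eq_zero.mp hd0
    rw [if_pos hd0, h0, h1, h2]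
    rw [if_pos (by omega : (0:ℕ) = 0 + 0)]
    rw [if_neg (by omega : ¬(1 ≤ (0:ℕ) ∧ 1 ≤ (0:ℕ) ∧ 0 ≤ (0:ℕ) ∧ 0 - 1 = 0 - 1 + (0 - 0)))]
    simp [bz, hB1]
  · rw [if_neg hd0]
    by_cases hdiag : d 0 = d 1 + d 2
    · rw [if_pos hdiag, hdiag]
      have hk0 : ¬(d 1 = 0 ∧ d 2 = 0) := by
        rintro ⟨u, v⟩
        exact hd0 (fin3_eq_zero.mpr ⟨by omega, u, v⟩)
      have t1 : (if 1 ≤ d 1 + d 2 ∧ 1 ≤ d 1 ∧ 0 ≤ d 2 ∧ d 1 + d 2 - 1 = d 1 - 1 + (d 2 - 0)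
            then bz B (d 1 + d 2 - 1 + 2) (d 1 - 1) (d 2 - 0) else 0)
          = (if 1 ≤ d 1 then bz B (d 1 + d 2 + 1) (d 1 - 1) (d 2) else 0) := by
        split_ifs with h1 h2 <;>
          first
            | rfl
            | (exact bz_congr B (by omega) (by omega) (by omega))
            | (exfalso; omega)
      rw [t1]
      have t2 : (if 1 ≤ d 2 ∧ d 1 + d 2 = d 1 + d 2
            then ∑ k ∈ Finset.range (d 2), bz B (d 1 + d 2) k (d 1) else 0)
          = (if 1 ≤ d 2 then ∑ k ∈ Finset.range (d 2), bz B (d 1 + d 2) k (d 1) else 0) :=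
        if_congr (by omega) rfl rfl
      rw [t2]
      have h := key4 B hB1 hrec hzero (d 1) (d 2)
      rw [if_neg hk0, zero_add] at h
      exact h
    · rw [if_neg (show ¬(1 ≤ d 2 ∧ d 0 = d 1 + d 2) by tauto),
        if_neg hdiag,
        if_neg (show ¬(1 ≤ d 0 ∧ 1 ≤ d 1 ∧ 0 ≤ d 2 ∧ d 0 - 1 = d 1 - 1 + (d 2 - 0)) by
          rintro ⟨u1, u2, u3, u4⟩; apply hdiag; omega)]
      ring

lemma X0_eq : (MvPowerSeries.X 0 : R3) = MvPowerSeries.monomial (mk3 1 0 0) 1 := by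
  rw [show mk3 1 0 0 = Finsupp.single 0 1 by simp [mk3]]; rfl

lemma X1_eq : (MvPowerSeries.X 1 : R3) = MvPowerSeries.monomial (mk3 0 1 0) 1 := by
  rw [show mk3 0 1 0 = Finsupp.single 1 1 by simp [mk3]]; rfl

lemma X2_eq : (MvPowerSeries.X 2 : R3) = MvPowerSeries.monomial (mk3 0 0 1) 1 := by
  rw [show mk3 0 0 1 = Finsupp.single 2 1 by simp [mk3]]; rfl

lemma mono_mul_mono (a b c a' b' c' : ℕ) :
    (MvPowerSeries.monomial (mk3 a b c) 1 : R3) * MvPowerSeries.monomial (mk3 a' b' c') 1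
      = MvPowerSeries.monomial (mk3 (a+a') (b+b') (c+c')) 1 := by
  rw [MvPowerSeries.monomial_mul_monomial, one_mul, mk3_add]

lemma lemF (hB1 : B 1 0 0 = 1)
    (hrec : ∀ n k l, 1 < n → k + l < n →
      B n k l = ∑ i ∈ Finset.range (k + 1), ∑ j ∈ Finset.range (l + 1), B (n - 1) i j)
    (hzero : ∀ n k l, n ≤ k + l → B n k l = 0)
    (F : R3) (hF' : ∀ d, MvPowerSeries.coeff d F = fz B (d 0) (d 1) (d 2)) :
    F * ((1 - MvPowerSeries.X 1) * (1 - MvPowerSeries.X 2) - MvPowerSeries.X 0)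
      = (1 - MvPowerSeries.X 1) * (1 - MvPowerSeries.X 2)
        - MvPowerSeries.monomial (mk3 1 1 0) 1 * Wser B 1
        - MvPowerSeries.monomial (mk3 1 0 1) 1 * Wser B 1
        + MvPowerSeries.monomial (mk3 2 1 1) 1 * Wser B 2
        + MvPowerSeries.monomial (mk3 1 1 1) 1 * Wser B 1 := by
  have hm : (MvPowerSeries.monomial (mk3 0 1 0) 1 : R3) * MvPowerSeries.monomial (mk3 0 0 1) 1
      = MvPowerSeries.monomial (mk3 0 1 1) 1 := mono_mul_mono 0 1 0 0 0 1
  have hA : ((1 : R3) - MvPowerSeries.X 1) * (1 - MvPowerSeries.X 2)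
      = 1 - MvPowerSeries.monomial (mk3 0 1 0) 1 - MvPowerSeries.monomial (mk3 0 0 1) 1
        + MvPowerSeries.monomial (mk3 0 1 1) 1 := by
    rw [X1_eq, X2_eq]; linear_combination hm
  have hexp : F * ((1 - MvPowerSeries.X 1) * (1 - MvPowerSeries.X 2) - MvPowerSeries.X 0)
      = F - MvPowerSeries.monomial (mk3 0 1 0) 1 * F
        - MvPowerSeries.monomial (mk3 0 0 1) 1 * F
        + MvPowerSeries.monomial (mk3 0 1 1) 1 * F
        - MvPowerSeries.monomial (mk3 1 0 0) 1 * F := by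
    rw [X0_eq, X1_eq, X2_eq]; linear_combination F * hm
  rw [hexp, hA]
  apply MvPowerSeries.ext; intro d
  simp only [map_sub, map_add]
  rw [hF' d, coeff_mono_F B F hF', coeff_mono_F B F hF', coeff_mono_F B F hF',
    coeff_mono_F B F hF', coeff_mono_Wser, coeff_mono_Wser, coeff_mono_Wser, coeff_mono_Wser,
    MvPowerSeries.coeff_one, MvPowerSeries.coeff_monomial, MvPowerSeries.coeff_monomial,
    MvPowerSeries.coeff_monomial]
  -- now convert every term to the shape of key5
  have u1 : (if 0 ≤ d 0 ∧ 1 ≤ d 1 ∧ 0 ≤ d 2 then fz B (d 0 - 0) (d 1 - 1) (d 2 - 0) else 0)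
      = (if 1 ≤ d 1 then fz B (d 0) (d 1 - 1) (d 2) else 0) := by
    split_ifs with h1 h2 <;>
      first
        | rfl
        | (exact fz_congr B (by omega) (by omega) (by omega))
        | (exfalso; omega)
  have u2 : (if 0 ≤ d 0 ∧ 0 ≤ d 1 ∧ 1 ≤ d 2 then fz B (d 0 - 0) (d 1 - 0) (d 2 - 1) else 0)
      = (if 1 ≤ d 2 then fz B (d 0) (d 1) (d 2 - 1) else 0) := by
    split_ifs with h1 h2 <;>
      first
        | rfl
        | (exact fz_congr B (by omega) (by omega) (by omega))
        | (exfalso; omega)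
  have u3 : (if 0 ≤ d 0 ∧ 1 ≤ d 1 ∧ 1 ≤ d 2 then fz B (d 0 - 0) (d 1 - 1) (d 2 - 1) else 0)
      = (if 1 ≤ d 1 ∧ 1 ≤ d 2 then fz B (d 0) (d 1 - 1) (d 2 - 1) else 0) := by
    split_ifs with h1 h2 <;>
      first
        | rfl
        | (exact fz_congr B (by omega) (by omega) (by omega))
        | (exfalso; omega)
  have u4 : (if 1 ≤ d 0 ∧ 0 ≤ d 1 ∧ 0 ≤ d 2 then fz B (d 0 - 1) (d 1 - 0) (d 2 - 0) else 0)
      = (if 1 ≤ d 0 then fz B (d 0 - 1) (d 1) (d 2) else 0) := by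
    split_ifs with h1 h2 <;>
      first
        | rfl
        | (exact fz_congr B (by omega) (by omega) (by omega))
        | (exfalso; omega)
  have v0 : (if d = 0 then (1:ℤ) else 0)
      = (if d 0 = 0 ∧ d 1 = 0 ∧ d 2 = 0 then 1 else 0) := if_congr fin3_eq_zero rfl rfl
  have v1 : (if d = mk3 0 1 0 then (1:ℤ) else 0)
      = (if d 0 = 0 ∧ d 1 = 1 ∧ d 2 = 0 then 1 else 0) := if_congr fin3_eq_mk3 rfl rfl
  have v2 : (if d = mk3 0 0 1 then (1:ℤ) else 0)
      = (if d 0 = 0 ∧ d 1 = 0 ∧ d 2 = 1 then 1 else 0) := if_congr fin3_eq_mk3 rfl rfl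
  have v3 : (if d = mk3 0 1 1 then (1:ℤ) else 0)
      = (if d 0 = 0 ∧ d 1 = 1 ∧ d 2 = 1 then 1 else 0) := if_congr fin3_eq_mk3 rfl rfl
  have w1 : (if 1 ≤ d 0 ∧ 1 ≤ d 1 ∧ 0 ≤ d 2 ∧ d 0 - 1 = d 1 - 1 + (d 2 - 0)
        then bz B (d 0 - 1 + 1) (d 1 - 1) (d 2 - 0) else 0)
      = (if 1 ≤ d 1 ∧ d 0 = d 1 + d 2 then bz B (d 0) (d 1 - 1) (d 2) else 0) := by
    split_ifs with h1 h2 <;>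
      first
        | rfl
        | (exact bz_congr B (by omega) (by omega) (by omega))
        | (exfalso; omega)
  have w2 : (if 1 ≤ d 0 ∧ 0 ≤ d 1 ∧ 1 ≤ d 2 ∧ d 0 - 1 = d 1 - 0 + (d 2 - 1)
        then bz B (d 0 - 1 + 1) (d 1 - 0) (d 2 - 1) else 0)
      = (if 1 ≤ d 2 ∧ d 0 = d 1 + d 2 then bz B (d 0) (d 1) (d 2 - 1) else 0) := by
    split_ifs with h1 h2 <;>
      first
        | rfl
        | (exact bz_congr B (by omega) (by omega) (by omega))
        | (exfalso; omega)
  have w3 : (if 2 ≤ d 0 ∧ 1 ≤ d 1 ∧ 1 ≤ d 2 ∧ d 0 - 2 = d 1 - 1 + (d 2 - 1)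
        then bz B (d 0 - 2 + 2) (d 1 - 1) (d 2 - 1) else 0)
      = (if 1 ≤ d 1 ∧ 1 ≤ d 2 ∧ d 0 = d 1 + d 2 then bz B (d 0) (d 1 - 1) (d 2 - 1) else 0) := by
    split_ifs with h1 h2 <;>
      first
        | rfl
        | (exact bz_congr B (by omega) (by omega) (by omega))
        | (exfalso; omega)
  have w4 : (if 1 ≤ d 0 ∧ 1 ≤ d 1 ∧ 1 ≤ d 2 ∧ d 0 - 1 = d 1 - 1 + (d 2 - 1)
        then bz B (d 0 - 1 + 1) (d 1 - 1) (d 2 - 1) else 0)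
      = (if 1 ≤ d 1 ∧ 1 ≤ d 2 ∧ d 0 + 1 = d 1 + d 2 then bz B (d 0) (d 1 - 1) (d 2 - 1) else 0) := by
    split_ifs with h1 h2 <;>
      first
        | rfl
        | (exact bz_congr B (by omega) (by omega) (by omega))
        | (exfalso; omega)
  rw [u1, u2, u3, u4, v0, v1, v2, v3, w1, w2, w3, w4]
  linear_combination key5 B hB1 hrec hzero (d 0) (d 1) (d 2)

end GLemmas

section MainInd
variable (B : ℕ → ℕ → ℕ → ℕ)

noncomputable def Eser : R3 :=
  Wser B 1 - 1
    - MvPowerSeries.monomial (mk3 1 1 0) 1 * (Wser B 1)^2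
    - MvPowerSeries.monomial (mk3 1 0 1) 1 * (Wser B 1)^2
    + MvPowerSeries.monomial (mk3 2 1 1) 1 * (Wser B 1)^3

lemma Eser_def : Eser B = Wser B 1 - 1
    - MvPowerSeries.monomial (mk3 1 1 0) 1 * (Wser B 1)^2
    - MvPowerSeries.monomial (mk3 1 0 1) 1 * (Wser B 1)^2
    + MvPowerSeries.monomial (mk3 2 1 1) 1 * (Wser B 1)^3 := rfl

lemma main_ind (hB1 : B 1 0 0 = 1)
    (hrec : ∀ n k l, 1 < n → k + l < n →
      B n k l = ∑ i ∈ Finset.range (k + 1), ∑ j ∈ Finset.range (l + 1), B (n - 1) i j)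
    (hzero : ∀ n k l, n ≤ k + l → B n k l = 0) :
    ∀ s : ℕ,
      (∀ d : Fin 3 →₀ ℕ, d 0 ≤ s → MvPowerSeries.coeff d (Eser B) = 0)
      ∧ (∀ r : ℕ, ∀ d : Fin 3 →₀ ℕ, d 0 ≤ s →
          MvPowerSeries.coeff d (Wser B (r+1)) = MvPowerSeries.coeff d ((Wser B 1)^(r+1))) := by
  intro s
  induction s using Nat.strong_induction_on with
  | _ s ih =>
    have hrw : Eser B
        = MvPowerSeries.monomial (mk3 1 1 0) 1 * (Wser B 2 - (Wser B 1)^2)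
          + MvPowerSeries.monomial (mk3 1 0 1) 1 * (Wser B 2 - (Wser B 1)^2)
          - MvPowerSeries.monomial (mk3 2 1 1) 1 * (Wser B 3 - (Wser B 1)^3) := by
      have h1 := lemWrec B hB1 hrec hzero 1 le_rfl
      rw [show (1:ℕ) - 1 = 0 from rfl, show (1:ℕ) + 1 = 2 from rfl,
        show (1:ℕ) + 2 = 3 from rfl, Wser_zero B hzero, if_pos rfl] at h1
      rw [Eser_def]
      linear_combination h1
    have part1 : ∀ d : Fin 3 →₀ ℕ, d 0 ≤ s → MvPowerSeries.coeff d (Eser B) = 0 := by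
      intro d hd
      have hz : ∀ (a b c m : ℕ), 1 ≤ a → 1 ≤ m →
          MvPowerSeries.coeff d
            (MvPowerSeries.monomial (mk3 a b c) 1 * (Wser B m - (Wser B 1)^m)) = 0 := by
        intro a b c m ha hm
        rw [coeff_mono_gen]
        split_ifs with hle
        · obtain ⟨mm, rfl⟩ : ∃ mm, m = mm + 1 := ⟨m - 1, by omega⟩
          have h0 : a ≤ d 0 := by
            have := fin3_le.mp hle
            simpa using this.1
          have hsub : (d - mk3 a b c) 0 = d 0 - a := by rw [Finsupp.tsub_apply, mk3_0]
          have := (ih (s-1) (by omega)).2 mm (d - mk3 a b c) (by rw [hsub]; omega)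
          rw [map_sub, this, sub_self]
        · rfl
      rw [hrw, map_sub, map_add]
      rw [hz 1 1 0 2 (by omega) (by omega), hz 1 0 1 2 (by omega) (by omega),
        hz 2 1 1 3 (by omega) (by omega)]
      ring
    have part2 : ∀ r : ℕ, ∀ d : Fin 3 →₀ ℕ, d 0 ≤ s →
        MvPowerSeries.coeff d (Wser B (r+1)) = MvPowerSeries.coeff d ((Wser B 1)^(r+1)) := by
      intro r
      induction r with
      | zero => intro d _; rw [pow_one]
      | succ r ihr =>
        intro d hd
        have h2 := lemWrec B hB1 hrec hzero (r+2) (by omega)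
        rw [if_neg (by omega : ¬ r + 2 = 1)] at h2
        rw [show r + 2 - 1 = r + 1 from by omega, show r + 2 + 1 = r + 3 from by omega,
          show r + 2 + 2 = r + 4 from by omega] at h2
        have hmono : ∀ (a b c m : ℕ), 1 ≤ a → 1 ≤ m →
            MvPowerSeries.coeff d (MvPowerSeries.monomial (mk3 a b c) 1 * Wser B m)
              = MvPowerSeries.coeff d (MvPowerSeries.monomial (mk3 a b c) 1 * (Wser B 1)^m) := by
          intro a b c m ha hm
          rw [coeff_mono_gen, coeff_mono_gen]
          split_ifs with hle
          · obtain ⟨mm, rfl⟩ : ∃ mm, m = mm + 1 := ⟨m - 1, by omega⟩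
            have h0 : a ≤ d 0 := by
              have := fin3_le.mp hle
              simpa using this.1
            have hsub : (d - mk3 a b c) 0 = d 0 - a := by rw [Finsupp.tsub_apply, mk3_0]
            exact (ih (s-1) (by omega)).2 mm (d - mk3 a b c) (by rw [hsub]; omega)
          · rfl
        have hEcoeff : MvPowerSeries.coeff d ((Wser B 1)^(r+1) * Eser B) = 0 := by
          rw [MvPowerSeries.coeff_mul]
          apply Finset.sum_eq_zero
          rintro ⟨p1, p2⟩ hp
          rw [Finset.HasAntidiagonal.mem_antidiagonal] at hp
          have hp2 : p2 0 ≤ s := by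
            have : p1 0 + p2 0 = d 0 := by rw [← Finsupp.add_apply, hp]
            omega
          rw [part1 p2 hp2, mul_zero]
        have hpow : (Wser B 1)^(r+2)
            = (Wser B 1)^(r+1)
              + MvPowerSeries.monomial (mk3 1 1 0) 1 * (Wser B 1)^(r+3)
              + MvPowerSeries.monomial (mk3 1 0 1) 1 * (Wser B 1)^(r+3)
              - MvPowerSeries.monomial (mk3 2 1 1) 1 * (Wser B 1)^(r+4)
              + (Wser B 1)^(r+1) * Eser B := by
          rw [Eser_def]; ring
        show MvPowerSeries.coeff d (Wser B (r+2)) = MvPowerSeries.coeff d ((Wser B 1)^(r+2))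
        rw [h2, hpow]
        simp only [map_sub, map_add]
        rw [ihr d hd, hEcoeff,
          hmono 1 1 0 (r+3) (by omega) (by omega),
          hmono 1 0 1 (r+3) (by omega) (by omega),
          hmono 2 1 1 (r+4) (by omega) (by omega)]
        have hzc : MvPowerSeries.coeff d (0 : R3) = 0 := map_zero _
        rw [hzc]
        ring
    exact ⟨part1, part2⟩

end MainInd

end GFStatement13


open GFStatement13 MvPowerSeries


/-- With `F = 1 + ∑_{n≥1, k+l<n} B₃(n,k,l) t^n x^k y^l`,
`G = 1 + ∑_{n≥1, k+l<n} B₃(n,k,l) t^n x^{n-l} y^l` and `G'` the series `G` with `x`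
and `y` exchanged (in `ℤ[[t,x,y]]`, variables `t = X 0`, `x = X 1`, `y = X 2`),
one has `F·(1 - t·G·G') = 1`, i.e. `F` is the inverse of `1 - t·G·G'`. -/
theorem gf_F_inverse
    (B₃ : ℕ → ℕ → ℕ → ℕ)
    (hB1 : B₃ 1 0 0 = 1)
    (hrec : ∀ n k l, 1 < n → k + l < n →
      B₃ n k l = ∑ i ∈ Finset.range (k + 1), ∑ j ∈ Finset.range (l + 1), B₃ (n - 1) i j)
    (hzero : ∀ n k l, n ≤ k + l → B₃ n k l = 0)
    (F G G' : MvPowerSeries (Fin 3) ℤ)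
    (hF : ∀ d : Fin 3 →₀ ℕ, MvPowerSeries.coeff d F =
      if d = 0 then 1 else
        if d 1 + d 2 < d 0 then (B₃ (d 0) (d 1) (d 2) : ℤ) else 0)
    (hG : ∀ d : Fin 3 →₀ ℕ, MvPowerSeries.coeff d G =
      if d = 0 then 1 else
        if 1 ≤ d 1 ∧ d 0 = d 1 + d 2 then
          ∑ k ∈ Finset.range (d 1), (B₃ (d 0) k (d 2) : ℤ) else 0)
    (hG' : ∀ d : Fin 3 →₀ ℕ, MvPowerSeries.coeff d G' =
      if d = 0 then 1 else
        if 1 ≤ d 2 ∧ d 0 = d 1 + d 2 then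
          ∑ k ∈ Finset.range (d 2), (B₃ (d 0) k (d 1) : ℤ) else 0) :
    F * (1 - (MvPowerSeries.X 0) * G * G') = 1 := by
  have hF' : ∀ d : Fin 3 →₀ ℕ, MvPowerSeries.coeff d F = fz B₃ (d 0) (d 1) (d 2) := by
    intro d
    rw [hF d]
    simp only [fz]
    exact if_congr fin3_eq_zero rfl rfl
  have hGeq := lemG B₃ hB1 hrec hzero G (fun d => hG d)
  have hG'eq := lemG' B₃ hB1 hrec hzero G' (fun d => hG' d)
  have hQ : ∀ r : ℕ, Wser B₃ (r+1) = (Wser B₃ 1)^(r+1) := by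
    intro r
    apply MvPowerSeries.ext; intro d
    exact (main_ind B₃ hB1 hrec hzero (d 0)).2 r d le_rfl
  have hW2 : Wser B₃ 2 = (Wser B₃ 1)^2 := hQ 1
  have hE0 : Eser B₃ = 0 := by
    apply MvPowerSeries.ext; intro d
    rw [(main_ind B₃ hB1 hrec hzero (d 0)).1 d le_rfl]
    exact (map_zero _).symm
  have hU : (MvPowerSeries.monomial (mk3 1 1 0) 1 : R3) = X 0 * X 1 := by
    rw [X0_eq, X1_eq, mono_mul_mono]
  have hV : (MvPowerSeries.monomial (mk3 1 0 1) 1 : R3) = X 0 * X 2 := by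
    rw [X0_eq, X2_eq, mono_mul_mono]
  have hUV : (MvPowerSeries.monomial (mk3 2 1 1) 1 : R3) = X 0 * X 1 * (X 0 * X 2) := by
    rw [X0_eq, X1_eq, X2_eq, mono_mul_mono, mono_mul_mono, mono_mul_mono]
  have hTXY : (MvPowerSeries.monomial (mk3 1 1 1) 1 : R3) = X 0 * (X 1 * X 2) := by
    rw [X0_eq, X1_eq, X2_eq, mono_mul_mono, mono_mul_mono]
  have hM : Wser B₃ 1 * ((1 - X 0 * X 1 * Wser B₃ 1) * (1 - X 0 * X 2 * Wser B₃ 1)) = 1 := by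
    have h := hE0
    rw [Eser_def, hU, hV, hUV] at h
    linear_combination h
  have hGG' : G * G' = Wser B₃ 1 := by
    rw [hGeq, hG'eq, hW2, hU, hV]
    linear_combination (Wser B₃ 1) * hM
  have hKF := lemF B₃ hB1 hrec hzero F hF'
  rw [hU, hV, hUV, hTXY, hW2] at hKF
  have hKey : ((1 - X 1) * (1 - X 2) - X 0) * (F * (1 - X 0 * Wser B₃ 1))
      = ((1 - X 1) * (1 - X 2) - X 0) * 1 := by
    linear_combination (1 - X 0 * Wser B₃ 1) * hKF - (X 0) * hM
  have hKunit : IsUnit ((1 - X 1) * (1 - X 2) - X 0 : R3) := by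
    rw [MvPowerSeries.isUnit_iff_constantCoeff]
    simp [MvPowerSeries.constantCoeff_X]
  have hFinal : F * (1 - X 0 * Wser B₃ 1) = 1 := hKunit.mul_left_cancel hKey
  rw [show (X 0 : R3) * G * G' = X 0 * Wser B₃ 1 from by rw [mul_assoc, hGG']]
  exact hFinal
end

section
/- Let B₃ : ℕ → ℕ → ℕ → ℕ satisfy: B₃(1,0,0)=1; for all n>1 and k+l<n, B₃(n,k,l)=∑_{i=0}^{k}∑_{j=0}^{l} B₃(n−1,i,j); and B₃(n,k,l)=0 whenever k+l≥n. Define B'₃(n,k,l) = binom(n+k−1,k)·binom(n+l−1,l)·(n−k−l)/n ∈ ℚ for n≥1 and k,l≥0. Then for all n≥1 and k,l≥0 with k+l<n, B₃(n,k,l) = B'₃(n,k,l) (as rational numbers). -/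
lemma hockq (m k : ℕ) : ∑ i ∈ Finset.range (k+1), (Nat.choose (m+i) i : ℚ) = Nat.choose (m+k+1) k := by
  have : ∑ i ∈ Finset.range (k+1), Nat.choose (m+i) i = Nat.choose (m+k+1) k := by
    induction k with
    | zero => simp
    | succ k ih =>
      rw [Finset.sum_range_succ, ih]
      have h := Nat.choose_succ_succ' (m+k+1) k
      have e : m + (k+1) = m + k + 1 := rfl
      rw [e]; omega
  exact_mod_cast congrArg (Nat.cast : ℕ → ℚ) this

lemma sumiq (m k : ℕ) :
    ((m:ℚ)+2) * ∑ i ∈ Finset.range (k+1), (i:ℚ) * Nat.choose (m+i) i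
      = ((m:ℚ)+1) * k * Nat.choose (m+k+1) k := by
  induction k with
  | zero => simp
  | succ k ih =>
    rw [Finset.sum_range_succ, mul_add, ih]
    have h1 : Nat.choose (m+k+1) (k+1) * (k+1) = Nat.choose (m+k+1) k * (m+1) := by
      have := Nat.choose_succ_right_eq (m+k+1) k
      rwa [show m+k+1-k = m+1 by omega] at this
    have h2 := Nat.choose_succ_succ' (m+k+1) k
    have e : m + (k+1) = m + k + 1 := rfl
    rw [e]
    have h1q : (Nat.choose (m+k+1) (k+1) : ℚ) * ((k:ℚ)+1) = (Nat.choose (m+k+1) k : ℚ) * ((m:ℚ)+1) := by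
      exact_mod_cast congrArg (Nat.cast : ℕ → ℚ) h1
    have h2q : (Nat.choose (m+k+1+1) (k+1) : ℚ) = Nat.choose (m+k+1) k + Nat.choose (m+k+1) (k+1) := by
      exact_mod_cast congrArg (Nat.cast : ℕ → ℚ) h2
    push_cast
    push_cast at h1q h2q
    linear_combination h1q - ((m:ℚ)+1) * ((k:ℚ)+1) * h2q

lemma key_s16 (m k l : ℕ) :
    ∑ i ∈ Finset.range (k+1), ∑ j ∈ Finset.range (l+1),
      (Nat.choose (m+i) i : ℚ) * (Nat.choose (m+j) j : ℚ) * (((m:ℚ)+1) - i - j) / ((m:ℚ)+1)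
    = (Nat.choose (m+k+1) k : ℚ) * (Nat.choose (m+l+1) l : ℚ) * (((m:ℚ)+2) - k - l) / ((m:ℚ)+2) := by
  have hm1 : ((m:ℚ)+1) ≠ 0 := by positivity
  have hm2 : ((m:ℚ)+2) ≠ 0 := by positivity
  have hk := hockq m k
  have hl := hockq m l
  have huk := sumiq m k
  have hul := sumiq m l
  have expand :
      ∑ i ∈ Finset.range (k+1), ∑ j ∈ Finset.range (l+1),
        (Nat.choose (m+i) i : ℚ) * (Nat.choose (m+j) j : ℚ) * (((m:ℚ)+1) - i - j)
      = ((m:ℚ)+1) * ((∑ i ∈ Finset.range (k+1), (Nat.choose (m+i) i : ℚ))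
            * (∑ j ∈ Finset.range (l+1), (Nat.choose (m+j) j : ℚ)))
        - (∑ i ∈ Finset.range (k+1), (i:ℚ) * Nat.choose (m+i) i)
            * (∑ j ∈ Finset.range (l+1), (Nat.choose (m+j) j : ℚ))
        - (∑ i ∈ Finset.range (k+1), (Nat.choose (m+i) i : ℚ))
            * (∑ j ∈ Finset.range (l+1), (j:ℚ) * Nat.choose (m+j) j) := by
    rw [Finset.sum_mul_sum, Finset.sum_mul_sum, Finset.sum_mul_sum]
    simp only [Finset.mul_sum]
    simp only [← Finset.sum_sub_distrib]
    exact Finset.sum_congr rfl fun i _ => Finset.sum_congr rfl fun j _ => by ring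
  simp only [← Finset.sum_div]
  rw [expand, hk, hl]
  rw [div_eq_div_iff hm1 hm2]
  linear_combination (-(Nat.choose (m+l+1) l : ℚ)) * huk
    - (Nat.choose (m+k+1) k : ℚ) * hul

/-- In the range `k + l < n` (with `n ≥ 1`), the integers `B₃ n k l`
agree with the rational numbers `B'₃(n,k,l) = binom(n+k-1,k)·binom(n+l-1,l)·(n-k-l)/n`. -/
theorem fuss_catalan_tetrahedron_eq_redundant
    (B₃ : ℕ → ℕ → ℕ → ℕ)
    (hB1 : B₃ 1 0 0 = 1)
    (hrec : ∀ n k l, 1 < n → k + l < n →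
      B₃ n k l = ∑ i ∈ Finset.range (k + 1), ∑ j ∈ Finset.range (l + 1), B₃ (n - 1) i j)
    (hzero : ∀ n k l, n ≤ k + l → B₃ n k l = 0) :
    ∀ n k l : ℕ, 1 ≤ n → k + l < n →
      (B₃ n k l : ℚ)
        = (Nat.choose (n + k - 1) k : ℚ) * (Nat.choose (n + l - 1) l : ℚ)
            * ((n : ℚ) - (k : ℚ) - (l : ℚ)) / (n : ℚ) := by
  intro n
  induction n with
  | zero => intro k l h1 h2; exact absurd h2 (by omega)
  | succ n ih =>
    intro k l _ hkl
    rcases Nat.eq_zero_or_pos n with hn | hn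
    · subst hn
      have hk : k = 0 := by omega
      have hl : l = 0 := by omega
      subst hk; subst hl
      simp [hB1]
    · obtain ⟨m, rfl⟩ : ∃ m, n = m + 1 := ⟨n - 1, by omega⟩
      have hval : ∀ i j : ℕ, i + j ≤ m + 1 →
          (B₃ (m+1) i j : ℚ)
            = (Nat.choose (m+i) i : ℚ) * (Nat.choose (m+j) j : ℚ)
                * (((m:ℚ)+1) - i - j) / ((m:ℚ)+1) := by
        intro i j hij
        rcases lt_or_eq_of_le hij with h | h
        · rw [ih i j (by omega) h,
            show m+1+i-1 = m+i from by omega, show m+1+j-1 = m+j from by omega]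
          push_cast; ring
        · rw [hzero (m+1) i j (by omega)]
          have hij' : (i:ℚ) + j = (m:ℚ) + 1 := by exact_mod_cast congrArg (Nat.cast : ℕ → ℚ) h
          rw [show ((m:ℚ)+1) - i - j = 0 from by linarith]
          simp
      rw [hrec (m+1+1) k l (by omega) (by omega)]
      simp only [show m+1+1-1 = m+1 from rfl]
      push_cast
      rw [Finset.sum_congr rfl fun i hi => Finset.sum_congr rfl fun j hj =>
        hval i j (by
          have := Finset.mem_range.mp hi
          have := Finset.mem_range.mp hj
          omega)]
      rw [key_s16 m k l,
        show m+1+1+k-1 = m+k+1 from by omega, show m+1+1+l-1 = m+l+1 from by omega]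
      ring
end
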